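/- arXiv:1505.00718 — 7 statements merged into one kernel-verified Lean document; each statement's English description precedes it below -/
import Mathlib

section
/- Let G be a finite group, let g₁, g₂, g ∈ G, and let D be a positive integer. Then the absolute value of the sum, over all χ ∈ Irr(G) with χ(1) ≥ D, of χ(g₁)·χ(g₂)·conj(χ(g))/χ(1), is at most (1/D)·(|C_G(g₁)|·|C_G(g₂)|·|C_G(g)|)^{1/2}, where C_G(h) denotes the centralizer of h in G. -/
open scoped BigOperators ComplexOrder

/-- The set of irreducible complex characters of `G`: class functions arising as the
character of a simple (i.e. irreducible) finite-dimensional complex representation. -/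
def IrrChar (G : Type) [Group G] : Set (G → ℂ) :=
  {f | ∃ V : FDRep ℂ G, CategoryTheory.Simple V ∧ ∀ x : G, f x = FDRep.character V x}

open Module Polynomial

private lemma pow_apply_eigen {V : Type*} [AddCommGroup V] [Module ℂ V]
    (f : Module.End ℂ V) {μ : ℂ} {x : V} (hx : f x = μ • x) (k : ℕ) :
    (f ^ k) x = μ ^ k • x := by
  induction k with
  | zero => simp
  | succ m ih =>
    rw [pow_succ, Module.End.mul_apply, hx, map_smul, ih, smul_smul, ← pow_succ']

lemma conj_trace_of_pow_eq_one {V : Type*} [AddCommGroup V] [Module ℂ V]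
    [FiniteDimensional ℂ V] (f : Module.End ℂ V) {n : ℕ} (hn : 0 < n) (hf : f ^ n = 1) :
    (starRingEnd ℂ) (LinearMap.trace ℂ V f) = LinearMap.trace ℂ V (f ^ (n - 1)) := by
  classical
  have hsq : Squarefree (X ^ n - 1 : ℂ[X]) :=
    (Polynomial.X_pow_sub_one_separable_iff.mpr (by exact_mod_cast hn.ne')).squarefree
  have haev : aeval f (X ^ n - 1 : ℂ[X]) = 0 := by
    simp [map_sub, map_pow, hf]
  have hss : f.IsSemisimple := Module.End.isSemisimple_of_squarefree_aeval_eq_zero hsq haev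
  have htop : ⨆ μ : ℂ, f.eigenspace μ = ⊤ := by
    have h1 := Module.End.iSup_maxGenEigenspace_eq_top f
    have h2 : ∀ μ : ℂ, f.maxGenEigenspace μ = f.eigenspace μ := fun μ =>
      (hss.isFinitelySemisimple).maxGenEigenspace_eq_eigenspace μ
    simpa only [h2] using h1
  have hindep := Module.End.eigenspaces_iSupIndep f
  have hint : DirectSum.IsInternal (fun μ : ℂ => f.eigenspace μ) :=
    (DirectSum.isInternal_submodule_iff_iSupIndep_and_iSup_eq_top _).mpr ⟨hindep, htop⟩
  have hfin : {μ : ℂ | f.eigenspace μ ≠ ⊥}.Finite :=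
    WellFoundedGT.finite_ne_bot_of_iSupIndep hindep
  have hmap : ∀ (k : ℕ) (μ : ℂ), Set.MapsTo (f ^ k) (f.eigenspace μ) (f.eigenspace μ) := by
    intro k μ x hx
    rw [SetLike.mem_coe, Module.End.mem_eigenspace_iff] at hx ⊢
    rw [pow_apply_eigen f hx k, map_smul, hx, smul_comm]
  have hrest : ∀ (k : ℕ) (μ : ℂ),
      (f ^ k).restrict (hmap k μ) = (μ ^ k) • (1 : Module.End ℂ (f.eigenspace μ)) := by
    intro k μ
    refine LinearMap.ext fun x => Subtype.ext ?_
    have hx : f x = μ • (x : V) := Module.End.mem_eigenspace_iff.mp x.2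
    show (f ^ k) x = _
    simpa using pow_apply_eigen f hx k
  have htr : ∀ k : ℕ, LinearMap.trace ℂ V (f ^ k) =
      ∑ μ ∈ hfin.toFinset, μ ^ k * (finrank ℂ (f.eigenspace μ) : ℂ) := by
    intro k
    rw [LinearMap.trace_eq_sum_trace_restrict' hint hfin (hmap k)]
    refine Finset.sum_congr rfl fun μ _ => ?_
    rw [hrest k μ, map_smul, LinearMap.trace_one, smul_eq_mul]
  have heig : ∀ μ ∈ hfin.toFinset, μ ^ n = 1 := by
    intro μ hμ
    rw [Set.Finite.mem_toFinset] at hμ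
    obtain ⟨x, hx, hx0⟩ := Submodule.exists_mem_ne_zero_of_ne_bot hμ
    rw [Module.End.mem_eigenspace_iff] at hx
    have h1 : (f ^ n) x = μ ^ n • x := pow_apply_eigen f hx n
    rw [hf, Module.End.one_apply] at h1
    have h2 : (μ ^ n - 1) • x = 0 := by rw [sub_smul, one_smul, ← h1, sub_self]
    rcases smul_eq_zero.mp h2 with h | h
    · exact sub_eq_zero.mp h
    · exact absurd h hx0
  have hconj : ∀ μ ∈ hfin.toFinset, (starRingEnd ℂ) μ = μ ^ (n - 1) := by
    intro μ hμ
    have hμn := heig μ hμ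
    have hμ0 : μ ≠ 0 := by
      intro h; rw [h, zero_pow hn.ne'] at hμn; exact zero_ne_one hμn
    have hnorm : ‖μ‖ = 1 := by
      have h1 : ‖μ‖ ^ n = 1 := by rw [← norm_pow, hμn, norm_one]
      rcases lt_trichotomy ‖μ‖ 1 with h | h | h
      · exact absurd h1 (by linarith [pow_lt_one₀ (norm_nonneg μ) h hn.ne'])
      · exact h
      · exact absurd h1 (by linarith [one_lt_pow₀ h hn.ne'])
    have hinv : (starRingEnd ℂ) μ * μ = 1 := by
      have h2 : Complex.normSq μ = 1 := by
        rw [Complex.normSq_eq_norm_sq, hnorm, one_pow]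
      rw [mul_comm, Complex.mul_conj, h2, Complex.ofReal_one]
    have hpow : μ ^ (n - 1) * μ = 1 := by
      rw [← pow_succ, Nat.sub_add_cancel hn, hμn]
    exact mul_right_cancel₀ hμ0 (hinv.trans hpow.symm)
  conv_lhs => rw [← pow_one f]
  rw [htr 1, htr (n - 1), map_sum]
  refine Finset.sum_congr rfl fun μ hμ => ?_
  rw [map_mul, map_natCast, pow_one, hconj μ hμ]

lemma conj_char {G : Type} [Group G] [Fintype G] (V : FDRep ℂ G) (g : G) :
    (starRingEnd ℂ) (V.character g) = V.character g⁻¹ := by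
  have hn : 0 < Fintype.card G := Fintype.card_pos
  have hf : (V.ρ g) ^ (Fintype.card G) = 1 := by rw [← map_pow, pow_card_eq_one, map_one]
  have hinv : g⁻¹ = g ^ (Fintype.card G - 1) := by
    rw [eq_comm, eq_inv_iff_mul_eq_one, ← pow_succ, Nat.sub_add_cancel hn, pow_card_eq_one]
  have := conj_trace_of_pow_eq_one (V.ρ g) hn hf
  rw [FDRep.character, FDRep.character, this, hinv, map_pow V.ρ g]

lemma irr_orthonormal {G : Type} [Group G] [Fintype G] {f h : G → ℂ}
    (hf : f ∈ IrrChar G) (hh : h ∈ IrrChar G) :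
    ∑ x : G, (starRingEnd ℂ) (f x) * h x = if f = h then (Fintype.card G : ℂ) else 0 := by
  classical
  obtain ⟨V, hV, hVf⟩ := hf
  obtain ⟨W, hW, hWh⟩ := hh
  haveI : Invertible (Fintype.card G : ℂ) :=
    invertibleOfNonzero (by exact_mod_cast Fintype.card_ne_zero)
  haveI := hV; haveI := hW
  have key : ⅟(Fintype.card G : ℂ) • ∑ x : G, V.character x * W.character x⁻¹
      = (if Nonempty (V ≅ W) then 1 else 0 : ℂ) :=
    by have := FDRep.char_orthonormal V W
       rw [Nat.card_eq_fintype_card] at this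
       simpa [smul_eq_mul, invOf_eq_inv] using this
  have keyc : ∑ x : G, V.character x * W.character x⁻¹
      = (Fintype.card G : ℂ) * (if Nonempty (V ≅ W) then 1 else 0 : ℂ) := by
    have := congrArg (fun z => (Fintype.card G : ℂ) * z) key
    simpa [smul_eq_mul, ← mul_assoc, mul_invOf_self] using this
  have hsum : ∑ x : G, (starRingEnd ℂ) (f x) * h x
      = ∑ x : G, V.character x * W.character x⁻¹ := by
    refine Fintype.sum_equiv (Equiv.inv G) _ _ fun x => ?_
    rw [hVf, hWh, conj_char]
    simp
  by_cases hiso : Nonempty (V ≅ W)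
  · have hfh : f = h := funext fun x => by
      rw [hVf, hWh, FDRep.char_iso hiso.some]
    rw [if_pos hfh, hsum, keyc, if_pos hiso, mul_one]
  · have hfh : f ≠ h := by
      intro hfh
      have hVW : V.character = W.character := funext fun x => by rw [← hVf x, ← hWh x, hfh]
      have key2 : ⅟(Fintype.card G : ℂ) • ∑ x : G, W.character x * W.character x⁻¹
          = (if Nonempty (W ≅ W) then 1 else 0 : ℂ) :=
        by have := FDRep.char_orthonormal W W
           rw [Nat.card_eq_fintype_card] at this
           simpa [smul_eq_mul, invOf_eq_inv] using this
      rw [if_pos ⟨CategoryTheory.Iso.refl W⟩] at key2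
      rw [hVW, key2, if_neg hiso] at key
      norm_num at key
    rw [if_neg hfh, hsum, keyc, if_neg hiso, mul_zero]

lemma irr_conj_invariant {G : Type} [Group G] {χ : G → ℂ} (hχ : χ ∈ IrrChar G)
    (h x : G) : χ (h * x * h⁻¹) = χ x := by
  obtain ⟨V, _, hV⟩ := hχ
  rw [hV, hV, FDRep.char_conj]

variable {G : Type} [Group G] [Fintype G]

/-- scaled character vectors in Euclidean space -/
noncomputable def charVec (f : G → ℂ) : EuclideanSpace ℂ G :=
  WithLp.toLp 2 (fun x => ((Real.sqrt (Fintype.card G) : ℝ) : ℂ)⁻¹ * f x)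

lemma sqrtCard_sq : ((Real.sqrt (Fintype.card G) : ℝ) : ℂ) * ((Real.sqrt (Fintype.card G) : ℝ) : ℂ)
    = (Fintype.card G : ℂ) := by
  rw [← Complex.ofReal_mul, Real.mul_self_sqrt (by positivity)]
  norm_num

lemma sqrtCard_ne_zero : ((Real.sqrt (Fintype.card G) : ℝ) : ℂ) ≠ 0 := by
  simp only [ne_eq, Complex.ofReal_eq_zero]
  positivity

lemma orthonormal_charVec : Orthonormal ℂ (fun χ : IrrChar G => charVec (χ : G → ℂ)) := by
  rw [orthonormal_iff_ite]
  intro χ ψ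
  have key := irr_orthonormal χ.2 ψ.2
  have : (inner ℂ (charVec (χ : G → ℂ)) (charVec (ψ : G → ℂ)) : ℂ)
      = ((Fintype.card G : ℂ))⁻¹ * ∑ x : G, (starRingEnd ℂ) ((χ : G → ℂ) x) * (ψ : G → ℂ) x := by
    rw [PiLp.inner_apply, Finset.mul_sum]
    refine Finset.sum_congr rfl fun x _ => ?_
    simp only [charVec, PiLp.toLp_apply, RCLike.inner_apply, map_mul, map_inv₀, Complex.conj_ofReal]
    rw [mul_comm]
    rw [show ((Real.sqrt (Fintype.card G) : ℝ) : ℂ)⁻¹ * (starRingEnd ℂ) ((χ : G → ℂ) x) *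
        (((Real.sqrt (Fintype.card G) : ℝ) : ℂ)⁻¹ * (ψ : G → ℂ) x)
        = (((Real.sqrt (Fintype.card G) : ℝ) : ℂ) * ((Real.sqrt (Fintype.card G) : ℝ) : ℂ))⁻¹ *
          ((starRingEnd ℂ) ((χ : G → ℂ) x) * (ψ : G → ℂ) x) by
      rw [mul_inv]; ring, sqrtCard_sq]
  rw [this, key]
  by_cases h : (χ : G → ℂ) = (ψ : G → ℂ)
  · rw [if_pos h, if_pos (Subtype.ext h), inv_mul_cancel₀ (by exact_mod_cast Fintype.card_ne_zero)]
  · rw [if_neg h, if_neg (fun hc => h (congrArg _ hc)), mul_zero]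

lemma irrChar_finite : (IrrChar G).Finite := by
  have h := (orthonormal_charVec (G := G)).linearIndependent
  have : Finite (IrrChar G) := h.finite
  exact Set.finite_coe_iff.mp this

lemma sum_normSq_char_le (g : G) :
    ∑ χ ∈ (irrChar_finite (G := G)).toFinset, ‖χ g‖ ^ 2
      ≤ (Nat.card (Subgroup.centralizer ({g} : Set G)) : ℝ) := by
  classical
  haveI : Fintype (IrrChar G) := (irrChar_finite (G := G)).fintype
  set O : Set G := MulAction.orbit (ConjAct G) g with hO
  haveI : Fintype O := Set.Finite.fintype (Set.toFinite _)
  set F : Finset G := O.toFinset with hF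
  set u : EuclideanSpace ℂ G := WithLp.toLp 2 (fun x => if x ∈ F then (1 : ℂ) else 0) with hu
  have hcardF : (F.card : ℝ) = (Fintype.card O : ℝ) := by rw [hF, Set.toFinset_card]
  have hgF : g ∈ F := by
    rw [hF, Set.mem_toFinset]; exact MulAction.mem_orbit_self g
  have hFpos : 0 < (F.card : ℝ) := by
    have := Finset.card_pos.mpr ⟨g, hgF⟩; exact_mod_cast this
  -- norm of u
  have hnormu : ‖u‖ ^ 2 = (F.card : ℝ) := by
    rw [EuclideanSpace.norm_eq, Real.sq_sqrt (by positivity)]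
    have : ∀ x : G, ‖u x‖ ^ 2 = (if x ∈ F then (1 : ℝ) else 0) := by
      intro x; by_cases hx : x ∈ F <;> simp [hu, hx, PiLp.toLp_apply]
    rw [Finset.sum_congr rfl fun x _ => this x, Finset.sum_ite_mem,
      Finset.univ_inter, Finset.sum_const, nsmul_eq_mul, mul_one]
  -- inner products
  have hinner : ∀ χ : IrrChar G, (inner ℂ (charVec (χ : G → ℂ)) u : ℂ)
      = ((Real.sqrt (Fintype.card G) : ℝ) : ℂ)⁻¹ * (F.card : ℂ)
          * (starRingEnd ℂ) ((χ : G → ℂ) g) := by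
    intro χ
    rw [PiLp.inner_apply]
    have hconst : ∀ x ∈ F, (starRingEnd ℂ) ((χ : G → ℂ) x)
        = (starRingEnd ℂ) ((χ : G → ℂ) g) := by
      intro x hx
      rw [hF, Set.mem_toFinset] at hx
      obtain ⟨φ, hφ⟩ := hx
      have hφ' : ConjAct.ofConjAct φ * g * (ConjAct.ofConjAct φ)⁻¹ = x := by
        rw [← ConjAct.smul_def]; exact hφ
      rw [← hφ', irr_conj_invariant χ.2]
    calc ∑ x : G, (inner ℂ (charVec (χ : G → ℂ) x) (u x) : ℂ)
        = ∑ x ∈ F, ((Real.sqrt (Fintype.card G) : ℝ) : ℂ)⁻¹ * (starRingEnd ℂ) ((χ : G → ℂ) x) := by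
          rw [← Finset.sum_subset (Finset.subset_univ F)
            (fun x _ hx => by simp [hu, hx, PiLp.toLp_apply, RCLike.inner_apply])]
          refine Finset.sum_congr rfl fun x hx => ?_
          simp [hu, hx, charVec, PiLp.toLp_apply, RCLike.inner_apply, map_mul, map_inv₀, Complex.conj_ofReal]
      _ = (F.card : ℂ) * (((Real.sqrt (Fintype.card G) : ℝ) : ℂ)⁻¹
            * (starRingEnd ℂ) ((χ : G → ℂ) g)) := by
          rw [Finset.sum_congr rfl (fun x hx => by rw [hconst x hx]), Finset.sum_const,
            nsmul_eq_mul]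
      _ = _ := by ring
  -- Bessel
  have hB := (orthonormal_charVec (G := G)).sum_inner_products_le
    (s := (Finset.univ : Finset (IrrChar G))) u
  have hnormsq : ∀ χ : IrrChar G, ‖(inner ℂ (charVec (χ : G → ℂ)) u : ℂ)‖ ^ 2
      = (Fintype.card G : ℝ)⁻¹ * (F.card : ℝ) ^ 2 * ‖(χ : G → ℂ) g‖ ^ 2 := by
    intro χ
    rw [hinner χ, norm_mul, norm_mul, RCLike.norm_conj, norm_inv, Complex.norm_real,
      Real.norm_eq_abs, abs_of_nonneg (Real.sqrt_nonneg _)]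
    have h1 : (Real.sqrt (Fintype.card G))⁻¹ ^ 2 = (Fintype.card G : ℝ)⁻¹ := by
      rw [← Real.sqrt_inv, Real.sq_sqrt (by positivity)]
    have h2 : ‖(F.card : ℂ)‖ = (F.card : ℝ) := by
      rw [Complex.norm_natCast]
    rw [mul_pow, mul_pow, h1, h2]
  rw [Finset.sum_congr rfl (fun χ _ => hnormsq χ), hnormu] at hB
  -- rewrite goal sum as sum over the subtype
  have hsum_eq : ∑ χ ∈ (irrChar_finite (G := G)).toFinset, ‖χ g‖ ^ 2
      = ∑ χ : IrrChar G, ‖(χ : G → ℂ) g‖ ^ 2 := by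
    rw [← Finset.sum_coe_sort ((irrChar_finite (G := G)).toFinset)]
    exact (Fintype.sum_equiv
      (Equiv.subtypeEquivRight (fun x => ((irrChar_finite (G := G)).mem_toFinset))).symm _ _
      (fun χ => rfl)).symm
  -- orbit stabilizer
  haveI : Fintype (MulAction.stabilizer (ConjAct G) g) := Fintype.ofFinite _
  have horb : (F.card : ℝ) * (Nat.card (Subgroup.centralizer ({g} : Set G)) : ℝ)
      = (Fintype.card G : ℝ) := by
    have e : Subgroup.centralizer ({g} : Set G) ≃ MulAction.stabilizer (ConjAct G) g := by
      refine Equiv.subtypeEquiv ConjAct.toConjAct.toEquiv (fun k => ?_)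
      rw [Subgroup.centralizer_eq_comap_stabilizer]
      rfl
    have h1 : Nat.card (Subgroup.centralizer ({g} : Set G))
        = Fintype.card (MulAction.stabilizer (ConjAct G) g) := by
      rw [Nat.card_congr e, Nat.card_eq_fintype_card]
    have h2 := MulAction.card_orbit_mul_card_stabilizer_eq_card_group (ConjAct G) g
    have h3 : Fintype.card (ConjAct G) = Fintype.card G :=
      Fintype.card_congr ConjAct.ofConjAct.toEquiv
    have h4 : F.card = Fintype.card O := by rw [hF, Set.toFinset_card]
    rw [h1, h4]
    exact_mod_cast (h3 ▸ h2 : Fintype.card O * Fintype.card (MulAction.stabilizer (ConjAct G) g)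
      = Fintype.card G)
  rw [hsum_eq]
  have hcG : (0 : ℝ) < (Fintype.card G : ℝ) := by exact_mod_cast Fintype.card_pos
  have hfactor : (Fintype.card G : ℝ)⁻¹ * (F.card : ℝ) ^ 2
      * ∑ χ : IrrChar G, ‖(χ : G → ℂ) g‖ ^ 2 ≤ (F.card : ℝ) := by
    rw [← Finset.mul_sum] at hB
    exact hB
  set S := ∑ χ : IrrChar G, ‖(χ : G → ℂ) g‖ ^ 2 with hS
  have h6 : ((F.card : ℝ) ^ 2 * S) / (Fintype.card G : ℝ) ≤ (F.card : ℝ) := by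
    have heq : ((F.card : ℝ) ^ 2 * S) / (Fintype.card G : ℝ)
        = (Fintype.card G : ℝ)⁻¹ * (F.card : ℝ) ^ 2 * S := by ring
    rw [heq]; exact hfactor
  rw [div_le_iff₀ hcG] at h6
  refine le_of_mul_le_mul_left ?_ (mul_pos hFpos hFpos)
  nlinarith [h6, horb]



/-- The part of the Frobenius character sum over characters of degree at least `D` is
bounded by `(1/D) (|C_G(g₁)| |C_G(g₂)| |C_G(g)|)^{1/2}`. -/
theorem stmt_5 (G : Type) [Group G] [Fintype G] (g₁ g₂ g : G) (D : ℕ) (hD : 0 < D) :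
    ‖∑ᶠ χ ∈ {χ ∈ IrrChar G | (D : ℂ) ≤ χ 1},
        χ g₁ * χ g₂ * (starRingEnd ℂ) (χ g) / χ 1‖ ≤
      (1 / (D : ℝ)) * Real.sqrt
        ((Nat.card (Subgroup.centralizer {g₁} : Subgroup G) : ℝ) *
          (Nat.card (Subgroup.centralizer {g₂} : Subgroup G) : ℝ) *
          (Nat.card (Subgroup.centralizer {g} : Subgroup G) : ℝ)) := by
  classical
  have hfin : (IrrChar G).Finite := irrChar_finite
  set T := hfin.toFinset with hT
  have sfin : {χ ∈ IrrChar G | (D : ℂ) ≤ χ 1}.Finite :=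
    hfin.subset (Set.sep_subset _ _)
  rw [← sfin.coe_toFinset, finsum_mem_coe_finset]
  set S := sfin.toFinset with hS
  have hST : S ⊆ T := fun χ hχ => by
    rw [hS, Set.Finite.mem_toFinset] at hχ
    rw [hT, Set.Finite.mem_toFinset]
    exact hχ.1
  -- termwise bound on S
  have hterm : ∀ χ ∈ S, ‖χ g₁ * χ g₂ * (starRingEnd ℂ) (χ g) / χ 1‖
      ≤ (1 / (D : ℝ)) * (‖χ g₁‖ * ‖χ g₂‖ * ‖χ g‖) := by
    intro χ hχ
    rw [hS, Set.Finite.mem_toFinset] at hχ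
    obtain ⟨hχI, hχD⟩ := hχ
    rw [Complex.le_def] at hχD
    have him : (χ 1).im = 0 := by simpa using hχD.2.symm
    have hre : (D : ℝ) ≤ (χ 1).re := by simpa using hχD.1
    have hnorm1 : (D : ℝ) ≤ ‖χ 1‖ := by
      have : χ 1 = ((χ 1).re : ℂ) := by
        apply Complex.ext <;> simp [him]
      rw [this, Complex.norm_real, Real.norm_eq_abs]
      exact le_trans hre (le_abs_self _)
    have hD' : (0 : ℝ) < D := by exact_mod_cast hD
    rw [norm_div, norm_mul, norm_mul, RCLike.norm_conj]
    calc ‖χ g₁‖ * ‖χ g₂‖ * ‖χ g‖ / ‖χ 1‖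
        ≤ ‖χ g₁‖ * ‖χ g₂‖ * ‖χ g‖ / (D : ℝ) :=
          div_le_div_of_nonneg_left (by positivity) hD' hnorm1
      _ = (1 / (D : ℝ)) * (‖χ g₁‖ * ‖χ g₂‖ * ‖χ g‖) := by ring
  -- sum bound
  have h1 : ‖∑ χ ∈ S, χ g₁ * χ g₂ * (starRingEnd ℂ) (χ g) / χ 1‖
      ≤ ∑ χ ∈ S, (1 / (D : ℝ)) * (‖χ g₁‖ * ‖χ g₂‖ * ‖χ g‖) :=
    le_trans (norm_sum_le _ _) (Finset.sum_le_sum hterm)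
  refine le_trans h1 ?_
  rw [← Finset.mul_sum]
  apply mul_le_mul_of_nonneg_left _ (by positivity)
  -- extend to T
  have h2 : ∑ χ ∈ S, ‖χ g₁‖ * ‖χ g₂‖ * ‖χ g‖ ≤ ∑ χ ∈ T, ‖χ g₁‖ * ‖χ g₂‖ * ‖χ g‖ :=
    Finset.sum_le_sum_of_subset_of_nonneg hST (fun χ _ _ => by positivity)
  refine le_trans h2 ?_
  -- Cauchy-Schwarz
  set C₁ := (Nat.card (Subgroup.centralizer ({g₁} : Set G)) : ℝ) with hC1
  set C₂ := (Nat.card (Subgroup.centralizer ({g₂} : Set G)) : ℝ) with hC2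
  set C₃ := (Nat.card (Subgroup.centralizer ({g} : Set G)) : ℝ) with hC3
  have hb1 : ∑ χ ∈ T, ‖χ g₁‖ ^ 2 ≤ C₁ := sum_normSq_char_le g₁
  have hb2 : ∑ χ ∈ T, ‖χ g₂‖ ^ 2 ≤ C₂ := sum_normSq_char_le g₂
  have hb3 : ∑ χ ∈ T, ‖χ g‖ ^ 2 ≤ C₃ := sum_normSq_char_le g
  have hC3nn : 0 ≤ C₃ := by rw [hC3]; positivity
  have hcle : ∀ χ ∈ T, ‖χ g‖ ≤ Real.sqrt C₃ := by
    intro χ hχ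
    rw [show ‖χ g‖ = Real.sqrt (‖χ g‖ ^ 2) from (Real.sqrt_sq (norm_nonneg _)).symm]
    apply Real.sqrt_le_sqrt
    exact le_trans (Finset.single_le_sum (f := fun ψ => ‖ψ g‖ ^ 2)
      (fun ψ _ => sq_nonneg _) hχ) hb3
  have ha2c : ∑ χ ∈ T, ‖χ g₁‖ ^ 2 * ‖χ g‖ ≤ Real.sqrt C₃ * C₁ := by
    calc ∑ χ ∈ T, ‖χ g₁‖ ^ 2 * ‖χ g‖ ≤ ∑ χ ∈ T, ‖χ g₁‖ ^ 2 * Real.sqrt C₃ :=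
          Finset.sum_le_sum (fun χ hχ =>
            mul_le_mul_of_nonneg_left (hcle χ hχ) (sq_nonneg _))
      _ = Real.sqrt C₃ * ∑ χ ∈ T, ‖χ g₁‖ ^ 2 := by rw [← Finset.sum_mul, mul_comm]
      _ ≤ Real.sqrt C₃ * C₁ := mul_le_mul_of_nonneg_left hb1 (Real.sqrt_nonneg _)
  have hb2c : ∑ χ ∈ T, ‖χ g₂‖ ^ 2 * ‖χ g‖ ≤ Real.sqrt C₃ * C₂ := by
    calc ∑ χ ∈ T, ‖χ g₂‖ ^ 2 * ‖χ g‖ ≤ ∑ χ ∈ T, ‖χ g₂‖ ^ 2 * Real.sqrt C₃ :=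
          Finset.sum_le_sum (fun χ hχ =>
            mul_le_mul_of_nonneg_left (hcle χ hχ) (sq_nonneg _))
      _ = Real.sqrt C₃ * ∑ χ ∈ T, ‖χ g₂‖ ^ 2 := by rw [← Finset.sum_mul, mul_comm]
      _ ≤ Real.sqrt C₃ * C₂ := mul_le_mul_of_nonneg_left hb2 (Real.sqrt_nonneg _)
  have hCS := Finset.sum_mul_sq_le_sq_mul_sq T (fun χ => ‖χ g₁‖ * Real.sqrt ‖χ g‖)
    (fun χ => ‖χ g₂‖ * Real.sqrt ‖χ g‖)
  have hprod : ∀ χ : G → ℂ, (‖χ g₁‖ * Real.sqrt ‖χ g‖) * (‖χ g₂‖ * Real.sqrt ‖χ g‖)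
      = ‖χ g₁‖ * ‖χ g₂‖ * ‖χ g‖ := by
    intro χ
    rw [show (‖χ g₁‖ * Real.sqrt ‖χ g‖) * (‖χ g₂‖ * Real.sqrt ‖χ g‖)
        = ‖χ g₁‖ * ‖χ g₂‖ * (Real.sqrt ‖χ g‖ * Real.sqrt ‖χ g‖) by ring,
      Real.mul_self_sqrt (norm_nonneg _)]
  have hsq : ∀ χ : G → ℂ, (‖χ g₁‖ * Real.sqrt ‖χ g‖) ^ 2 = ‖χ g₁‖ ^ 2 * ‖χ g‖ := by
    intro χ; rw [mul_pow, Real.sq_sqrt (norm_nonneg _)]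
  have hsq2 : ∀ χ : G → ℂ, (‖χ g₂‖ * Real.sqrt ‖χ g‖) ^ 2 = ‖χ g₂‖ ^ 2 * ‖χ g‖ := by
    intro χ; rw [mul_pow, Real.sq_sqrt (norm_nonneg _)]
  rw [Finset.sum_congr rfl (fun χ _ => hprod χ),
    Finset.sum_congr rfl (fun χ _ => hsq χ),
    Finset.sum_congr rfl (fun χ _ => hsq2 χ)] at hCS
  have hfinal : (∑ χ ∈ T, ‖χ g₁‖ * ‖χ g₂‖ * ‖χ g‖) ^ 2 ≤ C₁ * C₂ * C₃ := by
    refine le_trans hCS ?_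
    have := mul_le_mul ha2c hb2c (by positivity) (by positivity)
    refine le_trans this (le_of_eq ?_)
    rw [show Real.sqrt C₃ * C₁ * (Real.sqrt C₃ * C₂)
        = (Real.sqrt C₃ * Real.sqrt C₃) * (C₁ * C₂) by ring,
      Real.mul_self_sqrt hC3nn]
    ring
  have hnn : 0 ≤ ∑ χ ∈ T, ‖χ g₁‖ * ‖χ g₂‖ * ‖χ g‖ :=
    Finset.sum_nonneg (fun χ _ => by positivity)
  calc ∑ χ ∈ T, ‖χ g₁‖ * ‖χ g₂‖ * ‖χ g‖
      = Real.sqrt ((∑ χ ∈ T, ‖χ g₁‖ * ‖χ g₂‖ * ‖χ g‖) ^ 2) := (Real.sqrt_sq hnn).symm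
    _ ≤ Real.sqrt (C₁ * C₂ * C₃) := Real.sqrt_le_sqrt hfinal
end

section
/- For every positive integer k there exists a positive integer f(k) such that for all integers n ≥ f(k) and all positive integers N having at most k distinct prime divisors, every element g of the alternating group A_n can be written as g = x^N * y^N with x, y ∈ A_n. -/
open Equiv Equiv.Perm List
set_option linter.unusedSectionVars false
set_option linter.unnecessarySimpa false
set_option maxHeartbeats 1000000


open Equiv Equiv.Perm List

variable {α : Type*} [DecidableEq α]

lemma swap_swap_swap (a b c : α) (hab : a ≠ b) (hbc : b ≠ c) (hac : a ≠ c) :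
    Equiv.swap a b * Equiv.swap b c = Equiv.swap b c * Equiv.swap a c := by
  ext x
  simp only [Equiv.Perm.mul_apply, Equiv.swap_apply_def]
  split_ifs <;> simp_all

/-- (A1) appending one fresh element to a cycle list -/
lemma formPerm_append_singleton (l : List α) (hl : l ≠ []) (z : α) :
    formPerm (l ++ [z]) = formPerm l * Equiv.swap (l.getLast hl) z := by
  induction l with
  | nil => exact absurd rfl hl
  | cons x xs ih =>
    cases xs with
    | nil => simp [formPerm_cons_cons]
    | cons y ys =>
      have hne : (y :: ys : List α) ≠ [] := by simp
      have h1 : ((x :: y :: ys) ++ [z]) = x :: y :: (ys ++ [z]) := by simp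
      have h2 : (y :: (ys ++ [z])) = (y :: ys) ++ [z] := by simp
      rw [h1, formPerm_cons_cons, h2, ih hne]
      rw [← mul_assoc, ← formPerm_cons_cons]
      rw [List.getLast_cons hne]

/-- (L-chain) splitting a cycle list into two overlapping pieces -/
lemma formPerm_split (P S : List α) (hS : S ≠ []) :
    formPerm (P ++ S) = formPerm (P ++ [S.head hS]) * formPerm S := by
  induction P with
  | nil => simp
  | cons x P' ih =>
    cases P' with
    | nil =>
      cases S with
      | nil => exact absurd rfl hS
      | cons s₁ S' => simp [formPerm_cons_cons]
    | cons p₂ P'' =>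
      have h1 : ((x :: p₂ :: P'') ++ S) = x :: ((p₂ :: P'') ++ S) := by simp
      have h2 : ((p₂ :: P'') ++ S) = p₂ :: (P'' ++ S) := by simp
      have h3 : ((x :: p₂ :: P'') ++ [S.head hS]) = x :: p₂ :: (P'' ++ [S.head hS]) := by simp
      rw [h1, h2, formPerm_cons_cons, ← h2, ih, h3, formPerm_cons_cons, mul_assoc]
      simp

/-- (L-join) joining two disjoint cycle lists with a swap -/
lemma formPerm_join (l1 l2 : List α) (h1 : l1 ≠ []) (h2 : l2 ≠ [])
    (hnd : (l1 ++ l2).Nodup) :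
    formPerm (l1 ++ l2) =
      formPerm l1 * formPerm l2 * Equiv.swap (l1.getLast h1) (l2.getLast h2) := by
  induction l2 using List.reverseRecOn with
  | nil => exact absurd rfl h2
  | append_singleton l2' z ih =>
    cases eq_or_ne l2' [] with
    | inl h =>
      subst h
      simp only [List.nil_append]
      rw [formPerm_append_singleton l1 h1 z]
      simp [List.getLast_singleton]
    | inr h =>
      have hnd' : (l1 ++ l2').Nodup :=
        hnd.sublist ((List.append_sublist_append_left l1).2 (List.sublist_append_left l2' [z]))
      have hA : (l1 ++ (l2' ++ [z])) = (l1 ++ l2') ++ [z] := by simp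
      have hne : (l1 ++ l2') ≠ [] := by simp [h1]
      have hdisj := List.disjoint_of_nodup_append hnd
      have haz : l1.getLast h1 ≠ z := by
        intro he
        exact hdisj (List.getLast_mem h1) (by rw [he]; exact List.mem_append_right _ (by simp))
      have hab : l1.getLast h1 ≠ l2'.getLast h := by
        intro he
        exact hdisj (List.getLast_mem h1)
          (by rw [he]; exact List.mem_append_left _ (List.getLast_mem h))
      have hbz : l2'.getLast h ≠ z := by
        have hndr : (l2' ++ [z]).Nodup := hnd.sublist (List.sublist_append_right l1 _)
        have hz : z ∉ l2' := fun hz => (List.disjoint_of_nodup_append hndr) hz (by simp)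
        intro he
        exact hz (he ▸ List.getLast_mem h)
      have hgz : (l2' ++ [z]).getLast h2 = z := by simp [List.getLast_append]
      rw [hA, formPerm_append_singleton _ hne z, ih h hnd']
      rw [List.getLast_append_of_ne_nil _ h, formPerm_append_singleton l2' h z, hgz]
      rw [mul_assoc (formPerm l1 * formPerm l2'), swap_swap_swap _ _ _ hab hbz haz]
      simp [mul_assoc]


section rotations

/-- rotate a nodup list so that a given member is the last element -/
lemma exists_rotate_getLast {l : List α} (hnd : l.Nodup) {x : α} (hx : x ∈ l) :
    ∃ l', ∃ h' : l' ≠ [], l'.Nodup ∧ l'.length = l.length ∧ l'.toFinset = l.toFinset ∧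
      formPerm l' = formPerm l ∧ l'.getLast h' = x := by
  obtain ⟨l₁, l₂, rfl⟩ := List.append_of_mem hx
  refine ⟨(l₂ ++ l₁) ++ [x], by simp, ?_, ?_, ?_, ?_, by simp [List.getLast_append]⟩
  · have hrot : ((l₂ ++ l₁) ++ [x]) ~r (l₁ ++ x :: l₂) := by
      have h1 : ((l₂ ++ l₁) ++ [x]) ~r (x :: (l₂ ++ l₁)) := List.isRotated_concat _ _
      have h2 : ((x :: l₂) ++ l₁) ~r (l₁ ++ (x :: l₂)) := List.isRotated_append
      exact h1.trans (by simpa using h2)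
    exact hrot.nodup_iff.2 hnd
  · simp; omega
  · have : ((l₂ ++ l₁) ++ [x]) ~r (l₁ ++ x :: l₂) := by
      have h1 : ((l₂ ++ l₁) ++ [x]) ~r (x :: (l₂ ++ l₁)) := List.isRotated_concat _ _
      have h2 : ((x :: l₂) ++ l₁) ~r (l₁ ++ (x :: l₂)) := List.isRotated_append
      exact h1.trans (by simpa using h2)
    ext a; simp [List.mem_toFinset, this.mem_iff]; tauto
  · have : ((l₂ ++ l₁) ++ [x]) ~r (l₁ ++ x :: l₂) := by
      have h1 : ((l₂ ++ l₁) ++ [x]) ~r (x :: (l₂ ++ l₁)) := List.isRotated_concat _ _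
      have h2 : ((x :: l₂) ++ l₁) ~r (l₁ ++ (x :: l₂)) := List.isRotated_append
      exact h1.trans (by simpa using h2)
    obtain ⟨n, hn⟩ := this.symm
    rw [← hn]
    exact List.formPerm_rotate _ hnd n

/-- rotate a nodup list so that a given member is the head -/
lemma exists_rotate_head {l : List α} (hnd : l.Nodup) {x : α} (hx : x ∈ l) :
    ∃ l₂ : List α, (x :: l₂).Nodup ∧ (x :: l₂).length = l.length ∧
      (x :: l₂).toFinset = l.toFinset ∧ formPerm (x :: l₂) = formPerm l := by
  obtain ⟨l₁, l₃, rfl⟩ := List.append_of_mem hx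
  refine ⟨l₃ ++ l₁, ?_, by simp; omega, ?_, ?_⟩
  all_goals
    have hrot : (x :: (l₃ ++ l₁)) ~r (l₁ ++ x :: l₃) := by
      have h2 : ((x :: l₃) ++ l₁) ~r (l₁ ++ (x :: l₃)) := List.isRotated_append
      simpa using h2
  · exact hrot.nodup_iff.2 hnd
  · ext a; simp [hrot.mem_iff]; tauto
  · obtain ⟨n, hn⟩ := hrot.symm
    rw [← hn]
    exact List.formPerm_rotate _ hnd n

end rotations


variable [Fintype α]

lemma cycle_exists_list {c : Perm α} (hc : c.IsCycle) :
    ∃ l : List α, l.Nodup ∧ 2 ≤ l.length ∧ formPerm l = c ∧ l.toFinset = c.support := by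
  classical
  obtain ⟨x, hx, -⟩ := id hc
  have hxs : x ∈ c.support := by simpa using hx
  refine ⟨c.toList x, Equiv.Perm.nodup_toList c x, ?_, ?_, ?_⟩
  · exact Equiv.Perm.two_le_length_toList_iff_mem_support.2 hxs
  · rw [Equiv.Perm.formPerm_toList, hc.cycleOf_eq hx]
  · have h2 : 2 ≤ (c.toList x).length := Equiv.Perm.two_le_length_toList_iff_mem_support.2 hxs
    have := List.support_formPerm_of_nodup (c.toList x) (Equiv.Perm.nodup_toList c x)
      (fun y hy => by rw [hy] at h2; simp at h2)
    rw [Equiv.Perm.formPerm_toList, hc.cycleOf_eq hx] at this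
    rw [← this]

lemma disjoint_head_prod {c : Perm α} {cs : List (Perm α)}
    (hd : (c :: cs).Pairwise Equiv.Perm.Disjoint) : Equiv.Perm.Disjoint c cs.prod :=
  Equiv.Perm.disjoint_prod_right _ (List.pairwise_cons.1 hd).1

lemma two_mul_length_le_card_support : ∀ (cs : List (Perm α)), (∀ c ∈ cs, c.IsCycle) →
    cs.Pairwise Equiv.Perm.Disjoint → 2 * cs.length ≤ cs.prod.support.card := by
  intro cs
  induction cs with
  | nil => simp
  | cons c cs ih =>
    intro hc hd
    have hdis := disjoint_head_prod hd
    rw [List.prod_cons, hdis.support_mul, Finset.card_union_of_disjoint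
      (Equiv.Perm.disjoint_iff_disjoint_support.1 hdis)]
    have h1 := ih (fun x hx => hc x (by simp [hx])) (List.pairwise_cons.1 hd).2
    have h2 := (hc c (by simp)).two_le_card_support
    simp only [List.length_cons]
    omega


lemma formPerm_getLast' (S : List α) (h : S ≠ []) :
    formPerm S (S.getLast h) = S.head h := by
  cases S with
  | nil => exact absurd rfl h
  | cons x xs => simpa using List.formPerm_apply_getLast x xs

theorem core_factorization : ∀ (cs : List (Perm α)), cs ≠ [] → (∀ c ∈ cs, c.IsCycle) →
    cs.Pairwise Equiv.Perm.Disjoint →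
    ∀ a b : ℕ, cs.length ≤ a → cs.length ≤ b →
      a + b = cs.prod.support.card + cs.length →
      ∃ LA LB : List α, LA.Nodup ∧ LB.Nodup ∧ LA.length = a ∧ LB.length = b ∧
        formPerm LA * formPerm LB = cs.prod ∧ LA.toFinset ∪ LB.toFinset = cs.prod.support := by
  intro cs
  induction cs with
  | nil => intro h; exact absurd rfl h
  | cons c cs' ih =>
    intro _ hcyc hpair a b ha hb hab
    have hccyc : c.IsCycle := hcyc c (by simp)
    obtain ⟨l, hlnd, hl2, hlfp, hlfin⟩ := cycle_exists_list hccyc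
    have hlne : l ≠ [] := by intro h; rw [h] at hl2; simp at hl2
    have hm : l.length = c.support.card := by rw [← hlfin, List.toFinset_card_of_nodup hlnd]
    rcases eq_or_ne cs' [] with rfl | hne'
    · -- BASE CASE: single cycle
      simp only [List.prod_cons, List.prod_nil, mul_one] at hab ⊢
      simp only [List.length_cons, List.length_nil] at ha hb hab
      rcases Nat.lt_or_ge b 2 with hb2 | hb2
      · -- b = 1, a = m
        have hb1 : b = 1 := by omega
        refine ⟨l, [l.head hlne], hlnd, by simp, by omega, by simp [hb1], by simp [hlfp], ?_⟩
        have hh : l.head hlne ∈ l := List.head_mem hlne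
        rw [← hlfin]
        ext t
        simp only [Finset.mem_union, List.mem_toFinset, List.toFinset_cons,
          List.toFinset_nil, insert_empty_eq, Finset.mem_singleton]
        constructor
        · rintro (h | h)
          · exact h
          · exact h ▸ hh
        · intro h; exact Or.inl h
      · -- b ≥ 2 : split l
        set P := l.take (a - 1) with hP
        set S := l.drop (a - 1) with hS
        have hPS : P ++ S = l := List.take_append_drop _ _
        have hSlen : S.length = l.length - (a - 1) := by simp [hS]
        have hSne : S ≠ [] := by
          intro h; rw [h] at hSlen; simp at hSlen; omega
        have hPlen : P.length = a - 1 := by simp [hP]; omega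
        set s₁ := S.head hSne with hs₁
        have hs₁S : s₁ ∈ S := List.head_mem hSne
        have hndPS : (P ++ S).Nodup := hPS.symm ▸ hlnd
        have hdisjPS : P.Disjoint S := List.disjoint_of_nodup_append hndPS
        have hndP : P.Nodup := (List.nodup_append.1 hndPS).1
        have hndS : S.Nodup := (List.nodup_append.1 hndPS).2.1
        refine ⟨P ++ [s₁], S, ?_, hndS, by simp [hPlen]; omega, by omega, ?_, ?_⟩
        · rw [List.nodup_append]
          exact ⟨hndP, by simp, by
            intro t ht b hts htb
            simp only [List.mem_singleton] at hts
            exact hdisjPS ht (by rw [htb, hts]; exact hs₁S)⟩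
        · rw [← formPerm_split P S hSne, hPS, hlfp]
        · rw [← hlfin, ← hPS]
          ext t
          simp only [Finset.mem_union, List.mem_toFinset, List.toFinset_append,
            List.toFinset_cons, List.toFinset_nil, insert_empty_eq, Finset.mem_singleton,
            List.mem_append, List.mem_singleton, List.mem_cons, List.not_mem_nil, or_false]
          constructor
          · rintro ((h | h) | h)
            · exact Or.inl h
            · exact Or.inr (h ▸ hs₁S)
            · exact Or.inr h
          · rintro (h | h)
            · exact Or.inl (Or.inl h)
            · exact Or.inr h
    · -- STEP CASE
      have hr'pos : 1 ≤ cs'.length := by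
        cases cs' with | nil => exact absurd rfl hne' | cons _ _ => simp
      set r' := cs'.length with hr'
      have hd : Equiv.Perm.Disjoint c cs'.prod := disjoint_head_prod hpair
      have hsupd : _root_.Disjoint c.support cs'.prod.support :=
        Equiv.Perm.disjoint_iff_disjoint_support.1 hd
      have hsupp : (c :: cs').prod.support = c.support ∪ cs'.prod.support := by
        rw [List.prod_cons, hd.support_mul]
      set w' := cs'.prod.support.card with hw'
      set m := c.support.card with hmdef
      have hcard : (c :: cs').prod.support.card = m + w' := by
        rw [hsupp, Finset.card_union_of_disjoint hsupd]
      have h2r' : 2 * r' ≤ w' :=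
        two_mul_length_le_card_support cs' (fun x hx => hcyc x (by simp [hx]))
          (List.pairwise_cons.1 hpair).2
      have hm2 : 2 ≤ m := hccyc.two_le_card_support
      rw [hcard] at hab
      simp only [List.length_cons] at ha hb hab
      -- allocation
      set aC := max 1 (m + 1 + r' - b) with haCdef
      have haC1 : 1 ≤ aC := le_max_left _ _
      have haCm : aC ≤ m := by omega
      set a' := a - aC with ha'
      set b' := b - (m + 1 - aC) with hb'
      have hstats : r' ≤ a' ∧ r' ≤ b' ∧ a' + b' = w' + r' ∧ a' + aC = a ∧
          b' + (m + 1 - aC) = b := by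
        constructor; · omega
        constructor; · omega
        constructor; · omega
        constructor; · omega
        · omega
      obtain ⟨hra', hrb', hab', haa, hbb⟩ := hstats
      obtain ⟨LA', LB', ndA', ndB', lenA', lenB', hprod', hun'⟩ :=
        ih hne' (fun x hx => hcyc x (by simp [hx])) (List.pairwise_cons.1 hpair).2
          a' b' hra' hrb' (by omega)
      -- find a common point x₀
      have hcardA : LA'.toFinset.card = a' := by
        rw [List.toFinset_card_of_nodup ndA', lenA']
      have hcardB : LB'.toFinset.card = b' := by
        rw [List.toFinset_card_of_nodup ndB', lenB']
      have hinter : 1 ≤ (LA'.toFinset ∩ LB'.toFinset).card := by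
        have := Finset.card_inter_add_card_union LA'.toFinset LB'.toFinset
        rw [hun', hcardA, hcardB] at this
        omega
      obtain ⟨x₀, hx₀⟩ := Finset.card_pos.1 (show 0 < (LA'.toFinset ∩ LB'.toFinset).card by omega)
      have hx₀A : x₀ ∈ LA' := by
        have := Finset.mem_of_mem_inter_left hx₀; simpa using this
      have hx₀B : x₀ ∈ LB' := by
        have := Finset.mem_of_mem_inter_right hx₀; simpa using this
      have hx₀supp : x₀ ∈ cs'.prod.support := by
        rw [← hun']; exact Finset.mem_union_left _ (by simpa using hx₀A)
      have hx₀l : x₀ ∉ l := by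
        intro hx
        exact (Finset.disjoint_left.1 hsupd) (hlfin ▸ List.mem_toFinset.2 hx) hx₀supp
      -- rotate
      obtain ⟨LA'', hneA'', ndA'', lenA'', finA'', fpA'', lastA''⟩ :=
        exists_rotate_getLast ndA' hx₀A
      obtain ⟨LB₂, ndB'', lenB'', finB'', fpB''⟩ := exists_rotate_head ndB' hx₀B
      -- commute c with formPerm LA''
      have hsubA : (formPerm LA'').support ⊆ cs'.prod.support := by
        intro t ht
        have h1 := List.support_formPerm_le LA'' ht
        rw [finA''] at h1
        rw [← hun']
        exact Finset.mem_union_left _ h1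
      have hcommute : c * formPerm LA'' = formPerm LA'' * c := by
        have : Equiv.Perm.Disjoint c (formPerm LA'') := by
          rw [Equiv.Perm.disjoint_iff_disjoint_support]
          exact Finset.disjoint_of_subset_right hsubA hsupd
        exact this.commute.eq
      have hdisjA''l : ∀ t ∈ LA'', t ∉ l := by
        intro t ht hl'
        have h1 : t ∈ cs'.prod.support := by
          rw [← hun']
          exact Finset.mem_union_left _ (by rw [← finA'']; exact List.mem_toFinset.2 ht)
        exact (Finset.disjoint_left.1 hsupd) (hlfin ▸ List.mem_toFinset.2 hl') h1
      have hdisjB''l : ∀ t ∈ (x₀ :: LB₂), t ∉ l := by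
        intro t ht hl'
        have h1 : t ∈ cs'.prod.support := by
          rw [← hun']
          exact Finset.mem_union_right _ (by
            rw [← List.mem_toFinset, finB''] at ht
            simpa using ht)
        exact (Finset.disjoint_left.1 hsupd) (hlfin ▸ List.mem_toFinset.2 hl') h1
      have hBfin : (x₀ :: LB₂).toFinset = LB'.toFinset := finB''
      rcases eq_or_ne aC m with haCm' | haCm'
      · -- subcase aC = m : attach whole cycle to LA
        set y := l.getLast hlne with hy
        have hyl : y ∈ l := List.getLast_mem hlne
        refine ⟨LA'' ++ l, y :: x₀ :: LB₂, ?_, ?_, ?_, ?_, ?_, ?_⟩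
        · rw [List.nodup_append]
          exact ⟨ndA'', hlnd, fun t ht b hb htb => hdisjA''l t ht (by rw [htb]; exact hb)⟩
        · exact List.nodup_cons.2 ⟨fun h => hdisjB''l y h hyl, ndB''⟩
        · rw [List.length_append, lenA'', lenA']; omega
        · simp only [List.length_cons]
          have : LB₂.length + 1 = b' := by
            have := lenB''; simp only [List.length_cons] at this; omega
          omega
        · have hndAl : (LA'' ++ l).Nodup := by
            rw [List.nodup_append]
            exact ⟨ndA'', hlnd, fun t ht b hb htb => hdisjA''l t ht (by rw [htb]; exact hb)⟩
          rw [formPerm_join LA'' l hneA'' hlne hndAl, lastA'', hlfp]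
          rw [List.formPerm_cons_cons]
          calc formPerm LA'' * c * Equiv.swap x₀ y * (Equiv.swap y x₀ * formPerm (x₀ :: LB₂))
              = formPerm LA'' * c * (Equiv.swap x₀ y * Equiv.swap y x₀) * formPerm (x₀ :: LB₂) := by
                group
            _ = formPerm LA'' * c * formPerm (x₀ :: LB₂) := by
                rw [Equiv.swap_comm y x₀, Equiv.swap_mul_self, mul_one]
            _ = c * (formPerm LA'' * formPerm (x₀ :: LB₂)) := by
                rw [← mul_assoc, ← hcommute, mul_assoc]
            _ = (c :: cs').prod := by
                rw [fpA'', fpB'', hprod', List.prod_cons]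
        · rw [hsupp, ← hlfin, ← hun', ← finA'', ← hBfin]
          ext t
          simp only [Finset.mem_union, List.toFinset_append, List.toFinset_cons,
            List.mem_toFinset, Finset.mem_insert, Finset.mem_union, List.mem_toFinset,
            List.mem_cons]
          constructor
          · rintro ((h | h) | h)
            · exact Or.inr (Or.inl h)
            · exact Or.inl h
            · rcases h with h | h
              · exact Or.inl (h ▸ hyl)
              · exact Or.inr (Or.inr h)
          · rintro (h | h | h)
            · exact Or.inl (Or.inr h)
            · exact Or.inl (Or.inl h)
            · exact Or.inr (Or.inr h)
      · -- subcase aC < m : split cycle between LA and LB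
        have haClt : aC < m := lt_of_le_of_ne haCm haCm'
        set P := l.take (aC - 1) with hP
        set S := l.drop (aC - 1) with hS
        have hPS : P ++ S = l := List.take_append_drop _ _
        have hSlen : S.length = l.length - (aC - 1) := by simp [hS]
        have hSne : S ≠ [] := by
          intro h; rw [h] at hSlen; simp at hSlen; omega
        have hPlen : P.length = aC - 1 := by simp [hP]; omega
        set s₁ := S.head hSne with hs₁
        have hs₁S : s₁ ∈ S := List.head_mem hSne
        have hndPS : (P ++ S).Nodup := hPS.symm ▸ hlnd
        have hdisjPS : P.Disjoint S := List.disjoint_of_nodup_append hndPS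
        have hndP : P.Nodup := (List.nodup_append.1 hndPS).1
        have hndS : S.Nodup := (List.nodup_append.1 hndPS).2.1
        have hPsub : ∀ t ∈ P, t ∈ l := fun t ht => hPS ▸ List.mem_append_left _ ht
        have hSsub : ∀ t ∈ S, t ∈ l := fun t ht => hPS ▸ List.mem_append_right _ ht
        have hndPs₁ : (P ++ [s₁]).Nodup := by
          rw [List.nodup_append]
          exact ⟨hndP, by simp, by
            intro t ht b hts htb
            simp only [List.mem_singleton] at hts
            exact hdisjPS ht (by rw [htb, hts]; exact hs₁S)⟩
        have hndLA : (LA'' ++ (P ++ [s₁])).Nodup := by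
          rw [List.nodup_append]
          refine ⟨ndA'', hndPs₁, ?_⟩
          intro t ht b hts htb
          rcases List.mem_append.1 hts with h | h
          · exact hdisjA''l t ht (by rw [htb]; exact hPsub b h)
          · simp only [List.mem_singleton] at h
            exact hdisjA''l t ht (by rw [htb, h]; exact hSsub s₁ hs₁S)
        have hndLB : (S ++ (x₀ :: LB₂)).Nodup := by
          rw [List.nodup_append]
          refine ⟨hndS, ndB'', ?_⟩
          intro t ht b hts htb
          exact hdisjB''l b hts (by rw [← htb]; exact hSsub t ht)
        have hPs₁ne : (P ++ [s₁]) ≠ [] := by simp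
        have hx₀S : x₀ ∉ S := fun h => hx₀l (hSsub x₀ h)
        refine ⟨LA'' ++ (P ++ [s₁]), S ++ (x₀ :: LB₂), hndLA, hndLB, ?_, ?_, ?_, ?_⟩
        · rw [List.length_append, lenA'', lenA', List.length_append, hPlen]
          simp only [List.length_cons, List.length_nil]
          omega
        · rw [List.length_append]
          simp only [List.length_cons]
          have : LB₂.length + 1 = b' := by
            have := lenB''; simp only [List.length_cons] at this; omega
          omega
        · -- the product computation
          have hgl : (P ++ [s₁]).getLast hPs₁ne = s₁ := by
            simp [List.getLast_append]
          rw [formPerm_join LA'' (P ++ [s₁]) hneA'' hPs₁ne hndLA, lastA'', hgl]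
          have hheadB : (x₀ :: LB₂).head (by simp) = x₀ := rfl
          rw [formPerm_split S (x₀ :: LB₂) (by simp), hheadB]
          rw [formPerm_append_singleton S hSne x₀]
          -- f S * swap (lastS) x₀ = swap s₁ x₀ * f S
          have hfs : formPerm S (S.getLast hSne) = s₁ := formPerm_getLast' S hSne
          have hfx : formPerm S x₀ = x₀ := List.formPerm_apply_of_notMem hx₀S
          have hswapmove : formPerm S * Equiv.swap (S.getLast hSne) x₀ =
              Equiv.swap s₁ x₀ * formPerm S := by
            rw [Equiv.mul_swap_eq_swap_mul, hfs, hfx]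
          calc formPerm LA'' * formPerm (P ++ [s₁]) * Equiv.swap x₀ s₁ *
                (formPerm S * Equiv.swap (S.getLast hSne) x₀ * formPerm (x₀ :: LB₂))
              = formPerm LA'' * formPerm (P ++ [s₁]) * Equiv.swap x₀ s₁ *
                (Equiv.swap s₁ x₀ * formPerm S * formPerm (x₀ :: LB₂)) := by rw [hswapmove]
            _ = formPerm LA'' * formPerm (P ++ [s₁]) *
                (Equiv.swap x₀ s₁ * Equiv.swap s₁ x₀) * (formPerm S * formPerm (x₀ :: LB₂)) := by
                group
            _ = formPerm LA'' * (formPerm (P ++ [s₁]) * formPerm S) * formPerm (x₀ :: LB₂) := by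
                rw [Equiv.swap_comm s₁ x₀, Equiv.swap_mul_self, mul_one]
                group
            _ = formPerm LA'' * c * formPerm (x₀ :: LB₂) := by
                rw [← formPerm_split P S hSne, hPS, hlfp]
            _ = c * (formPerm LA'' * formPerm (x₀ :: LB₂)) := by
                rw [← mul_assoc, ← hcommute, mul_assoc]
            _ = (c :: cs').prod := by
                rw [fpA'', fpB'', hprod', List.prod_cons]
        · -- union
          rw [hsupp, ← hlfin, ← hun', ← finA'', ← hBfin, ← hPS]
          ext t
          simp only [List.toFinset_append, List.toFinset_cons, Finset.mem_union,
            Finset.mem_insert, List.mem_toFinset, Finset.mem_singleton, List.toFinset_nil,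
            insert_empty_eq, List.mem_append, List.mem_cons, List.mem_singleton,
            List.not_mem_nil, or_false]
          have hts : t = s₁ → t ∈ S := fun h => h ▸ hs₁S
          constructor
          · rintro ((h | h | h) | h | h | h)
            · exact Or.inr (Or.inl h)
            · exact Or.inl (Or.inl h)
            · exact Or.inl (Or.inr (h ▸ hs₁S))
            · exact Or.inl (Or.inr h)
            · exact Or.inr (Or.inr (Or.inl h))
            · exact Or.inr (Or.inr (Or.inr h))
          · rintro ((h | h) | h | h | h)
            · exact Or.inl (Or.inr (Or.inl h))
            · exact Or.inr (Or.inl h)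
            · exact Or.inl (Or.inl h)
            · exact Or.inr (Or.inr (Or.inl h))
            · exact Or.inr (Or.inr (Or.inr h))


/-- growing both factors by one, `t` times -/
theorem grow_steps (g : Perm α) : ∀ (t : ℕ) (LA LB : List α),
    LA.Nodup → LB.Nodup → LA.length = LB.length → 1 ≤ LA.length →
    formPerm LA * formPerm LB = g → g.support ⊆ LA.toFinset ∪ LB.toFinset →
    LA.length + t ≤ Fintype.card α →
    ∃ LA' LB' : List α, LA'.Nodup ∧ LB'.Nodup ∧ LA'.length = LA.length + t ∧
      LB'.length = LA.length + t ∧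
      formPerm LA' * formPerm LB' = g ∧ g.support ⊆ LA'.toFinset ∪ LB'.toFinset := by
  intro t
  induction t with
  | zero =>
    intro LA LB h1 h2 h3 h4 h5 h6 _
    exact ⟨LA, LB, h1, h2, by omega, by omega, h5, h6⟩
  | succ t ih =>
    intro LA LB ndA ndB hlen h1len hprod hsupp hcard
    have hLAne : LA ≠ [] := by
      intro h; rw [h] at h1len; simp at h1len
    have hcA : LA.toFinset.card = LA.length := List.toFinset_card_of_nodup ndA
    have hcB : LB.toFinset.card = LB.length := List.toFinset_card_of_nodup ndB
    rcases eq_or_ne LA.toFinset LB.toFinset with hAB | hAB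
    · -- UP1 : fresh point
      obtain ⟨z, hz⟩ : ∃ z, z ∉ LA.toFinset := by
        by_contra h
        push_neg at h
        have huniv : LA.toFinset = Finset.univ := Finset.eq_univ_iff_forall.2 h
        have := Finset.card_univ (α := α)
        rw [huniv] at hcA
        omega
      have hzB : z ∉ LB.toFinset := hAB ▸ hz
      set x := LA.head hLAne with hx
      have hxA : x ∈ LA := List.head_mem hLAne
      have hxB : x ∈ LB := by
        have : x ∈ LB.toFinset := hAB ▸ List.mem_toFinset.2 hxA
        simpa using this
      obtain ⟨LA'', hneA'', ndA'', lenA'', finA'', fpA'', lastA''⟩ :=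
        exists_rotate_getLast ndA hxA
      obtain ⟨LB₂, ndB'', lenB'', finB'', fpB''⟩ := exists_rotate_head ndB hxB
      have hzA'' : z ∉ LA'' := fun h => hz (finA'' ▸ List.mem_toFinset.2 h)
      have hzB'' : z ∉ (x :: LB₂) := fun h => hzB (finB'' ▸ List.mem_toFinset.2 h)
      have hndLA : (LA'' ++ [z]).Nodup := by
        rw [List.nodup_append]
        exact ⟨ndA'', by simp, by
          intro u hu b hu' hub
          simp only [List.mem_singleton] at hu'
          exact hzA'' (by rw [← hu', ← hub]; exact hu)⟩
      have hndLB : (z :: x :: LB₂).Nodup := List.nodup_cons.2 ⟨hzB'', ndB''⟩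
      have hprodnew : formPerm (LA'' ++ [z]) * formPerm (z :: x :: LB₂) = g := by
        rw [formPerm_append_singleton LA'' hneA'' z, lastA'', List.formPerm_cons_cons]
        calc formPerm LA'' * Equiv.swap x z * (Equiv.swap z x * formPerm (x :: LB₂))
            = formPerm LA'' * (Equiv.swap x z * Equiv.swap z x) * formPerm (x :: LB₂) := by
              group
          _ = formPerm LA'' * formPerm (x :: LB₂) := by
              rw [Equiv.swap_comm z x, Equiv.swap_mul_self, mul_one]
          _ = g := by rw [fpA'', fpB'', hprod]
      have hlen' : (LA'' ++ [z]).length = LA.length + 1 := by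
        rw [List.length_append, lenA'']; simp
      have hsupp' : g.support ⊆ (LA'' ++ [z]).toFinset ∪ (z :: x :: LB₂).toFinset := by
        intro u hu
        rcases Finset.mem_union.1 (hsupp hu) with h | h
        · have h1 : u ∈ LA''.toFinset := finA''.symm ▸ h
          exact Finset.mem_union_left _ (List.mem_toFinset.2
            (List.mem_append_left _ (List.mem_toFinset.1 h1)))
        · have h1 : u ∈ (x :: LB₂).toFinset := finB''.symm ▸ h
          refine Finset.mem_union_right _ (List.mem_toFinset.2 ?_)
          exact List.mem_cons_of_mem _ (List.mem_toFinset.1 h1)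
      obtain ⟨LA', LB', p1, p2, p3, p4, p5, p6⟩ :=
        ih (LA'' ++ [z]) (z :: x :: LB₂) hndLA hndLB
          (by rw [hlen']; simp only [List.length_cons]
              have := lenB''; simp only [List.length_cons] at this; omega)
          (by omega) hprodnew hsupp' (by omega)
      exact ⟨LA', LB', p1, p2, by omega, by omega, p5, p6⟩
    · -- UP2 : transfer
      obtain ⟨x, hxA, hxnB⟩ : ∃ x, x ∈ LA.toFinset ∧ x ∉ LB.toFinset := by
        by_contra h
        push_neg at h
        exact hAB (Finset.eq_of_subset_of_card_le (fun u hu => h u hu) (by omega))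
      obtain ⟨z, hzB, hznA⟩ : ∃ z, z ∈ LB.toFinset ∧ z ∉ LA.toFinset := by
        by_contra h
        push_neg at h
        exact hAB ((Finset.eq_of_subset_of_card_le (fun u hu => h u hu) (by omega)).symm)
      have hxA' : x ∈ LA := by simpa using hxA
      have hzB' : z ∈ LB := by simpa using hzB
      obtain ⟨LA'', hneA'', ndA'', lenA'', finA'', fpA'', lastA''⟩ :=
        exists_rotate_getLast ndA hxA'
      obtain ⟨LB₂, ndB'', lenB'', finB'', fpB''⟩ := exists_rotate_head ndB hzB'
      have hzA'' : z ∉ LA'' := fun h => hznA (finA'' ▸ List.mem_toFinset.2 h)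
      have hxB'' : x ∉ (z :: LB₂) := fun h => hxnB (finB'' ▸ List.mem_toFinset.2 h)
      have hndLA : (LA'' ++ [z]).Nodup := by
        rw [List.nodup_append]
        exact ⟨ndA'', by simp, by
          intro u hu b hu' hub
          simp only [List.mem_singleton] at hu'
          exact hzA'' (by rw [← hu', ← hub]; exact hu)⟩
      have hndLB : (x :: z :: LB₂).Nodup := List.nodup_cons.2 ⟨hxB'', ndB''⟩
      have hprodnew : formPerm (LA'' ++ [z]) * formPerm (x :: z :: LB₂) = g := by
        rw [formPerm_append_singleton LA'' hneA'' z, lastA'', List.formPerm_cons_cons]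
        calc formPerm LA'' * Equiv.swap x z * (Equiv.swap x z * formPerm (z :: LB₂))
            = formPerm LA'' * (Equiv.swap x z * Equiv.swap x z) * formPerm (z :: LB₂) := by
              group
          _ = formPerm LA'' * formPerm (z :: LB₂) := by
              rw [Equiv.swap_mul_self, mul_one]
          _ = g := by rw [fpA'', fpB'', hprod]
      have hlen' : (LA'' ++ [z]).length = LA.length + 1 := by
        rw [List.length_append, lenA'']; simp
      have hsupp' : g.support ⊆ (LA'' ++ [z]).toFinset ∪ (x :: z :: LB₂).toFinset := by
        intro u hu
        rcases Finset.mem_union.1 (hsupp hu) with h | h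
        · have h1 : u ∈ LA''.toFinset := finA''.symm ▸ h
          exact Finset.mem_union_left _ (List.mem_toFinset.2
            (List.mem_append_left _ (List.mem_toFinset.1 h1)))
        · have h1 : u ∈ (z :: LB₂).toFinset := finB''.symm ▸ h
          refine Finset.mem_union_right _ (List.mem_toFinset.2 ?_)
          exact List.mem_cons_of_mem _ (List.mem_toFinset.1 h1)
      obtain ⟨LA', LB', p1, p2, p3, p4, p5, p6⟩ :=
        ih (LA'' ++ [z]) (x :: z :: LB₂) hndLA hndLB
          (by rw [hlen']; simp only [List.length_cons]
              have := lenB''; simp only [List.length_cons] at this; omega)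
          (by omega) hprodnew hsupp' (by omega)
      exact ⟨LA', LB', p1, p2, by omega, by omega, p5, p6⟩


lemma sign_prod_disjoint_cycles : ∀ cs : List (Perm α), (∀ c ∈ cs, c.IsCycle) →
    cs.Pairwise Equiv.Perm.Disjoint →
    Equiv.Perm.sign cs.prod = (-1 : ℤˣ) ^ (cs.prod.support.card + cs.length) := by
  intro cs
  induction cs with
  | nil => simp
  | cons c cs ih =>
    intro hc hd
    have hdis := disjoint_head_prod hd
    have hcyc : c.IsCycle := hc c (by simp)
    rw [List.prod_cons, map_mul, hcyc.sign,
      ih (fun x hx => hc x (by simp [hx])) (List.pairwise_cons.1 hd).2,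
      hdis.support_mul, Finset.card_union_of_disjoint
        (Equiv.Perm.disjoint_iff_disjoint_support.1 hdis)]
    have : -(-1 : ℤˣ) ^ c.support.card = (-1) ^ (c.support.card + 1) := by
      rw [pow_succ]; simp
    rw [this, ← pow_add]
    congr 1
    simp only [List.length_cons]
    ring

/-- Key theorem : an even nonidentity permutation is a product of two ℓ-cycles for a
range of ℓ. -/
theorem key_two_cycles (g : Perm α) (hsign : Equiv.Perm.sign g = 1) (hne : g ≠ 1) :
    ∃ a0 : ℕ, 2 ≤ a0 ∧ 4 * a0 ≤ 3 * g.support.card ∧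
      ∀ ℓ : ℕ, a0 ≤ ℓ → ℓ ≤ Fintype.card α →
        ∃ x y : Perm α, x.IsCycle ∧ y.IsCycle ∧ x.support.card = ℓ ∧
          y.support.card = ℓ ∧ x * y = g := by
  obtain ⟨cs, hprod, hcyc, hdisj⟩ := g.truncCycleFactors.out
  have hcsne : cs ≠ [] := by
    intro h; rw [h] at hprod; simp at hprod; exact hne hprod.symm
  set r := cs.length with hr
  set w := g.support.card with hw
  have hrpos : 1 ≤ r := by
    cases cs with | nil => exact absurd rfl hcsne | cons _ _ => simp [hr]
  have h2r : 2 * r ≤ w := by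
    have := two_mul_length_le_card_support cs hcyc hdisj
    rwa [hprod] at this
  have hw2 : 2 ≤ w := by
    have h1 : 1 < w := Equiv.Perm.one_lt_card_support_of_ne_one hne
    omega
  have hpar : 2 ∣ w + r := by
    have hs := sign_prod_disjoint_cycles cs hcyc hdisj
    rw [hprod, hsign] at hs
    by_contra hodd
    have hoddn : Odd (w + r) := Nat.odd_iff.2 (by omega)
    rw [Odd.neg_one_pow hoddn] at hs
    exact absurd hs.symm (by decide)
  set a0 := (w + r) / 2 with ha0
  refine ⟨a0, by omega, by omega, ?_⟩
  intro ℓ hℓ1 hℓ2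
  obtain ⟨LA, LB, ndA, ndB, lenA, lenB, hfp, hun⟩ :=
    core_factorization cs hcsne hcyc hdisj a0 a0 (by omega) (by omega) (by rw [hprod]; omega)
  rw [hprod] at hfp hun
  obtain ⟨LA', LB', ndA', ndB', lenA', lenB', hfp', hsub'⟩ :=
    grow_steps g (ℓ - a0) LA LB ndA ndB (by omega) (by omega) hfp (hun ▸ subset_rfl)
      (by omega)
  have hlenA' : LA'.length = ℓ := by omega
  have hlenB' : LB'.length = ℓ := by omega
  have hLA2 : 2 ≤ LA'.length := by omega
  have hLB2 : 2 ≤ LB'.length := by omega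
  refine ⟨formPerm LA', formPerm LB', List.isCycle_formPerm ndA' hLA2,
    List.isCycle_formPerm ndB' hLB2, ?_, ?_, hfp'⟩
  · rw [List.support_formPerm_of_nodup LA' ndA'
      (fun x hx => by rw [hx] at hLA2; simp at hLA2),
      List.toFinset_card_of_nodup ndA', hlenA']
  · rw [List.support_formPerm_of_nodup LB' ndB'
      (fun x hx => by rw [hx] at hLB2; simp at hLB2),
      List.toFinset_card_of_nodup ndB', hlenB']

/-- root extraction -/
lemma cycle_root (x : Perm α) (hc : x.IsCycle) (hodd : Odd x.support.card)
    (N : ℕ) (hN : 0 < N) (hcop : Nat.Coprime N x.support.card) :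
    ∃ u : Perm α, Equiv.Perm.sign u = 1 ∧ u ^ N = x := by
  set ℓ := x.support.card with hℓ
  have hℓ2 : 2 ≤ ℓ := hc.two_le_card_support
  have hord : orderOf x = ℓ := hc.orderOf
  set t := Nat.totient ℓ with ht
  have htpos : 0 < t := Nat.totient_pos.2 (by omega)
  refine ⟨x ^ (N ^ (t - 1)), ?_, ?_⟩
  · rw [map_pow, hc.sign, ← hℓ]
    rw [Odd.neg_one_pow hodd]
    simp
  · rw [← pow_mul, ← pow_succ]
    have : t - 1 + 1 = t := by omega
    rw [this]
    have hmod : N ^ t % ℓ = 1 % ℓ := Nat.ModEq.pow_totient hcop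
    rw [← pow_mod_orderOf, hord, hmod, Nat.one_mod_eq_one.2 (by omega), pow_one]


/-- In any interval of length `(k+2)*(2*(k+2)^k)+1` there is an odd number coprime to `N`,
provided `N` has at most `k` distinct prime factors. -/
lemma interval_contains_good (k N : ℕ) (hN : 0 < N) (hk : N.primeFactors.card ≤ k) (s : ℕ) :
    ∃ ℓ : ℕ, s ≤ ℓ ∧ ℓ ≤ s + ((k + 2) * (2 * (k + 2) ^ k) + 1) ∧ Odd ℓ ∧ Nat.Coprime ℓ N := by
  classical
  set F := N.primeFactors.filter (fun p => p ≤ k + 2) with hF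
  set P := F.prod id with hP
  have hPpos : 0 < P := by
    apply Finset.prod_pos
    intro p hp
    have hp' : p ∈ N.primeFactors := Finset.mem_of_mem_filter p hp
    exact (Nat.prime_of_mem_primeFactors hp').pos
  set Q := 2 * P with hQ
  have hQpos : 0 < Q := by omega
  have hQbound : Q ≤ 2 * (k + 2) ^ k := by
    have h1 : P ≤ (k + 2) ^ F.card := by
      apply Finset.prod_le_pow_card
      intro p hp
      exact (Finset.mem_filter.1 hp).2
    have h2 : F.card ≤ k := le_trans (Finset.card_filter_le _ _) hk
    have h3 : (k + 2 : ℕ) ^ F.card ≤ (k + 2) ^ k := Nat.pow_le_pow_right (by omega) h2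
    omega
  set c := Q * (s / Q + 1) + 1 with hc
  have hQsplit : Q * (s / Q + 1) = Q * (s / Q) + Q := by ring
  have hsc : s ≤ c := by
    have h1 := Nat.div_add_mod s Q
    have h2 := Nat.mod_lt s hQpos
    omega
  have hcodd : ∀ j : ℕ, Odd (c + j * Q) := by
    intro j
    refine ⟨P * (s / Q + 1) + j * P, ?_⟩
    rw [hc, hQ]; ring
  -- a prime dividing Q cannot divide a candidate
  have hQnd : ∀ (p : ℕ), p.Prime → p ∣ Q → ∀ j, ¬ p ∣ (c + j * Q) := by
    intro p hp hpQ j hdvd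
    have h1 : p ∣ Q * (s / Q + 1) + j * Q := Dvd.dvd.add (hpQ.mul_right _) (hpQ.mul_left _)
    have h2 : (c + j * Q) - (Q * (s / Q + 1) + j * Q) = 1 := by omega
    have := Nat.dvd_sub hdvd h1
    rw [h2] at this
    exact hp.one_lt.ne' (Nat.dvd_one.1 this)
  by_cases hgood : ∃ j, j < k + 2 ∧ Nat.Coprime (c + j * Q) N
  · obtain ⟨j, hj, hcop⟩ := hgood
    refine ⟨c + j * Q, by omega, ?_, hcodd j, hcop⟩
    have h1 : c ≤ s + Q + 1 := by
      have h0 := Nat.div_add_mod s Q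
      omega
    have h2 : j * Q ≤ (k + 1) * Q := by
      apply Nat.mul_le_mul_right
      omega
    have h3 : Q + 1 + (k + 1) * Q = (k + 2) * Q + 1 := by ring
    have h4 : (k + 2) * Q ≤ (k + 2) * (2 * (k + 2) ^ k) := Nat.mul_le_mul_left _ hQbound
    omega
  · exfalso
    push_neg at hgood
    have hbad : ∀ j : ℕ, ∃ p : ℕ, j < k + 2 →
        p.Prime ∧ p ∣ (c + j * Q) ∧ p ∣ N := by
      intro j
      by_cases hj : j < k + 2
      · obtain ⟨p, hp, hp1, hp2⟩ := Nat.Prime.not_coprime_iff_dvd.1 (hgood j hj)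
        exact ⟨p, fun _ => ⟨hp, hp1, hp2⟩⟩
      · exact ⟨0, fun h => absurd h hj⟩
    choose pf hpf using hbad
    have hmaps : ∀ j ∈ Finset.range (k + 2), pf j ∈ N.primeFactors := by
      intro j hj
      rw [Finset.mem_range] at hj
      obtain ⟨h1, h2, h3⟩ := hpf j hj
      exact Nat.mem_primeFactors.2 ⟨h1, h3, by omega⟩
    have hinj : Set.InjOn pf (Finset.range (k + 2)) := by
      intro j hj j' hj' heq
      rw [Finset.coe_range, Set.mem_Iio] at hj hj'
      by_contra hne
      -- wlog j < j'
      rcases Nat.lt_or_ge j j' with hlt | hge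
      · obtain ⟨h1, h2, h3⟩ := hpf j hj
        obtain ⟨h1', h2', h3'⟩ := hpf j' hj'
        rw [heq] at h2
        have hdvd : pf j' ∣ (c + j' * Q) - (c + j * Q) := Nat.dvd_sub h2' h2
        have hsub : (c + j' * Q) - (c + j * Q) = (j' - j) * Q := by
          have : j * Q ≤ j' * Q := Nat.mul_le_mul_right _ (by omega)
          calc (c + j' * Q) - (c + j * Q) = j' * Q - j * Q := by omega
            _ = (j' - j) * Q := by rw [Nat.sub_mul]
        rw [hsub] at hdvd
        rcases (Nat.Prime.dvd_mul h1').1 hdvd with hd | hd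
        · have hle := Nat.le_of_dvd (by omega) hd
          -- pf j' > k + 2 since it does not divide Q but divides N...
          have hplarge : k + 2 < pf j' := by
            by_contra hsmall
            push_neg at hsmall
            have hmem : pf j' ∈ F := Finset.mem_filter.2
              ⟨Nat.mem_primeFactors.2 ⟨h1', h3', by omega⟩, hsmall⟩
            have hdQ : pf j' ∣ Q := Dvd.dvd.mul_left (Finset.dvd_prod_of_mem id hmem) 2
            exact hQnd _ h1' hdQ j' h2'
          omega
        · exact hQnd _ h1' hd j' h2'
      · -- symmetric
        obtain ⟨h1, h2, h3⟩ := hpf j hj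
        obtain ⟨h1', h2', h3'⟩ := hpf j' hj'
        rw [heq] at h2
        have hdvd : pf j' ∣ (c + j * Q) - (c + j' * Q) := Nat.dvd_sub h2 h2'
        have hlt : j' < j := by omega
        have hsub : (c + j * Q) - (c + j' * Q) = (j - j') * Q := by
          have : j' * Q ≤ j * Q := Nat.mul_le_mul_right _ (by omega)
          calc (c + j * Q) - (c + j' * Q) = j * Q - j' * Q := by omega
            _ = (j - j') * Q := by rw [Nat.sub_mul]
        rw [hsub] at hdvd
        rcases (Nat.Prime.dvd_mul h1').1 hdvd with hd | hd
        · have hle := Nat.le_of_dvd (by omega) hd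
          have hplarge : k + 2 < pf j' := by
            by_contra hsmall
            push_neg at hsmall
            have hmem : pf j' ∈ F := Finset.mem_filter.2
              ⟨Nat.mem_primeFactors.2 ⟨h1', h3', by omega⟩, hsmall⟩
            have hdQ : pf j' ∣ Q := Dvd.dvd.mul_left (Finset.dvd_prod_of_mem id hmem) 2
            exact hQnd _ h1' hdQ j' h2'
          omega
        · exact hQnd _ h1' hd j' h2'
    have hcard := Finset.card_le_card_of_injOn pf hmaps hinj
    rw [Finset.card_range] at hcard
    omega


/-- For every positive integer `k` there is `f = f(k)` such that for all `n ≥ f` and all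
positive integers `N` with at most `k` distinct prime divisors, the word map
`(x, y) ↦ x^N y^N` is surjective on `A_n`. -/
theorem stmt_8 (k : ℕ) (hk : 0 < k) :
    ∃ f : ℕ, 0 < f ∧ ∀ n : ℕ, f ≤ n → ∀ N : ℕ, 0 < N → N.primeFactors.card ≤ k →
      ∀ g : alternatingGroup (Fin n),
        ∃ x y : alternatingGroup (Fin n), x ^ N * y ^ N = g := by
  set M := (k + 2) * (2 * (k + 2) ^ k) + 1 with hM
  refine ⟨4 * M + 20, by omega, ?_⟩
  intro n hn N hN hNk g
  rcases eq_or_ne (g : Perm (Fin n)) 1 with hg1 | hg1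
  · refine ⟨1, 1, ?_⟩
    apply Subtype.ext
    simpa using hg1.symm
  · have hsign : Equiv.Perm.sign (g : Perm (Fin n)) = 1 :=
      (Equiv.Perm.mem_alternatingGroup).1 g.2
    obtain ⟨a0, ha02, ha0b, hrealize⟩ := key_two_cycles (g : Perm (Fin n)) hsign hg1
    have hsupcard : ((g : Perm (Fin n)).support.card : ℕ) ≤ n := by
      have := Finset.card_le_univ (g : Perm (Fin n)).support
      simpa using this
    obtain ⟨ℓ, hl1, hl2, hlodd, hlcop⟩ := interval_contains_good k N hN hNk a0
    have hlen : ℓ ≤ Fintype.card (Fin n) := by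
      rw [Fintype.card_fin]
      omega
    obtain ⟨x, y, hxc, hyc, hxcard, hycard, hxy⟩ := hrealize ℓ hl1 hlen
    obtain ⟨u, hu1, hu2⟩ := cycle_root x hxc (by rw [hxcard]; exact hlodd) N hN
      (by rw [hxcard]; exact hlcop.symm)
    obtain ⟨v, hv1, hv2⟩ := cycle_root y hyc (by rw [hycard]; exact hlodd) N hN
      (by rw [hycard]; exact hlcop.symm)
    refine ⟨⟨u, Equiv.Perm.mem_alternatingGroup.2 hu1⟩,
      ⟨v, Equiv.Perm.mem_alternatingGroup.2 hv1⟩, ?_⟩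
    apply Subtype.ext
    show (((⟨u, _⟩ : alternatingGroup (Fin n)) ^ N * ⟨v, _⟩ ^ N :
      alternatingGroup (Fin n)) : Perm (Fin n)) = (g : Perm (Fin n))
    rw [Subgroup.coe_mul, SubgroupClass.coe_pow, SubgroupClass.coe_pow]
    show u ^ N * v ^ N = (g : Perm (Fin n))
    rw [hu2, hv2, hxy]
end

section
/- Let G be a finite group in which every element is real (i.e. every g ∈ G is conjugate in G to g⁻¹), and let N be an odd positive integer. Then every g ∈ G can be written as g = x^N * y^N for some x, y ∈ G. -/
/-- If every element of the finite group `G` is real and `N` is odd, then the word map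
`(x, y) ↦ x^N y^N` is surjective on `G`. -/
theorem stmt_10 (G : Type*) [Group G] [Finite G]
    (hreal : ∀ g : G, ∃ x : G, x * g * x⁻¹ = g⁻¹)
    (N : ℕ) (hpos : 0 < N) (hodd : Odd N) (g : G) :
    ∃ x y : G, x ^ N * y ^ N = g := by
  obtain ⟨h, hh⟩ := hreal g
  obtain ⟨k, hk⟩ := hodd
  have h1 : h * g = g⁻¹ * h := by
    have := hh
    rw [mul_inv_eq_iff_eq_mul] at this
    rw [this]
  have hsq : (g * h) ^ 2 = h ^ 2 := by
    rw [pow_two, pow_two, mul_assoc, ← mul_assoc h g h, h1]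
    group
  have hN : (g * h) ^ N = h ^ (2 * k) * (g * h) := by
    rw [hk, pow_add, pow_mul, hsq, pow_mul, pow_one]
  refine ⟨(h ^ (2 * k))⁻¹ * (g * h) * h ^ (2 * k), h⁻¹, ?_⟩
  have hx : ((h ^ (2 * k))⁻¹ * (g * h) * h ^ (2 * k)) ^ N
      = (h ^ (2 * k))⁻¹ * (g * h) ^ N * h ^ (2 * k) := by
    simpa using conj_pow (a := (h ^ (2 * k))⁻¹) (b := g * h) (i := N)
  rw [hx, hN, inv_pow, hk]
  group
end

section
/- In the group G = SL₂(𝔽₅) of 2×2 matrices of determinant 1 over the field with 5 elements, no element of order 5 can be written as x^20 * y^20 with x, y ∈ G; in particular, the word map (x,y) ↦ x^20 y^20 is not surjective on SL₂(𝔽₅). -/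
abbrev M5 : Type := Matrix (Fin 2) (Fin 2) (ZMod 5)
abbrev G5 := Matrix.SpecialLinearGroup (Fin 2) (ZMod 5)

lemma five_eq_zero : (5 : M5) = 0 := by decide

lemma m2nz : (1 : M5) + 1 ≠ 0 := by decide

lemma cases5 : ∀ t : ZMod 5, t = 0 ∨ t = 1 ∨ t = 2 ∨ t = 3 ∨ t = 4 := by decide

lemma CH (A : M5) (hd : A.det = 1) : A*A + 1 = (A 0 0 + A 1 1) • A := by
  have h := Matrix.det_fin_two A
  rw [hd] at h
  ext i j
  fin_cases i <;> fin_cases j <;>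
    simp [Matrix.mul_apply, Fin.sum_univ_two, Matrix.smul_apply] <;> ring_nf <;>
    linear_combination h

lemma s2 (A : M5) : (2 : ZMod 5) • A = 2*A := by
  rw [show ((2:ZMod 5)) = ((2:ℕ) : ZMod 5) from by norm_num,
    Nat.cast_smul_eq_nsmul, nsmul_eq_mul]
  norm_num

lemma s3 (A : M5) : (3 : ZMod 5) • A = 3*A := by
  rw [show ((3:ZMod 5)) = ((3:ℕ) : ZMod 5) from by norm_num,
    Nat.cast_smul_eq_nsmul, nsmul_eq_mul]
  norm_num

lemma s4 (A : M5) : (4 : ZMod 5) • A = 4*A := by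
  rw [show ((4:ZMod 5)) = ((4:ℕ) : ZMod 5) from by norm_num,
    Nat.cast_smul_eq_nsmul, nsmul_eq_mul]
  norm_num

lemma mul3_eq_zero {C : M5} (h : 3*C = 0) : C = 0 := by
  calc C = 2*(3*C) - 5*C := by noncomm_ring
  _ = 0 := by rw [h, five_eq_zero]; noncomm_ring

lemma pow20 (A : M5) (hd : A.det = 1) : A^20 = 1 ∨ A^20 * A^20 + A^20 + 1 = 0 := by
  have h := CH A hd
  rcases cases5 (A 0 0 + A 1 1) with ht | ht | ht | ht | ht <;> rw [ht] at h
  · rw [zero_smul] at h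
    left
    have e : A^20 - 1 = (A*A + 1) * (A^18 - A^16 + A^14 - A^12 + A^10 - A^8 + A^6 - A^4 + A^2 - 1) := by
      noncomm_ring
    rw [h, zero_mul] at e
    exact sub_eq_zero.mp e
  · rw [one_smul] at h
    have hA : A*A - A + 1 = 0 := by
      rw [show A*A - A + 1 = (A*A + 1) - A from by noncomm_ring, h, sub_self]
    right
    have h6 : A^6 = 1 := by
      have e : A^6 - 1 = (A*A - A + 1) * (A^4 + A^3 - A - 1) := by noncomm_ring
      rw [hA, zero_mul] at e
      exact sub_eq_zero.mp e
    have h20 : A^20 = A^2 := by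
      calc A^20 = (A^6)^3 * A^2 := by noncomm_ring
      _ = A^2 := by rw [h6, one_pow, one_mul]
    rw [h20]
    have e2 : A^2*A^2 + A^2 + 1 = (A*A - A + 1) * (A*A + A + 1) := by noncomm_ring
    rw [e2, hA, zero_mul]
  · rw [s2] at h
    have hA : A*A - 2*A + 1 = 0 := by
      rw [show A*A - 2*A + 1 = (A*A + 1) - 2*A from by noncomm_ring, h, sub_self]
    left
    have h5A : A^5 = 1 := by
      have e : A^5 - 1 = (A*A - 2*A + 1) * (A^3 + 2*A^2 + 3*A + 4) + 5*(A - 1) := by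
        noncomm_ring
      rw [hA, zero_mul, five_eq_zero, zero_mul, zero_add] at e
      exact sub_eq_zero.mp e
    calc A^20 = (A^5)^4 := by noncomm_ring
    _ = 1 := by rw [h5A, one_pow]
  · rw [s3] at h
    have hA : A*A - 3*A + 1 = 0 := by
      rw [show A*A - 3*A + 1 = (A*A + 1) - 3*A from by noncomm_ring, h, sub_self]
    left
    have h5A : A^5 = -1 := by
      have e : A^5 + 1 = (A*A - 3*A + 1) * (A^3 + 3*A^2 + 8*A + 21) + 5*(11*A - 4*1) := by
        noncomm_ring
      rw [hA, zero_mul, zero_add, five_eq_zero, zero_mul] at e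
      exact eq_neg_of_add_eq_zero_left e
    calc A^20 = (A^5)^4 := by noncomm_ring
    _ = 1 := by rw [h5A]; noncomm_ring
  · rw [s4] at h
    have hA : A*A - 4*A + 1 = 0 := by
      rw [show A*A - 4*A + 1 = (A*A + 1) - 4*A from by noncomm_ring, h, sub_self]
    right
    have h3 : A^3 = 1 := by
      have e : A^3 - 1 = (A*A - 4*A + 1)*(A + 4) + 5*(3*A - 1) := by noncomm_ring
      rw [hA, zero_mul, five_eq_zero, zero_mul, zero_add] at e
      exact sub_eq_zero.mp e
    have h20 : A^20 = A^2 := by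
      calc A^20 = (A^3)^6 * A^2 := by noncomm_ring
      _ = A^2 := by rw [h3, one_pow, one_mul]
    rw [h20]
    have e2 : A^2*A^2 + A^2 + 1 = (A*A - 4*A + 1)*(A*A + 4*A + 16) + 5*(12*A - 3*1) := by
      noncomm_ring
    rw [e2, hA, zero_mul, zero_add, five_eq_zero, zero_mul]

lemma ord5 (A : M5) (hd : A.det = 1) (h5 : A^5 = 1) (hne : A ≠ 1) :
    A*A + 1 = 2*A := by
  have h := CH A hd
  rcases cases5 (A 0 0 + A 1 1) with ht | ht | ht | ht | ht <;> rw [ht] at h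
  · exfalso
    rw [zero_smul] at h
    have hA : A*A = -1 := eq_neg_of_add_eq_zero_left h
    have e : A^5 = (A*A)*(A*A)*A := by noncomm_ring
    rw [hA, h5, neg_mul_neg, one_mul, one_mul] at e
    exact hne e.symm
  · exfalso
    rw [one_smul] at h
    have hA : A*A - A + 1 = 0 := by
      rw [show A*A - A + 1 = (A*A + 1) - A from by noncomm_ring, h, sub_self]
    have h6 : A^6 = 1 := by
      have e : A^6 - 1 = (A*A - A + 1) * (A^4 + A^3 - A - 1) := by noncomm_ring
      rw [hA, zero_mul] at e
      exact sub_eq_zero.mp e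
    have e : A^6 = A^5 * A := by noncomm_ring
    rw [h6, h5, one_mul] at e
    exact hne e.symm
  · rw [s2] at h; exact h
  · exfalso
    rw [s3] at h
    have hA : A*A - 3*A + 1 = 0 := by
      rw [show A*A - 3*A + 1 = (A*A + 1) - 3*A from by noncomm_ring, h, sub_self]
    have h5A : A^5 = -1 := by
      have e : A^5 + 1 = (A*A - 3*A + 1) * (A^3 + 3*A^2 + 8*A + 21) + 5*(11*A - 4*1) := by
        noncomm_ring
      rw [hA, zero_mul, zero_add, five_eq_zero, zero_mul] at e
      exact eq_neg_of_add_eq_zero_left e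
    rw [h5] at h5A
    have h2 : (1:M5) + 1 = 0 := by
      nth_rewrite 1 [h5A]
      exact neg_add_cancel 1
    exact m2nz h2
  · exfalso
    rw [s4] at h
    have hA : A*A - 4*A + 1 = 0 := by
      rw [show A*A - 4*A + 1 = (A*A + 1) - 4*A from by noncomm_ring, h, sub_self]
    have h3 : A^3 = 1 := by
      have e : A^3 - 1 = (A*A - 4*A + 1)*(A + 4) + 5*(3*A - 1) := by noncomm_ring
      rw [hA, zero_mul, five_eq_zero, zero_mul, zero_add] at e
      exact sub_eq_zero.mp e
    have e : A^6 = A^5 * A := by noncomm_ring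
    have e2 : A^6 = (A^3)*(A^3) := by noncomm_ring
    rw [h3, one_mul] at e2
    rw [h5, one_mul] at e
    exact hne (e.symm.trans e2)

lemma key1 : ∀ p q r s : ZMod 5, p*p + q*r + p + 1 = 0 → p*q + q*s + q = 0 →
    r*p + s*r + r = 0 → r*q + s*s + s + 1 = 0 → p*s - q*r = 1 → p + s = 4 := by decide

lemma traceN : ∀ α β γ δ : ZMod 5, α*α + β*γ = 0 → α*β + β*δ = 0 →
    γ*α + δ*γ = 0 → γ*β + δ*δ = 0 → δ = -α := by decide

set_option maxHeartbeats 1000000 in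
lemma key2 : ∀ p q r α β γ : ZMod 5, p*(4-p) - q*r = 1 → α*α + β*γ = 0 →
    p*α + q*γ + r*β + (4-p)*(-α) = 0 → α = 0 ∧ β = 0 ∧ γ = 0 := by decide

lemma key (a b : M5) (hda : a.det = 1) (hdb : b.det = 1)
    (ha : a*a + a + 1 = 0) (hb : b*b + b + 1 = 0)
    (hg : (a*b)*(a*b) + 1 = 2*(a*b)) : a*b = 1 := by
  have h5z : (5:ZMod 5) = 0 := by decide
  have hd2a : a 0 0 * a 1 1 - a 0 1 * a 1 0 = 1 := by
    rw [← Matrix.det_fin_two]; exact hda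
  have hd2b : b 0 0 * b 1 1 - b 0 1 * b 1 0 = 1 := by
    rw [← Matrix.det_fin_two]; exact hdb
  have ea00 : a 0 0 * a 0 0 + a 0 1 * a 1 0 + a 0 0 + 1 = 0 := by
    have h0 := congrFun (congrFun ha 0) 0
    simp [Matrix.mul_apply, Fin.sum_univ_two, Matrix.add_apply, Matrix.one_apply,
      Matrix.zero_apply] at h0
    linear_combination h0
  have ea01 : a 0 0 * a 0 1 + a 0 1 * a 1 1 + a 0 1 = 0 := by
    have h0 := congrFun (congrFun ha 0) 1
    simp [Matrix.mul_apply, Fin.sum_univ_two, Matrix.add_apply, Matrix.one_apply,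
      Matrix.zero_apply] at h0
    linear_combination h0
  have ea10 : a 1 0 * a 0 0 + a 1 1 * a 1 0 + a 1 0 = 0 := by
    have h0 := congrFun (congrFun ha 1) 0
    simp [Matrix.mul_apply, Fin.sum_univ_two, Matrix.add_apply, Matrix.one_apply,
      Matrix.zero_apply] at h0
    linear_combination h0
  have ea11 : a 1 0 * a 0 1 + a 1 1 * a 1 1 + a 1 1 + 1 = 0 := by
    have h0 := congrFun (congrFun ha 1) 1
    simp [Matrix.mul_apply, Fin.sum_univ_two, Matrix.add_apply, Matrix.one_apply,
      Matrix.zero_apply] at h0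
    linear_combination h0
  have eb00 : b 0 0 * b 0 0 + b 0 1 * b 1 0 + b 0 0 + 1 = 0 := by
    have h0 := congrFun (congrFun hb 0) 0
    simp [Matrix.mul_apply, Fin.sum_univ_two, Matrix.add_apply, Matrix.one_apply,
      Matrix.zero_apply] at h0
    linear_combination h0
  have eb01 : b 0 0 * b 0 1 + b 0 1 * b 1 1 + b 0 1 = 0 := by
    have h0 := congrFun (congrFun hb 0) 1
    simp [Matrix.mul_apply, Fin.sum_univ_two, Matrix.add_apply, Matrix.one_apply,
      Matrix.zero_apply] at h0
    linear_combination h0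
  have eb10 : b 1 0 * b 0 0 + b 1 1 * b 1 0 + b 1 0 = 0 := by
    have h0 := congrFun (congrFun hb 1) 0
    simp [Matrix.mul_apply, Fin.sum_univ_two, Matrix.add_apply, Matrix.one_apply,
      Matrix.zero_apply] at h0
    linear_combination h0
  have eb11 : b 1 0 * b 0 1 + b 1 1 * b 1 1 + b 1 1 + 1 = 0 := by
    have h0 := congrFun (congrFun hb 1) 1
    simp [Matrix.mul_apply, Fin.sum_univ_two, Matrix.add_apply, Matrix.one_apply,
      Matrix.zero_apply] at h0
    linear_combination h0
  have hta : a 0 0 + a 1 1 = 4 :=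
    key1 _ _ _ _ ea00 (by linear_combination ea01) (by linear_combination ea10)
      (by linear_combination ea11) hd2a
  have htb : b 0 0 + b 1 1 = 4 :=
    key1 _ _ _ _ eb00 (by linear_combination eb01) (by linear_combination eb10)
      (by linear_combination eb11) hd2b
  obtain ⟨n, hn⟩ : ∃ n : M5, a*b = n + 1 := ⟨a*b - 1, by noncomm_ring⟩
  have hn2 : n*n = 0 := by
    calc n*n = ((n+1)*(n+1) + 1) - 2*(n+1) := by noncomm_ring
    _ = ((a*b)*(a*b) + 1) - 2*(a*b) := by rw [← hn]
    _ = 2*(a*b) - 2*(a*b) := by rw [hg]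
    _ = 0 := sub_self _
  have g00 : n 0 0 * n 0 0 + n 0 1 * n 1 0 = 0 := by
    have h0 := congrFun (congrFun hn2 0) 0
    simp [Matrix.mul_apply, Fin.sum_univ_two, Matrix.zero_apply] at h0
    linear_combination h0
  have g01 : n 0 0 * n 0 1 + n 0 1 * n 1 1 = 0 := by
    have h0 := congrFun (congrFun hn2 0) 1
    simp [Matrix.mul_apply, Fin.sum_univ_two, Matrix.zero_apply] at h0
    linear_combination h0
  have g10 : n 1 0 * n 0 0 + n 1 1 * n 1 0 = 0 := by
    have h0 := congrFun (congrFun hn2 1) 0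
    simp [Matrix.mul_apply, Fin.sum_univ_two, Matrix.zero_apply] at h0
    linear_combination h0
  have g11 : n 1 0 * n 0 1 + n 1 1 * n 1 1 = 0 := by
    have h0 := congrFun (congrFun hn2 1) 1
    simp [Matrix.mul_apply, Fin.sum_univ_two, Matrix.zero_apply] at h0
    linear_combination h0
  have hδ : n 1 1 = - n 0 0 :=
    traceN _ _ _ _ g00 (by linear_combination g01) (by linear_combination g10)
      (by linear_combination g11)
  have hδ' : n 0 0 + n 1 1 = 0 := by linear_combination hδ
  have haa : a*a = -a - 1 := by
    calc a*a = (a*a + a + 1) - a - 1 := by noncomm_ring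
    _ = -a - 1 := by rw [ha]; noncomm_ring
  have h1 : a*n = -n - b - a - 1 := by
    calc a*n = a*(n+1) - a := by noncomm_ring
    _ = a*(a*b) - a := by rw [← hn]
    _ = (a*a)*b - a := by noncomm_ring
    _ = (-a - 1)*b - a := by rw [haa]
    _ = -(a*b) - b - a := by noncomm_ring
    _ = -(n+1) - b - a := by rw [hn]
    _ = -n - b - a - 1 := by noncomm_ring
  have f00 : a 0 0 * n 0 0 + a 0 1 * n 1 0 = -(n 0 0) - b 0 0 - a 0 0 - 1 := by
    have h0 := congrFun (congrFun h1 0) 0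
    simp [Matrix.mul_apply, Fin.sum_univ_two, Matrix.sub_apply, Matrix.neg_apply,
      Matrix.one_apply] at h0
    linear_combination h0
  have f11 : a 1 0 * n 0 1 + a 1 1 * n 1 1 = -(n 1 1) - b 1 1 - a 1 1 - 1 := by
    have h0 := congrFun (congrFun h1 1) 1
    simp [Matrix.mul_apply, Fin.sum_univ_two, Matrix.sub_apply, Matrix.neg_apply,
      Matrix.one_apply] at h0
    linear_combination h0
  have hE : a 0 0 * n 0 0 + a 0 1 * n 1 0 + a 1 0 * n 0 1 + a 1 1 * n 1 1 = 0 := by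
    linear_combination f00 + f11 - hta - htb - hδ' - 2*h5z
  obtain ⟨hα, hβ, hγ⟩ :=
    key2 (a 0 0) (a 0 1) (a 1 0) (n 0 0) (n 0 1) (n 1 0)
      (by linear_combination hd2a - (a 0 0) * hta)
      g00
      (by linear_combination hE + (n 0 0) * hta - (a 1 1) * hδ')
  have hδ0 : n 1 1 = 0 := by rw [hδ, hα, neg_zero]
  have hn0 : n = 0 := by
    ext i j
    fin_cases i <;> fin_cases j <;>
      first | exact hα | exact hβ | exact hγ | exact hδ0
  rw [hn, hn0, zero_add]

def g0 : G5 := ⟨!![1,1;0,1], by simp [Matrix.det_fin_two_of]⟩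

lemma noword : ∀ g : G5, orderOf g = 5 → ∀ x y : G5, x ^ 20 * y ^ 20 ≠ g := by
  intro g hord x y heq
  have hg5 : g^5 = 1 := by
    have := pow_orderOf_eq_one g; rwa [hord] at this
  have hgne : g ≠ 1 := by
    intro h; rw [h, orderOf_one] at hord; norm_num at hord
  have hGne : (g : M5) ≠ 1 := fun h => hgne (Subtype.ext h)
  have hgpow : ((g : M5))^5 = 1 := by
    have hc := congrArg (fun z : G5 => (z : M5)) hg5
    simpa using hc
  have hUni : (g:M5)*(g:M5) + 1 = 2*(g:M5) := ord5 _ g.prop hgpow hGne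
  have hdax : ((x:M5)^20).det = 1 := by rw [Matrix.det_pow, x.prop, one_pow]
  have hdby : ((y:M5)^20).det = 1 := by rw [Matrix.det_pow, y.prop, one_pow]
  have hABg : (x:M5)^20 * (y:M5)^20 = (g:M5) := by
    have hc := congrArg (fun z : G5 => (z : M5)) heq
    simpa using hc
  rcases pow20 (x:M5) x.prop with hA | hA <;> rcases pow20 (y:M5) y.prop with hB | hB
  · rw [hA, hB, one_mul] at hABg
    exact hGne hABg.symm
  · rw [hA, one_mul] at hABg
    rw [← hABg] at hUni
    have h3B : 3*((y:M5)^20) = 0 := by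
      calc 3*((y:M5)^20)
          = ((y:M5)^20*((y:M5)^20) + (y:M5)^20 + 1) -
            (((y:M5)^20*((y:M5)^20) + 1) - 2*((y:M5)^20)) := by noncomm_ring
      _ = 0 - (2*((y:M5)^20) - 2*((y:M5)^20)) := by rw [hB, hUni]
      _ = 0 := by noncomm_ring
    have hB0 : ((y:M5)^20) = 0 := mul3_eq_zero h3B
    rw [hB0, Matrix.det_zero] at hdby
    exact absurd hdby (by decide)
  · rw [hB, mul_one] at hABg
    rw [← hABg] at hUni
    have h3A : 3*((x:M5)^20) = 0 := by
      calc 3*((x:M5)^20)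
          = ((x:M5)^20*((x:M5)^20) + (x:M5)^20 + 1) -
            (((x:M5)^20*((x:M5)^20) + 1) - 2*((x:M5)^20)) := by noncomm_ring
      _ = 0 - (2*((x:M5)^20) - 2*((x:M5)^20)) := by rw [hA, hUni]
      _ = 0 := by noncomm_ring
    have hA0 : ((x:M5)^20) = 0 := mul3_eq_zero h3A
    rw [hA0, Matrix.det_zero] at hdax
    exact absurd hdax (by decide)
  · have hUni' : ((x:M5)^20 * (y:M5)^20) * ((x:M5)^20 * (y:M5)^20) + 1
        = 2*((x:M5)^20 * (y:M5)^20) := by rw [hABg]; exact hUni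
    have hone := key _ _ hdax hdby hA hB hUni'
    exact hGne (hABg.symm.trans hone)

/-- In `SL₂(𝔽₅)`, the word map `(x, y) ↦ x^20 y^20` misses every element of order `5`;
in particular it is not surjective. -/
theorem stmt_12 :
    (∀ g : Matrix.SpecialLinearGroup (Fin 2) (ZMod 5), orderOf g = 5 →
      ∀ x y : Matrix.SpecialLinearGroup (Fin 2) (ZMod 5), x ^ 20 * y ^ 20 ≠ g) ∧
    ¬ (∀ g : Matrix.SpecialLinearGroup (Fin 2) (ZMod 5),
        ∃ x y : Matrix.SpecialLinearGroup (Fin 2) (ZMod 5), x ^ 20 * y ^ 20 = g) := by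
  constructor
  · exact noword
  · intro hsurj
    haveI : Fact (Nat.Prime 5) := ⟨by norm_num⟩
    have hord : orderOf g0 = 5 := by
      refine orderOf_eq_prime ?_ ?_
      · exact Subtype.ext (by rw [Matrix.SpecialLinearGroup.coe_pow]; decide)
      · intro h
        have hc := congrArg (fun z : G5 => (z : M5)) h
        revert hc
        decide
    obtain ⟨x, y, hxy⟩ := hsurj g0
    exact noword g0 hord x y hxy
end

section
/- For every integer n ≥ 5, every element of the alternating group A_n is a product of two 2-elements of A_n. -/
open Equiv Equiv.Perm

/-- Reflection of the interval `[a,b]` inside `Fin n`. -/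
def pref (n : ℕ) : ℕ → ℕ → Equiv.Perm (Fin n)
  | a, b =>
    if h : a < b ∧ b < n then
      Equiv.swap ⟨a, h.1.trans h.2⟩ ⟨b, h.2⟩ * pref n (a+1) (b-1)
    else 1
  termination_by a b => b - a
  decreasing_by omega

lemma pref_apply {n : ℕ} : ∀ (d a b : ℕ), b - a ≤ d → ∀ (hb : b < n), ∀ j : Fin n,
    (pref n a b) j = if h : a ≤ (j:ℕ) ∧ (j:ℕ) ≤ b then ⟨a + b - j, by omega⟩ else j := by
  intro d
  induction d with
  | zero =>
    intro a b hd hb j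
    rw [pref]
    rw [dif_neg (by omega)]
    split
    · next h => ext; simp <;> omega
    · rfl
  | succ d ih =>
    intro a b hd hb j
    rw [pref]
    by_cases hab : a < b
    · rw [dif_pos ⟨hab, hb⟩]
      simp only [Equiv.Perm.mul_apply]
      rw [ih (a+1) (b-1) (by omega) (by omega)]
      split
      · next h =>
        -- a+1 ≤ j ≤ b-1 : inner value is a+1+(b-1)-j, not a or b
        rw [Equiv.swap_apply_of_ne_of_ne (by simp [Fin.ext_iff]; omega) (by simp [Fin.ext_iff]; omega)]
        rw [dif_pos (by omega)]
        ext; simp <;> omega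
      · next h =>
        by_cases hja : (j:ℕ) = a
        · have : j = (⟨a, hab.trans hb⟩ : Fin n) := by ext; simpa using hja
          rw [this, Equiv.swap_apply_left, dif_pos (by simp; omega)]
          ext; simp <;> omega
        · by_cases hjb : (j:ℕ) = b
          · have : j = (⟨b, hb⟩ : Fin n) := by ext; simpa using hjb
            rw [this, Equiv.swap_apply_right, dif_pos (by simp; omega)]
            ext; simp <;> omega
          · rw [Equiv.swap_apply_of_ne_of_ne (by simp [Fin.ext_iff]; omega) (by simp [Fin.ext_iff]; omega)]
            rw [dif_neg (by omega)]
    · rw [dif_neg (by omega)]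
      split
      · next h => ext; simp <;> omega
      · rfl

lemma pref_apply' {n a b : ℕ} (hb : b < n) (j : Fin n) :
    (pref n a b) j = if h : a ≤ (j:ℕ) ∧ (j:ℕ) ≤ b then ⟨a + b - j, by omega⟩ else j :=
  pref_apply (b - a) a b le_rfl hb j


lemma pref_val {n a b : ℕ} (hb : b < n) (j : Fin n) :
    ((pref n a b j : Fin n) : ℕ) = if a ≤ (j:ℕ) ∧ (j:ℕ) ≤ b then a + b - j else (j:ℕ) := by
  rw [pref_apply' hb]
  split <;> rfl

lemma pref_sq {n a b : ℕ} (hb : b < n) : pref n a b * pref n a b = 1 := by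
  ext j
  rw [Equiv.Perm.mul_apply, Equiv.Perm.one_apply]
  rw [pref_val hb, pref_val hb]
  split_ifs <;> omega

lemma pref_support {n a b : ℕ} (hb : b < n) :
    (pref n a b).support ⊆ Finset.filter (fun j : Fin n => a ≤ (j:ℕ) ∧ (j:ℕ) ≤ b) Finset.univ := by
  intro j hj
  simp only [Equiv.Perm.mem_support] at hj
  simp only [Finset.mem_filter, Finset.mem_univ, true_and]
  by_contra h
  rw [pref_apply' hb, dif_neg h] at hj
  exact hj rfl

lemma pref_sign {n : ℕ} : ∀ (d a b : ℕ), b - a ≤ d → b < n →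
    Equiv.Perm.sign (pref n a b) = (-1) ^ ((b - a + 1) / 2) := by
  intro d
  induction d with
  | zero =>
    intro a b hd hb
    rw [pref, dif_neg (by omega)]
    have : (b - a + 1) / 2 = 0 := by omega
    simp [this]
  | succ d ih =>
    intro a b hd hb
    rw [pref]
    by_cases hab : a < b
    · rw [dif_pos ⟨hab, hb⟩]
      rw [map_mul, ih (a+1) (b-1) (by omega) (by omega)]
      rw [Equiv.Perm.sign_swap (by simp [Fin.ext_iff]; omega)]
      have h2 : (b - a + 1) / 2 = (b - 1 - (a + 1) + 1) / 2 + 1 := by omega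
      rw [h2, pow_succ]
      exact (mul_comm _ _)
    · rw [dif_neg (by omega)]
      have : (b - a + 1) / 2 = 0 := by omega
      simp [this]

/-- The cycle `(a, a+1, ..., b)` inside `Fin n`. -/
def pcyc (n a b : ℕ) : Equiv.Perm (Fin n) := pref n a b * pref n a (b - 1)

lemma pcyc_val {n a b : ℕ} (hab : a ≤ b) (hb : b < n) (j : Fin n) :
    ((pcyc n a b) j : ℕ) = if a ≤ (j:ℕ) ∧ (j:ℕ) < b then (j:ℕ) + 1
      else if (j:ℕ) = b then a else (j:ℕ) := by
  rw [pcyc, Equiv.Perm.mul_apply, pref_val hb, pref_val (show b - 1 < n by omega)]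
  split_ifs <;> omega

lemma succ_mod {L x : ℕ} (hL : 0 < L) :
    (x + 1) % L = if x % L = L - 1 then 0 else x % L + 1 := by
  have hr : x % L < L := Nat.mod_lt _ hL
  rw [Nat.add_mod]
  by_cases h : x % L = L - 1
  · rw [if_pos h, h]
    rcases Nat.lt_or_ge 1 L with h1 | h1
    · have e1 : 1 % L = 1 := Nat.mod_eq_of_lt h1
      rw [e1]
      have e2 : L - 1 + 1 = L := by omega
      rw [e2, Nat.mod_self]
    · have e1 : L = 1 := by omega
      subst e1; simp
  · rw [if_neg h]
    have hL2 : 2 ≤ L := by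
      rcases Nat.lt_or_ge 1 L with h1 | h1
      · omega
      · exfalso; apply h
        have e1 : L = 1 := by omega
        subst e1; omega
    have e1 : 1 % L = 1 := Nat.mod_eq_of_lt (by omega)
    rw [e1]
    exact Nat.mod_eq_of_lt (by omega)

lemma pcyc_pow_val {n a b : ℕ} (hab : a ≤ b) (hb : b < n) :
    ∀ (k : ℕ) (j : Fin n), (((pcyc n a b ^ k) j : Fin n) : ℕ) =
      if a ≤ (j:ℕ) ∧ (j:ℕ) ≤ b then a + (((j:ℕ) - a + k) % (b - a + 1)) else (j:ℕ) := by
  intro k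
  induction k with
  | zero =>
    intro j
    simp only [pow_zero, Equiv.Perm.one_apply]
    split
    · next h =>
      have : ((j:ℕ) - a + 0) % (b - a + 1) = (j:ℕ) - a := by
        rw [Nat.add_zero]; exact Nat.mod_eq_of_lt (by omega)
      omega
    · rfl
  | succ k ih =>
    intro j
    rw [pow_succ', Equiv.Perm.mul_apply, pcyc_val hab hb, ih j]
    by_cases hj : a ≤ (j:ℕ) ∧ (j:ℕ) ≤ b
    · rw [if_pos hj]
      have hL : 0 < b - a + 1 := by omega
      have hr : ((j:ℕ) - a + k) % (b - a + 1) < b - a + 1 := Nat.mod_lt _ hL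
      have e1 : (j:ℕ) - a + (k + 1) = ((j:ℕ) - a + k) + 1 := by omega
      rw [e1, succ_mod hL]
      split_ifs <;> omega
    · rw [if_neg hj, if_neg (by omega), if_neg (by omega), if_neg hj]
lemma pcyc_pow_L {n a b : ℕ} (hab : a ≤ b) (hb : b < n) :
    (pcyc n a b) ^ (b - a + 1) = 1 := by
  ext j
  rw [pcyc_pow_val hab hb, Equiv.Perm.one_apply]
  split
  · next h =>
    rw [Nat.add_mod_right ((j:ℕ) - a) (b - a + 1)]
    have : ((j:ℕ) - a) % (b - a + 1) = (j:ℕ) - a := Nat.mod_eq_of_lt (by omega)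
    omega
  · rfl

lemma pcyc_support {n a b : ℕ} (hab : a < b) (hb : b < n) :
    (pcyc n a b).support = Finset.filter (fun j : Fin n => a ≤ (j:ℕ) ∧ (j:ℕ) ≤ b) Finset.univ := by
  ext j
  simp only [Equiv.Perm.mem_support, Finset.mem_filter, Finset.mem_univ, true_and]
  constructor
  · intro hj
    by_contra h
    apply hj
    apply Fin.val_inj.mp
    rw [pcyc_val hab.le hb, if_neg (by omega), if_neg (by omega)]
  · intro h hj
    have := congrArg Fin.val hj
    rw [pcyc_val hab.le hb] at this
    by_cases h1 : (j:ℕ) < b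
    · rw [if_pos ⟨h.1, h1⟩] at this; omega
    · rw [if_neg (by omega), if_pos (by omega)] at this; omega

lemma pcyc_isCycle {n a b : ℕ} (hab : a < b) (hb : b < n) : (pcyc n a b).IsCycle := by
  refine ⟨⟨a, by omega⟩, ?_, ?_⟩
  · intro h
    have := congrArg Fin.val h
    rw [pcyc_val hab.le hb, if_pos (by simp; omega)] at this
    simp at this
  · intro y hy
    have hy' : a ≤ (y:ℕ) ∧ (y:ℕ) ≤ b := by
      by_contra h
      apply hy
      apply Fin.val_inj.mp
      rw [pcyc_val hab.le hb, if_neg (by omega), if_neg (by omega)]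
    refine ⟨((y:ℕ) - a : ℕ), ?_⟩
    rw [zpow_natCast]
    apply Fin.val_inj.mp
    rw [pcyc_pow_val hab.le hb, if_pos (by simp; omega)]
    simp only [Fin.val_mk]
    have : a - a + ((y:ℕ) - a) = (y:ℕ) - a := by omega
    rw [this, Nat.mod_eq_of_lt (by omega)]
    omega

lemma pcyc_sign {n a b : ℕ} (hab : a ≤ b) (hb : b < n) :
    Equiv.Perm.sign (pcyc n a b) = (-1) ^ (b - a) := by
  rw [pcyc, map_mul, pref_sign (b - a) a b le_rfl hb,
    pref_sign (b - 1 - a) a (b - 1) le_rfl (by omega), ← pow_add]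
  congr 1
  omega

lemma filter_Icc_card {n a b : ℕ} (hb : b < n) :
    (Finset.filter (fun j : Fin n => a ≤ (j:ℕ) ∧ (j:ℕ) ≤ b) Finset.univ).card = b + 1 - a := by
  classical
  rw [← Finset.card_image_of_injective _ Fin.val_injective]
  have : (Finset.filter (fun j : Fin n => a ≤ (j:ℕ) ∧ (j:ℕ) ≤ b) Finset.univ).image Fin.val
      = Finset.Icc a b := by
    ext m
    simp only [Finset.mem_image, Finset.mem_filter, Finset.mem_univ, true_and, Finset.mem_Icc]
    constructor
    · rintro ⟨j, hj, rfl⟩; exact hj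
    · intro hm
      exact ⟨⟨m, by omega⟩, by simpa using hm, rfl⟩
  rw [this, Nat.card_Icc]

lemma pcyc_chain {n a m b : ℕ} (h1 : a ≤ m) (h2 : m ≤ b) (hb : b < n) :
    pcyc n a b = pcyc n a m * pcyc n m b := by
  ext j
  rw [Equiv.Perm.mul_apply, pcyc_val (h1.trans h2) hb, pcyc_val h1 (by omega),
    pcyc_val h2 hb]
  split_ifs <;> omega

lemma pcyc_pair {n : ℕ} (hn : 6 ≤ n) :
    pcyc n 0 2 * pcyc n 3 5 = pcyc n 0 3 * pcyc n 2 5 := by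
  ext j
  rw [Equiv.Perm.mul_apply, Equiv.Perm.mul_apply, pcyc_val (by omega) (by omega),
    pcyc_val (by omega) (by omega), pcyc_val (by omega) (by omega),
    pcyc_val (by omega) (by omega)]
  split_ifs <;> omega

/-- The main decomposition predicate: `g = x * y` with `x, y` 2-elements supported
inside the support of `g`, and `sign x = ε`. -/
def Dec {n : ℕ} (g : Equiv.Perm (Fin n)) (ε : ℤˣ) : Prop :=
  ∃ x y : Equiv.Perm (Fin n), x * y = g ∧ x.support ⊆ g.support ∧ y.support ⊆ g.support ∧
    (∃ i, orderOf x = 2 ^ i) ∧ (∃ j, orderOf y = 2 ^ j) ∧ Equiv.Perm.sign x = ε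

lemma two_el_of_sq {G : Type*} [Group G] {x : G} (h : x * x = 1) : ∃ i, orderOf x = 2 ^ i := by
  have h2 : orderOf x ∣ 2 ^ 1 := by
    rw [pow_one]
    exact orderOf_dvd_of_pow_eq_one (by rw [pow_two]; exact h)
  obtain ⟨i, _, hi⟩ := (Nat.dvd_prime_pow Nat.prime_two).mp h2
  exact ⟨i, hi⟩

lemma two_el_mul {G : Type*} [Group G] {x y : G} (h : Commute x y)
    (hx : ∃ i, orderOf x = 2 ^ i) (hy : ∃ j, orderOf y = 2 ^ j) :
    ∃ k, orderOf (x * y) = 2 ^ k := by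
  obtain ⟨i, hi⟩ := hx
  obtain ⟨j, hj⟩ := hy
  have hx1 : x ^ (2 ^ i) = 1 := by rw [← hi]; exact pow_orderOf_eq_one x
  have hy1 : y ^ (2 ^ j) = 1 := by rw [← hj]; exact pow_orderOf_eq_one y
  have h1 : (x * y) ^ (2 ^ (i + j)) = 1 := by
    rw [pow_add, h.mul_pow, pow_mul, hx1, one_pow, one_mul, mul_comm (2 ^ i), pow_mul,
      hy1, one_pow]
  have h2 : orderOf (x * y) ∣ 2 ^ (i + j) := orderOf_dvd_of_pow_eq_one h1
  obtain ⟨k, _, hk⟩ := (Nat.dvd_prime_pow Nat.prime_two).mp h2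
  exact ⟨k, hk⟩

lemma two_el_conj {G : Type*} [Group G] {x c : G} (hx : ∃ i, orderOf x = 2 ^ i) :
    ∃ i, orderOf (c * x * c⁻¹) = 2 ^ i := by
  obtain ⟨i, hi⟩ := hx
  refine ⟨i, ?_⟩
  rw [← hi]
  exact orderOf_injective (MulAut.conj c).toMonoidHom (MulEquiv.injective _) x

lemma sign_conj {n : ℕ} (x c : Equiv.Perm (Fin n)) :
    Equiv.Perm.sign (c * x * c⁻¹) = Equiv.Perm.sign x := by
  rw [map_mul, map_mul, map_inv]
  rw [mul_comm (Equiv.Perm.sign c) (Equiv.Perm.sign x), mul_assoc]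
  rw [mul_inv_cancel, mul_one]

lemma Dec.conj {n : ℕ} {m g : Equiv.Perm (Fin n)} {ε : ℤˣ} (hd : Dec m ε) (hc : IsConj m g) :
    Dec g ε := by
  obtain ⟨c, hc⟩ := isConj_iff.mp hc
  obtain ⟨x, y, hxy, hxs, hys, hx2, hy2, hxsgn⟩ := hd
  refine ⟨c * x * c⁻¹, c * y * c⁻¹, ?_, ?_, ?_, two_el_conj hx2, two_el_conj hy2, ?_⟩
  · rw [← hc, ← hxy]; group
  · rw [← hc]
    rw [Equiv.Perm.support_conj, Equiv.Perm.support_conj]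
    exact Finset.map_subset_map.mpr hxs
  · rw [← hc]
    rw [Equiv.Perm.support_conj, Equiv.Perm.support_conj]
    exact Finset.map_subset_map.mpr hys
  · rw [sign_conj]; exact hxsgn

lemma support_apply_mem {n : ℕ} {x g : Equiv.Perm (Fin n)} (h : x.support ⊆ g.support)
    {p : Fin n} (hp : p ∈ g.support) : x p ∈ g.support := by
  by_cases hx : x p = p
  · rwa [hx]
  · exact h (Equiv.Perm.mem_support.mpr (fun hc => hx (by
      have := congrArg x.symm hc
      simpa using this)))

lemma Dec.flip {n : ℕ} {g : Equiv.Perm (Fin n)} {ε : ℤˣ} (hd : Dec g ε) :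
    Dec g (Equiv.Perm.sign g * ε) := by
  obtain ⟨x, y, hxy, hxs, hys, hx2, hy2, hxsgn⟩ := hd
  refine ⟨x * y * x⁻¹, x, ?_, ?_, hxs, ?_, hx2, ?_⟩
  · rw [mul_assoc, inv_mul_cancel, mul_one, hxy]
  · rw [Equiv.Perm.support_conj]
    intro p hp
    simp only [Finset.mem_map, Equiv.coe_toEmbedding] at hp
    obtain ⟨q, hq, rfl⟩ := hp
    exact support_apply_mem hxs (hys hq)
  · exact two_el_conj hy2
  · rw [sign_conj y x, ← hxy, map_mul, hxsgn]
    calc Equiv.Perm.sign y = Equiv.Perm.sign y * (ε * ε) := by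
          rw [Int.units_mul_self, mul_one]
      _ = ε * Equiv.Perm.sign y * ε := by rw [mul_comm ε (Equiv.Perm.sign y), mul_assoc]

lemma Dec.mul_disjoint {n : ℕ} {c g : Equiv.Perm (Fin n)} {ε₁ ε₂ : ℤˣ}
    (hdisj : Equiv.Perm.Disjoint c g) (h1 : Dec c ε₁) (h2 : Dec g ε₂) :
    Dec (c * g) (ε₁ * ε₂) := by
  obtain ⟨x1, y1, hxy1, hxs1, hys1, hx21, hy21, hsgn1⟩ := h1
  obtain ⟨x2, y2, hxy2, hxs2, hys2, hx22, hy22, hsgn2⟩ := h2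
  have hsupp : (c * g).support = c.support ∪ g.support := hdisj.support_mul
  have dis : ∀ {u v : Equiv.Perm (Fin n)}, u.support ⊆ c.support → v.support ⊆ g.support →
      Equiv.Perm.Disjoint u v := by
    intro u v hu hv
    rw [Equiv.Perm.disjoint_iff_disjoint_support]
    exact Finset.disjoint_of_subset_left hu (Finset.disjoint_of_subset_right hv
      (Equiv.Perm.disjoint_iff_disjoint_support.mp hdisj))
  refine ⟨x1 * x2, y1 * y2, ?_, ?_, ?_, ?_, ?_, ?_⟩
  · have hc : Commute x2 y1 := (dis hys1 hxs2).commute.symm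
    calc x1 * x2 * (y1 * y2) = x1 * (x2 * y1) * y2 := by group
    _ = x1 * (y1 * x2) * y2 := by rw [hc.eq]
    _ = (x1 * y1) * (x2 * y2) := by group
    _ = c * g := by rw [hxy1, hxy2]
  · rw [hsupp]
    refine (Equiv.Perm.support_mul_le x1 x2).trans ?_
    exact Finset.union_subset_union hxs1 hxs2
  · rw [hsupp]
    refine (Equiv.Perm.support_mul_le y1 y2).trans ?_
    exact Finset.union_subset_union hys1 hys2
  · exact two_el_mul (dis hxs1 hxs2).commute hx21 hx22
  · exact two_el_mul (dis hys1 hys2).commute hy21 hy22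
  · rw [map_mul, hsgn1, hsgn2]

lemma filter_Icc_subset {n a b a' b' : ℕ} (h1 : a' ≤ a) (h2 : b ≤ b') :
    Finset.filter (fun j : Fin n => a ≤ (j:ℕ) ∧ (j:ℕ) ≤ b) Finset.univ ⊆
    Finset.filter (fun j : Fin n => a' ≤ (j:ℕ) ∧ (j:ℕ) ≤ b') Finset.univ := by
  intro j
  simp only [Finset.mem_filter, Finset.mem_univ, true_and]
  omega

lemma dec_cycle_model {n l : ℕ} (h2 : 2 ≤ l) (hn : l ≤ n) :
    Dec (pcyc n 0 (l-1)) ((-1) ^ (l / 2)) := by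
  have hb : l - 1 < n := by omega
  have hsupp : (pcyc n 0 (l-1)).support =
      Finset.filter (fun j : Fin n => 0 ≤ (j:ℕ) ∧ (j:ℕ) ≤ l-1) Finset.univ :=
    pcyc_support (by omega) hb
  refine ⟨pref n 0 (l-1), pref n 0 (l-2), ?_, ?_, ?_, two_el_of_sq (pref_sq hb),
    two_el_of_sq (pref_sq (by omega)), ?_⟩
  · have e : l - 1 - 1 = l - 2 := by omega
    rw [pcyc, e]
  · rw [hsupp]; exact pref_support hb
  · rw [hsupp]
    exact (pref_support (by omega)).trans (filter_Icc_subset le_rfl (by omega))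
  · rw [pref_sign (l-1) 0 (l-1) le_rfl hb]
    congr 1
    omega

lemma ql_orderfact {n a b : ℕ} (hab : a ≤ b) (hb : b < n) (hL : b - a + 1 = 4) :
    ∃ i, orderOf (pcyc n a b) = 2 ^ i := by
  have h1 : (pcyc n a b) ^ (2 ^ 2) = 1 := by
    have := pcyc_pow_L hab hb
    rw [hL] at this
    exact this
  obtain ⟨k, _, hk⟩ := (Nat.dvd_prime_pow Nat.prime_two).mp (orderOf_dvd_of_pow_eq_one h1)
  exact ⟨k, hk⟩

lemma dec_cycle_model_q {n l : ℕ} (h5 : 5 ≤ l) (hn : l ≤ n) :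
    Dec (pcyc n 0 (l-1)) ((-1) ^ ((l - 3) / 2)) := by
  have hb : l - 1 < n := by omega
  have hsupp : (pcyc n 0 (l-1)).support =
      Finset.filter (fun j : Fin n => 0 ≤ (j:ℕ) ∧ (j:ℕ) ≤ l-1) Finset.univ :=
    pcyc_support (by omega) hb
  have hdisj : Equiv.Perm.Disjoint (pref n 0 (l-5)) (pcyc n (l-4) (l-1)) := by
    rw [Equiv.Perm.disjoint_iff_disjoint_support]
    refine Finset.disjoint_of_subset_left (pref_support (by omega))
      (Finset.disjoint_of_subset_right (pcyc_support (by omega) hb).le ?_)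
    rw [Finset.disjoint_left]
    intro j
    simp only [Finset.mem_filter, Finset.mem_univ, true_and]
    omega
  refine ⟨pref n 0 (l-4), pref n 0 (l-5) * pcyc n (l-4) (l-1), ?_, ?_, ?_,
    two_el_of_sq (pref_sq (by omega)), ?_, ?_⟩
  · rw [← mul_assoc]
    have e1 : pref n 0 (l-4) * pref n 0 (l-5) = pcyc n 0 (l-4) := by
      have e : l - 4 - 1 = l - 5 := by omega
      rw [pcyc, e]
    rw [e1, ← pcyc_chain (by omega) (by omega) hb]
  · rw [hsupp]
    exact (pref_support (by omega)).trans (filter_Icc_subset le_rfl (by omega))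
  · rw [hsupp]
    refine (Equiv.Perm.support_mul_le _ _).trans ?_
    refine Finset.union_subset ?_ ?_
    · exact (pref_support (by omega)).trans (filter_Icc_subset le_rfl (by omega))
    · exact (pcyc_support (by omega) hb).le.trans
        (filter_Icc_subset (by omega) (by omega))
  · exact two_el_mul hdisj.commute (two_el_of_sq (pref_sq (by omega)))
      (ql_orderfact (by omega) hb (by omega))
  · rw [pref_sign (l-4) 0 (l-4) le_rfl (by omega)]
    congr 1
    omega

lemma dec_cycle {n : ℕ} {c : Equiv.Perm (Fin n)} (hc : c.IsCycle) :
    Dec c ((-1) ^ (c.support.card / 2)) ∧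
      (c.support.card ≠ 3 → Dec c (-(-1) ^ (c.support.card / 2))) := by
  set l := c.support.card with hl
  have h2 : 2 ≤ l := hc.two_le_card_support
  have hn : l ≤ n := by
    calc l ≤ Fintype.card (Fin n) := Finset.card_le_univ _
    _ = n := Fintype.card_fin n
  have hmodel : (pcyc n 0 (l-1)).IsCycle := pcyc_isCycle (by omega) (by omega)
  have hcard : (pcyc n 0 (l-1)).support.card = l := by
    rw [pcyc_support (by omega) (by omega), filter_Icc_card (by omega)]
    omega
  have hconj : IsConj (pcyc n 0 (l-1)) c := hmodel.isConj hc (by rw [hcard])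
  constructor
  · exact (dec_cycle_model h2 hn).conj hconj
  · intro h3
    rcases Nat.even_or_odd l with he | ho
    · have := ((dec_cycle_model h2 hn).conj hconj).flip
      have hsgn : Equiv.Perm.sign c = -1 := by
        rw [hc.sign, ← hl, he.neg_one_pow]
      rwa [hsgn, neg_one_mul] at this
    · obtain ⟨m, hm⟩ := ho
      have h5 : 5 ≤ l := by omega
      have := (dec_cycle_model_q h5 hn).conj hconj
      have he : -(-1 : ℤˣ) ^ (l / 2) = (-1) ^ ((l - 3)/2) := by
        have e1 : l / 2 = (l-3)/2 + 1 := by omega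
        rw [e1, pow_succ]
        simp
      rwa [he]

lemma dec_pair {n : ℕ} {c d : Equiv.Perm (Fin n)} (hc : c.IsCycle) (hd : d.IsCycle)
    (h3c : c.support.card = 3) (h3d : d.support.card = 3)
    (hdisj : Equiv.Perm.Disjoint c d) : Dec (c * d) (-1) := by
  have hn : 6 ≤ n := by
    have h1 : (c.support ∪ d.support).card = 6 := by
      rw [Finset.card_union_of_disjoint
        (Equiv.Perm.disjoint_iff_disjoint_support.mp hdisj), h3c, h3d]
    calc 6 = (c.support ∪ d.support).card := h1.symm
    _ ≤ Fintype.card (Fin n) := Finset.card_le_univ _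
    _ = n := Fintype.card_fin n
  have hM1 : (pcyc n 0 2).IsCycle := pcyc_isCycle (by omega) (by omega)
  have hM2 : (pcyc n 3 5).IsCycle := pcyc_isCycle (by omega) (by omega)
  have hs1 := pcyc_support (n := n) (a := 0) (b := 2) (by omega) (by omega)
  have hs2 := pcyc_support (n := n) (a := 3) (b := 5) (by omega) (by omega)
  have hMdisj : Equiv.Perm.Disjoint (pcyc n 0 2) (pcyc n 3 5) := by
    rw [Equiv.Perm.disjoint_iff_disjoint_support, hs1, hs2, Finset.disjoint_left]
    intro j
    simp only [Finset.mem_filter, Finset.mem_univ, true_and]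
    omega
  have hMcard1 : (pcyc n 0 2).support.card = 3 := by rw [hs1, filter_Icc_card (by omega)]
  have hMcard2 : (pcyc n 3 5).support.card = 3 := by rw [hs2, filter_Icc_card (by omega)]
  have hconj : IsConj (pcyc n 0 2 * pcyc n 3 5) (c * d) := by
    rw [Equiv.Perm.isConj_iff_cycleType_eq, hMdisj.cycleType_mul, hdisj.cycleType_mul,
      hM1.cycleType, hM2.cycleType, hc.cycleType, hd.cycleType, hMcard1, hMcard2, h3c, h3d]
  refine Dec.conj ?_ hconj
  have hsuppM : (pcyc n 0 2 * pcyc n 3 5).support =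
      Finset.filter (fun j : Fin n => 0 ≤ (j:ℕ) ∧ (j:ℕ) ≤ 2) Finset.univ ∪
      Finset.filter (fun j : Fin n => 3 ≤ (j:ℕ) ∧ (j:ℕ) ≤ 5) Finset.univ := by
    rw [hMdisj.support_mul, hs1, hs2]
  refine ⟨pcyc n 0 3, pcyc n 2 5, (pcyc_pair hn).symm, ?_, ?_,
    ql_orderfact (by omega) (by omega) (by omega),
    ql_orderfact (by omega) (by omega) (by omega), ?_⟩
  · rw [hsuppM, pcyc_support (by omega) (by omega)]
    intro j
    simp only [Finset.mem_filter, Finset.mem_univ, true_and, Finset.mem_union]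
    omega
  · rw [hsuppM, pcyc_support (by omega) (by omega)]
    intro j
    simp only [Finset.mem_filter, Finset.mem_univ, true_and, Finset.mem_union]
    omega
  · rw [pcyc_sign (by omega) (by omega)]
    decide

lemma dec3fix {n : ℕ} (hn : 5 ≤ n) {g : Equiv.Perm (Fin n)} (hg : g.IsCycle)
    (h3 : g.support.card = 3) :
    ∃ x y : Equiv.Perm (Fin n), x * y = g ∧ (∃ i, orderOf x = 2 ^ i) ∧
      (∃ j, orderOf y = 2 ^ j) ∧ Equiv.Perm.sign x = 1 ∧ Equiv.Perm.sign y = 1 := by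
  have hb1 : (1:ℕ) < n := by omega
  have hb2 : (2:ℕ) < n := by omega
  have hb4 : (4:ℕ) < n := by omega
  set X := pref n 0 1 * pref n 3 4 with hX
  set Y := pref n 1 2 * pref n 3 4 with hY
  have hXY : X * Y = pcyc n 0 2 := by
    ext j
    rw [hX, hY]
    simp only [Equiv.Perm.mul_apply]
    rw [pref_val hb1, pref_val hb4, pref_val hb2, pref_val hb4,
      pcyc_val (by omega) hb2]
    split_ifs <;> omega
  have hXX : X * X = 1 := by
    ext j
    rw [hX]
    simp only [Equiv.Perm.mul_apply, Equiv.Perm.one_apply]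
    rw [pref_val hb1, pref_val hb4, pref_val hb1, pref_val hb4]
    split_ifs <;> omega
  have hYY : Y * Y = 1 := by
    ext j
    rw [hY]
    simp only [Equiv.Perm.mul_apply, Equiv.Perm.one_apply]
    rw [pref_val hb2, pref_val hb4, pref_val hb2, pref_val hb4]
    split_ifs <;> omega
  have hXsgn : Equiv.Perm.sign X = 1 := by
    rw [hX, map_mul, pref_sign 1 0 1 (by omega) hb1, pref_sign 1 3 4 (by omega) hb4]
    norm_num
  have hYsgn : Equiv.Perm.sign Y = 1 := by
    rw [hY, map_mul, pref_sign 1 1 2 (by omega) hb2, pref_sign 1 3 4 (by omega) hb4]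
    norm_num
  have hMc : (pcyc n 0 2).IsCycle := pcyc_isCycle (by omega) hb2
  have hconj : IsConj (pcyc n 0 2) g := by
    refine hMc.isConj hg ?_
    rw [pcyc_support (by omega) hb2, filter_Icc_card hb2, h3]
  obtain ⟨cc, hcc⟩ := isConj_iff.mp hconj
  refine ⟨cc * X * cc⁻¹, cc * Y * cc⁻¹, ?_, two_el_conj (two_el_of_sq hXX),
    two_el_conj (two_el_of_sq hYY), ?_, ?_⟩
  · rw [← hcc, ← hXY]
    group
  · rw [sign_conj, hXsgn]
  · rw [sign_conj, hYsgn]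

lemma cycle_count3 {n : ℕ} {σ : Equiv.Perm (Fin n)} (hσ : σ.IsCycle) :
    Multiset.count 3 σ.cycleType = if σ.support.card = 3 then 1 else 0 := by
  rw [hσ.cycleType, Multiset.count_singleton]
  split_ifs with h1 h2 h2 <;> first | rfl | (exfalso; omega)

lemma master {n : ℕ} (g : Equiv.Perm (Fin n)) :
    Dec g ((-1) ^ (Multiset.count 3 g.cycleType)) ∧
      (((∃ l ∈ g.cycleType, l ≠ 3) ∨ 2 ≤ Multiset.count 3 g.cycleType) →
        Dec g (-(-1) ^ (Multiset.count 3 g.cycleType))) := by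
  induction g using Equiv.Perm.cycle_induction_on with
  | base_one =>
    constructor
    · rw [Equiv.Perm.cycleType_one]
      refine ⟨1, 1, mul_one 1, ?_, ?_, ⟨0, by simp⟩, ⟨0, by simp⟩, ?_⟩
      · simp
      · simp
      · simp
    · rw [Equiv.Perm.cycleType_one]
      rintro (⟨l, hl, _⟩ | hcount)
      · exact absurd hl (Multiset.notMem_zero l)
      · simp at hcount
  | base_cycles σ hσ =>
    have hd := dec_cycle hσ
    have hcount := cycle_count3 hσ
    by_cases h3 : σ.support.card = 3
    · rw [hcount, if_pos h3]
      constructor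
      · have : ((-1 : ℤˣ)) ^ (1:ℕ) = (-1) ^ (σ.support.card / 2) := by rw [h3]
        rw [this]
        exact hd.1
      · rintro (⟨l, hl, hl3⟩ | hc2)
        · exfalso
          rw [hσ.cycleType, Multiset.mem_singleton] at hl
          omega
        · exact absurd hc2 (by omega)
    · rw [hcount, if_neg h3, pow_zero]
      have hboth : Dec σ ((-1) ^ (σ.support.card / 2)) ∧ Dec σ (-(-1) ^ (σ.support.card / 2)) :=
        ⟨hd.1, hd.2 h3⟩
      rcases Int.units_eq_one_or ((-1 : ℤˣ) ^ (σ.support.card / 2)) with he | he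
      · refine ⟨by rw [← he]; exact hboth.1, fun _ => ?_⟩
        have : -(1 : ℤˣ) = -(-1) ^ (σ.support.card / 2) := by rw [he]
        rw [this]
        exact hboth.2
      · refine ⟨?_, fun _ => ?_⟩
        · have : (1 : ℤˣ) = -(-1) ^ (σ.support.card / 2) := by rw [he]; decide
          rw [this]
          exact hboth.2
        · have : -(1 : ℤˣ) = (-1) ^ (σ.support.card / 2) := by rw [he]
          rw [this]
          exact hboth.1
  | induction_disjoint σ τ hdisj hσ ih1 ih2 =>
    have hct : (σ * τ).cycleType = σ.cycleType + τ.cycleType := hdisj.cycleType_mul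
    have hcount : Multiset.count 3 (σ * τ).cycleType =
        Multiset.count 3 σ.cycleType + Multiset.count 3 τ.cycleType := by
      rw [hct, Multiset.count_add]
    have hpow : ((-1 : ℤˣ)) ^ (Multiset.count 3 (σ * τ).cycleType) =
        (-1) ^ (Multiset.count 3 σ.cycleType) * (-1) ^ (Multiset.count 3 τ.cycleType) := by
      rw [hcount, pow_add]
    constructor
    · rw [hpow]
      exact Dec.mul_disjoint hdisj ih1.1 ih2.1
    · rintro (⟨l, hl, hl3⟩ | hc2)
      · rw [hct, Multiset.mem_add] at hl
        rcases hl with hl | hl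
        · have h1 : Dec σ (-(-1) ^ (Multiset.count 3 σ.cycleType)) :=
            ih1.2 (Or.inl ⟨l, hl, hl3⟩)
          have := Dec.mul_disjoint hdisj h1 ih2.1
          rwa [hpow, ← neg_mul]
        · have h2 : Dec τ (-(-1) ^ (Multiset.count 3 τ.cycleType)) :=
            ih2.2 (Or.inl ⟨l, hl, hl3⟩)
          have := Dec.mul_disjoint hdisj ih1.1 h2
          rwa [hpow, ← mul_neg]
      · by_cases hokτ : (∃ l ∈ τ.cycleType, l ≠ 3) ∨ 2 ≤ Multiset.count 3 τ.cycleType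
        · have h2 : Dec τ (-(-1) ^ (Multiset.count 3 τ.cycleType)) := ih2.2 hokτ
          have := Dec.mul_disjoint hdisj ih1.1 h2
          rwa [hpow, ← mul_neg]
        · push_neg at hokτ
          obtain ⟨hall3, hcle⟩ := hokτ
          have hcσ : Multiset.count 3 σ.cycleType ≤ 1 := by
            rw [cycle_count3 hσ]
            split_ifs <;> omega
          rw [hcount] at hc2
          have hcτ1 : Multiset.count 3 τ.cycleType = 1 := by omega
          have hcσ1 : Multiset.count 3 σ.cycleType = 1 := by omega
          have hσ3 : σ.support.card = 3 := by
            rw [cycle_count3 hσ] at hcσ1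
            by_contra h
            rw [if_neg h] at hcσ1
            omega
          -- τ is a single 3-cycle
          have hcard1 : Multiset.card τ.cycleType = 1 := by
            rw [← Multiset.count_eq_card.mpr (fun x hx => (hall3 x hx).symm)] at *
            exact hcτ1
          have hτcyc : τ.IsCycle := Equiv.Perm.card_cycleType_eq_one.mp hcard1
          have hτ3 : τ.support.card = 3 := by
            have := cycle_count3 hτcyc
            rw [hcτ1] at this
            by_contra h
            rw [if_neg h] at this
            omega
          have hdec := dec_pair hσ hτcyc hσ3 hτ3 hdisj
          have : -(-1 : ℤˣ) ^ (Multiset.count 3 (σ * τ).cycleType) = -1 := by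
            rw [hcount, hcσ1, hcτ1]
            decide
          rw [this]
          exact hdec

/-- For `n ≥ 5`, every element of the alternating group `A_n` is a product of two
`2`-elements. -/
theorem stmt_15 (n : ℕ) (hn : 5 ≤ n) (g : alternatingGroup (Fin n)) :
    ∃ x y : alternatingGroup (Fin n),
      (∃ i, orderOf x = 2 ^ i) ∧ (∃ j, orderOf y = 2 ^ j) ∧ g = x * y := by
  classical
  set G := (g : Equiv.Perm (Fin n)) with hGdef
  have hGsign : Equiv.Perm.sign G = 1 := Equiv.Perm.mem_alternatingGroup.mp g.2
  have core : ∃ x y : Equiv.Perm (Fin n), x * y = G ∧ (∃ i, orderOf x = 2 ^ i) ∧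
      (∃ j, orderOf y = 2 ^ j) ∧ Equiv.Perm.sign x = 1 := by
    rcases Int.units_eq_one_or ((-1 : ℤˣ) ^ (Multiset.count 3 G.cycleType)) with he | he
    · obtain ⟨x, y, hxy, _, _, hx2, hy2, hsx⟩ := (master G).1
      exact ⟨x, y, hxy, hx2, hy2, by rw [hsx, he]⟩
    · by_cases hok : (∃ l ∈ G.cycleType, l ≠ 3) ∨ 2 ≤ Multiset.count 3 G.cycleType
      · obtain ⟨x, y, hxy, _, _, hx2, hy2, hsx⟩ := (master G).2 hok
        refine ⟨x, y, hxy, hx2, hy2, ?_⟩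
        rw [hsx, he]
        decide
      · push_neg at hok
        obtain ⟨hall3, hcle⟩ := hok
        have h0 : Multiset.count 3 G.cycleType ≠ 0 := by
          intro h
          rw [h, pow_zero] at he
          exact absurd he (by decide)
        have hk1 : Multiset.count 3 G.cycleType = 1 := by omega
        have hcard1 : Multiset.card G.cycleType = 1 := by
          rw [← Multiset.count_eq_card.mpr (fun x hx => (hall3 x hx).symm)]
          exact hk1
        have hGcyc : G.IsCycle := Equiv.Perm.card_cycleType_eq_one.mp hcard1
        have hG3 : G.support.card = 3 := by
          have hcc := cycle_count3 hGcyc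
          rw [hk1] at hcc
          by_contra h
          rw [if_neg h] at hcc
          omega
        obtain ⟨x, y, hxy, hx2, hy2, hsx, _⟩ := dec3fix hn hGcyc hG3
        exact ⟨x, y, hxy, hx2, hy2, hsx⟩
  obtain ⟨x, y, hxy, hx2, hy2, hsx⟩ := core
  have hsy : Equiv.Perm.sign y = 1 := by
    have h1 := congrArg Equiv.Perm.sign hxy
    rw [map_mul, hsx, one_mul] at h1
    rw [h1, hGsign]
  refine ⟨⟨x, Equiv.Perm.mem_alternatingGroup.mpr hsx⟩,
    ⟨y, Equiv.Perm.mem_alternatingGroup.mpr hsy⟩, ?_, ?_, ?_⟩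
  · simp only [Subgroup.orderOf_mk]
    exact hx2
  · simp only [Subgroup.orderOf_mk]
    exact hy2
  · apply Subtype.ext
    exact hxy.symm
end

section
/- For all integers k ≥ 2 and Q ≥ 2 there exists a positive integer D, depending only on k and Q, with the following property: for every positive integer N with Ω(N) ≤ k, for every finite field F with 2 ≤ |F| < Q, and for every positive integer m divisible by D, every element z of the center of SL_m(F) is an N-th power in SL_m(F), i.e. z = h^N for some h ∈ SL_m(F). -/
open Matrix Finset

section Monomial
variable {ι R : Type*} [DecidableEq ι] [Fintype ι] [CommRing R]

def monoMat (σ : Equiv.Perm ι) (w : ι → R) : Matrix ι ι R :=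
  Matrix.of fun i j => if i = σ j then w j else 0

lemma monoMat_mul (σ τ : Equiv.Perm ι) (w v : ι → R) :
    monoMat σ w * monoMat τ v = monoMat (σ * τ) (fun j => w (τ j) * v j) := by
  ext i j
  simp only [monoMat, Matrix.mul_apply, Matrix.of_apply]
  rw [Finset.sum_eq_single (τ j)]
  · rw [Equiv.Perm.mul_apply]; simp only [if_pos rfl]
    split_ifs <;> simp
  · intro k _ hk
    simp [hk]
  · simp

set_option linter.unusedSectionVars false in
lemma monoMat_one_const (c : R) :
    monoMat (1 : Equiv.Perm ι) (fun _ => c) = c • (1 : Matrix ι ι R) := by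
  ext i j
  simp only [monoMat, Matrix.of_apply, Equiv.Perm.one_apply, Matrix.smul_apply,
    Matrix.one_apply, smul_eq_mul, mul_ite, mul_one, mul_zero]
  congr

lemma monoMat_pow (σ : Equiv.Perm ι) (w : ι → R) (n : ℕ) :
    monoMat σ w ^ n
      = monoMat (σ ^ n) (fun j => ∏ t ∈ Finset.range n, w ((σ ^ t) j)) := by
  induction n with
  | zero =>
      simp only [pow_zero, Finset.range_zero, Finset.prod_empty]
      rw [monoMat_one_const, one_smul]
  | succ n ih =>
      rw [pow_succ, ih, monoMat_mul, ← pow_succ]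
      have hw : ∀ j : ι, (∏ t ∈ Finset.range n, w ((σ ^ t) (σ j))) * w j
          = ∏ t ∈ Finset.range (n + 1), w ((σ ^ t) j) := by
        intro j
        rw [Finset.prod_range_succ']
        simp [pow_succ, Equiv.Perm.mul_apply]
      simp only [hw]

lemma monoMat_det (σ : Equiv.Perm ι) (w : ι → R) :
    (monoMat σ w).det = (Equiv.Perm.sign σ : ℤ) * ∏ j, w j := by
  have h : monoMat σ w = (σ⁻¹.permMatrix R) * Matrix.diagonal w := by
    ext i j
    rw [Matrix.mul_diagonal]
    simp only [monoMat, Matrix.of_apply, Equiv.Perm.permMatrix, PEquiv.toMatrix_apply,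
      Equiv.toPEquiv_apply, Option.mem_def, Option.some.injEq, boole_mul]
    by_cases hij : i = σ j
    · rw [if_pos hij, if_pos (by rw [hij]; simp)]
    · rw [if_neg hij, if_neg (by intro hc; apply hij; rw [← hc]; simp)]
  rw [h, Matrix.det_mul, Matrix.det_permutation, Matrix.det_diagonal, Equiv.Perm.sign_inv]


end Monomial

open Kronecker
open Fin.NatCast

lemma finRotate_pow_apply (n t : ℕ) (j : Fin (n + 1)) :
    ((finRotate (n + 1)) ^ t) j = j + (t : Fin (n + 1)) := by
  induction t generalizing j with
  | zero => simp
  | succ t ih =>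
      rw [pow_succ', Equiv.Perm.mul_apply, ih, finRotate_succ_apply]
      push_cast
      exact add_assoc _ _ _

lemma block_exists {F : Type*} [Field F] (n r : ℕ) (μ : F) :
    ∃ M : Matrix (Fin r × Fin (n + 1)) (Fin r × Fin (n + 1)) F,
      M ^ (n + 1) = μ • (1 : Matrix (Fin r × Fin (n + 1)) (Fin r × Fin (n + 1)) F) ∧
      M.det = ((-1 : F) ^ n * μ) ^ r := by
  classical
  set w : Fin (n + 1) → F := fun j => if j = Fin.last n then μ else 1 with hw
  set C : Matrix (Fin (n + 1)) (Fin (n + 1)) F := monoMat (finRotate (n + 1)) w with hC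
  have hCpow : C ^ (n + 1) = μ • 1 := by
    rw [hC, monoMat_pow]
    have h1 : (finRotate (n + 1)) ^ (n + 1) = 1 := by
      ext j
      simp [finRotate_pow_apply]
    have h2 : ∀ j : Fin (n + 1),
        ∏ t ∈ Finset.range (n + 1), w (((finRotate (n + 1)) ^ t) j) = μ := by
      intro j
      rw [Finset.prod_congr rfl (fun t _ => by rw [finRotate_pow_apply])]
      rw [← Fin.prod_univ_eq_prod_range (fun t => w (j + (t : Fin (n + 1)))) (n + 1)]
      simp only [Fin.cast_val_eq_self]
      rw [Fintype.prod_equiv (Equiv.addLeft j) (fun x => w (j + x)) w (fun i => rfl)]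
      simp [hw, Finset.prod_ite_eq']
    rw [h1, show (fun j => ∏ t ∈ Finset.range (n + 1), w (((finRotate (n + 1)) ^ t) j))
        = fun _ => μ from funext h2]
    exact monoMat_one_const μ
  have hCdet : C.det = (-1 : F) ^ n * μ := by
    rw [hC, monoMat_det, sign_finRotate]
    have : ∏ j, w j = μ := by simp [hw, Finset.prod_ite_eq']
    rw [this]
    norm_cast
  refine ⟨(1 : Matrix (Fin r) (Fin r) F) ⊗ₖ C, ?_, ?_⟩
  · have hpow : ∀ t : ℕ, ((1 : Matrix (Fin r) (Fin r) F) ⊗ₖ C) ^ t = 1 ⊗ₖ (C ^ t) := by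
      intro t
      induction t with
      | zero => simp [Matrix.one_kronecker_one]
      | succ t ih => rw [pow_succ, ih, ← Matrix.mul_kronecker_mul, one_mul, pow_succ]
    rw [hpow, hCpow, Matrix.kronecker_smul, Matrix.one_kronecker_one]
  · rw [Matrix.det_kronecker, hCdet, Matrix.det_one, one_pow, one_mul, Fintype.card_fin]


/-- For all `k, Q ≥ 2` there is `D = D(k, Q)` such that for every `N` with `Ω(N) ≤ k`
and every finite field `F` with `2 ≤ |F| < Q`, every central element of `SL_m(F)` is an
`N`-th power whenever `D ∣ m`. -/
theorem stmt_18 (k Q : ℕ) (hk : 2 ≤ k) (hQ : 2 ≤ Q) :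
    ∃ D : ℕ, 0 < D ∧ ∀ N : ℕ, 0 < N → N.primeFactorsList.length ≤ k →
      ∀ (F : Type) [Field F] [Fintype F], 2 ≤ Fintype.card F → Fintype.card F < Q →
      ∀ m : ℕ, 0 < m → D ∣ m →
      ∀ z ∈ Subgroup.center (Matrix.SpecialLinearGroup (Fin m) F),
        ∃ h : Matrix.SpecialLinearGroup (Fin m) F, h ^ N = z := by
  classical
  refine ⟨Nat.factorial (2 * Q ^ (k + 1)), Nat.factorial_pos _, ?_⟩
  intro N hN hΩ F _ _ hcard2 hcardQ m hm hDm z hz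
  set q := Fintype.card F with hq
  set p := ringChar F with hp
  haveI : CharP F p := ringChar.charP F
  obtain ⟨np, hpprime, hqpow⟩ := FiniteField.card F p
  -- center element is a scalar
  rw [Matrix.SpecialLinearGroup.mem_center_iff] at hz
  obtain ⟨lam, hlam1, hlamz⟩ := hz
  rw [Fintype.card_fin] at hlam1
  have hlam0 : lam ≠ 0 := by
    intro h0
    rw [h0, zero_pow hm.ne'] at hlam1
    exact zero_ne_one hlam1
  -- split N according to small primes different from p
  set b : ℕ → Bool := fun ℓ => decide (ℓ < Q ∧ ℓ ≠ p) with hb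
  set l := N.primeFactorsList with hl
  set N₁ := (l.filter b).prod with hN₁
  set N₂ := (l.filter (fun x => ! b x)).prod with hN₂
  have hprime : ∀ ℓ ∈ l, ℓ.Prime := fun ℓ h => Nat.prime_of_mem_primeFactorsList h
  have hsplit : N₁ * N₂ = N := by
    rw [hN₁, hN₂, ← List.prod_append, (List.filter_append_perm b l).prod_eq, hl,
      Nat.prod_primeFactorsList hN.ne']
  have hN₁pos : 0 < N₁ := by
    rw [hN₁]
    apply List.prod_pos
    intro x hx
    exact (hprime x (List.mem_of_mem_filter hx)).pos
  have hN₁le : N₁ ≤ Q ^ k := by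
    calc N₁ ≤ Q ^ (l.filter b).length := by
          apply List.prod_le_pow_card
          intro x hx
          have hbx : b x = true := List.of_mem_filter hx
          rw [hb] at hbx
          simp only [decide_eq_true_eq] at hbx
          exact le_of_lt hbx.1
      _ ≤ Q ^ k :=
          Nat.pow_le_pow_right (by omega) (le_trans (List.length_filter_le b l) hΩ)
  -- divisibility facts
  have hkey : 2 * N₁ * (q - 1) ∣ m := by
    refine dvd_trans (Nat.dvd_factorial ?_ ?_) hDm
    · have : 0 < q - 1 := by omega
      positivity
    · calc 2 * N₁ * (q - 1) ≤ 2 * Q ^ k * Q := by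
            have h1 : q - 1 ≤ Q := by omega
            exact Nat.mul_le_mul (Nat.mul_le_mul_left 2 hN₁le) h1
        _ = 2 * Q ^ (k + 1) := by ring
  have hN₁m : N₁ ∣ m := dvd_trans ⟨2 * (q - 1), by ring⟩ hkey
  set r' := m / N₁ with hr'
  have hmr : r' * N₁ = m := Nat.div_mul_cancel hN₁m
  have h2r : 2 ∣ r' := (Nat.dvd_div_iff_mul_dvd hN₁m).mpr (dvd_trans ⟨q - 1, by ring⟩ hkey)
  have hqr : (q - 1) ∣ r' := (Nat.dvd_div_iff_mul_dvd hN₁m).mpr (dvd_trans ⟨2, by ring⟩ hkey)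
  -- coprimality of N₂ with q - 1
  have hcop : (Nat.card Fˣ).Coprime N₂ := by
    have hcardu : Nat.card Fˣ = q - 1 := by
      rw [Nat.card_units, Nat.card_eq_fintype_card]
    rw [hcardu, Nat.coprime_comm, hN₂, Nat.coprime_list_prod_left_iff]
    intro ℓ hℓ
    have hmem := List.mem_of_mem_filter hℓ
    have hflt := List.of_mem_filter hℓ
    have hℓp : ℓ.Prime := hprime ℓ hmem
    have hnot : ¬ (ℓ < Q ∧ ℓ ≠ p) := by
      intro hc
      rw [hb] at hflt
      simp only [Bool.not_eq_true', decide_eq_false_iff_not] at hflt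
      exact hflt hc
    rw [hℓp.coprime_iff_not_dvd]
    intro hdvd
    have hle : ℓ ≤ q - 1 := Nat.le_of_dvd (by omega) hdvd
    have hℓQ : ℓ < Q := by omega
    have hℓp' : ℓ = p := by tauto
    have hpq : p ∣ q := by
      rw [hq, hqpow]
      exact dvd_pow_self p (by positivity)
    rw [hℓp'] at hdvd
    have hd1 : p ∣ 1 := by
      have := Nat.dvd_sub hpq hdvd
      have hq1 : q - (q - 1) = 1 := by omega
      rwa [hq1] at this
    have h1 := Nat.le_of_dvd one_pos hd1
    have h2 := hpprime.two_le
    omega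
  -- obtain an N₂-th root of lam among units
  obtain ⟨μ, hμ⟩ : ∃ μ : Fˣ, μ ^ N₂ = Units.mk0 lam hlam0 := by
    refine ⟨(powCoprime hcop).symm (Units.mk0 lam hlam0), ?_⟩
    have := (powCoprime hcop).apply_symm_apply (Units.mk0 lam hlam0)
    rwa [powCoprime_apply] at this
  obtain ⟨n, hn⟩ : ∃ n, N₁ = n + 1 := ⟨N₁ - 1, by omega⟩
  obtain ⟨M, hMpow, hMdet⟩ := block_exists (F := F) n r' (μ : F)
  -- the determinant is 1
  have hμq : μ ^ (q - 1) = 1 := by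
    have hcardu : Nat.card Fˣ = q - 1 := by
      rw [Nat.card_units, hq, Nat.card_eq_fintype_card]
    rw [← hcardu]
    exact pow_card_eq_one'
  have hdet1 : M.det = 1 := by
    rw [hMdet, mul_pow]
    obtain ⟨c2, hc2⟩ := h2r
    obtain ⟨c3, hc3⟩ := hqr
    have hneg : ((-1 : F) ^ n) ^ r' = 1 := by
      rw [← pow_mul]
      exact Even.neg_one_pow ⟨n * c2, by rw [hc2]; ring⟩
    have hμr : (μ : F) ^ r' = 1 := by
      have : μ ^ r' = 1 := by
        rw [hc3, pow_mul, hμq, one_pow]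
      rw [← Units.val_pow_eq_pow_val, this, Units.val_one]
    rw [hneg, hμr, one_mul]
  -- transport to Fin m
  have hrm : r' * (n + 1) = m := by rw [← hn]; exact hmr
  set e : Fin r' × Fin (n + 1) ≃ Fin m := finProdFinEquiv.trans (finCongr hrm) with he
  set H : Matrix (Fin m) (Fin m) F := Matrix.reindex e e M with hH
  have hHdet : H.det = 1 := by rw [hH, Matrix.det_reindex_self, hdet1]
  -- compute M ^ N
  have hMN : M ^ N = lam • (1 : Matrix (Fin r' × Fin (n + 1)) (Fin r' × Fin (n + 1)) F) := by
    have hval : (μ : F) ^ N₂ = lam := by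
      rw [← Units.val_pow_eq_pow_val, hμ, Units.val_mk0]
    rw [← hsplit, hn, pow_mul, hMpow, smul_pow, one_pow, hval]
  have hHN : H ^ N = lam • (1 : Matrix (Fin m) (Fin m) F) := by
    have h1 : H = Matrix.reindexAlgEquiv F F e M := by rw [hH, Matrix.reindexAlgEquiv_apply]
    rw [h1, ← map_pow, hMN, _root_.map_smul, _root_.map_one]
  refine ⟨⟨H, hHdet⟩, ?_⟩
  apply Subtype.ext
  show H ^ N = (z : Matrix (Fin m) (Fin m) F)
  rw [hHN, ← hlamz]
  rw [Matrix.scalar_apply, Matrix.smul_one_eq_diagonal]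
end

section
/- Let n ≥ 7 and let x ∈ GL_n(𝔽₃) be unbreakable, meaning that there is no direct sum decomposition 𝔽₃ⁿ = U ⊕ W into two nonzero x-invariant subspaces U and W with dim U ≠ 2 and dim W ≠ 2. Then the centralizer of x in GL_n(𝔽₃) has order at most 3^{n+2} · 2⁴. -/
open Module Polynomial


section cyclic
variable {K : Type*} [Field K] (a : K[X]) (B : Type*) [AddCommGroup B] [Module K[X] B]
  [Module K B] [IsScalarTower K K[X] B]

/-- scalar multiplication by `a` as a `K`-linear endomorphism of `B`. -/
noncomputable def smulK : B →ₗ[K] B where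
  toFun y := a • y
  map_add' := smul_add a
  map_smul' c y := (smul_comm a c y)

@[simp] lemma smulK_apply (y : B) : smulK a B y = a • y := rfl

lemma mk_smul_one (r : K[X]) :
    (r • Submodule.Quotient.mk 1 : K[X] ⧸ Submodule.span K[X] {a}) = Submodule.Quotient.mk r := by
  rw [← Submodule.Quotient.mk_smul]; simp

/-- Hom from a cyclic module is the `a`-torsion of the target. -/
noncomputable def homCyclicEquiv :
    ((K[X] ⧸ Submodule.span K[X] {a}) →ₗ[K[X]] B) ≃ₗ[K] LinearMap.ker (smulK a B) where
  toFun φ := ⟨φ (Submodule.Quotient.mk 1), by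
    simp only [LinearMap.mem_ker, smulK_apply, ← map_smul, mk_smul_one]
    rw [show (Submodule.Quotient.mk a : K[X] ⧸ Submodule.span K[X] {a}) = 0 from
      (Submodule.Quotient.mk_eq_zero _).2 (Submodule.mem_span_singleton_self a), map_zero]⟩
  map_add' φ ψ := rfl
  map_smul' c φ := rfl
  invFun y := Submodule.liftQ _ (LinearMap.toSpanSingleton K[X] B y.1) (by
      rw [Submodule.span_singleton_le_iff_mem]
      simp only [LinearMap.mem_ker, LinearMap.toSpanSingleton_apply]
      exact y.2)
  left_inv φ := by
    apply LinearMap.ext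
    intro z
    obtain ⟨r, rfl⟩ := Submodule.Quotient.mk_surjective _ z
    show Submodule.liftQ _ _ _ (Submodule.Quotient.mk r) = φ (Submodule.Quotient.mk r)
    rw [Submodule.liftQ_apply, LinearMap.toSpanSingleton_apply, ← mk_smul_one a r, map_smul]
  right_inv y := by
    ext
    show Submodule.liftQ _ _ _ (Submodule.Quotient.mk 1) = (y : B)
    rw [Submodule.liftQ_apply, LinearMap.toSpanSingleton_apply, one_smul]
end cyclic

section bounds
set_option maxHeartbeats 1000000
variable {K : Type*} [Field K] (a b : K[X])

lemma finrank_hom_cyclic_le_right (B : Type*) [AddCommGroup B] [Module K[X] B]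
    [Module K B] [IsScalarTower K K[X] B] [FiniteDimensional K B] :
    finrank K ((K[X] ⧸ Submodule.span K[X] {a}) →ₗ[K[X]] B) ≤ finrank K B := by
  rw [(homCyclicEquiv a B).finrank_eq]
  exact Submodule.finrank_le _

lemma finrank_hom_cyclic_le_left
    [FiniteDimensional K (K[X] ⧸ Submodule.span K[X] ({a} : Set K[X]))]
    [FiniteDimensional K (K[X] ⧸ Submodule.span K[X] ({b} : Set K[X]))] :
    finrank K ((K[X] ⧸ Submodule.span K[X] {a}) →ₗ[K[X]] (K[X] ⧸ Submodule.span K[X] {b}))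
      ≤ finrank K (K[X] ⧸ Submodule.span K[X] ({a} : Set K[X])) := by
  set B := K[X] ⧸ Submodule.span K[X] ({b} : Set K[X]) with hB
  set aID : B →ₗ[K[X]] B := a • LinearMap.id with haID
  set ρ : Submodule K[X] B := LinearMap.range aID with hρ
  have hrs : ρ.restrictScalars K = LinearMap.range (smulK a B) := by
    ext y
    simp [hρ, haID, smulK]
  -- the cokernel surjection
  have hg : Submodule.span K[X] ({a} : Set K[X]) ≤ LinearMap.ker
      ((ρ.mkQ).comp (LinearMap.toSpanSingleton K[X] B (Submodule.Quotient.mk 1))) := by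
    rw [Submodule.span_singleton_le_iff_mem]
    simp only [LinearMap.mem_ker, LinearMap.comp_apply, LinearMap.toSpanSingleton_apply,
      Submodule.mkQ_apply, Submodule.Quotient.mk_eq_zero]
    exact ⟨Submodule.Quotient.mk 1, by simp [haID]⟩
  set σ : (K[X] ⧸ Submodule.span K[X] ({a} : Set K[X])) →ₗ[K[X]] (B ⧸ ρ) :=
    Submodule.liftQ _ _ hg with hσ
  have hσsurj : Function.Surjective σ := by
    intro z
    obtain ⟨y, rfl⟩ := Submodule.Quotient.mk_surjective _ z
    obtain ⟨r, rfl⟩ := Submodule.Quotient.mk_surjective _ y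
    refine ⟨Submodule.Quotient.mk r, ?_⟩
    show Submodule.liftQ _ _ hg (Submodule.Quotient.mk r) = _
    rw [Submodule.liftQ_apply]
    simp only [LinearMap.comp_apply, LinearMap.toSpanSingleton_apply, Submodule.mkQ_apply]
    rw [mk_smul_one]
  -- rank computations
  have e1 : finrank K ((K[X] ⧸ Submodule.span K[X] {a}) →ₗ[K[X]] B)
      = finrank K (LinearMap.ker (smulK a B)) := (homCyclicEquiv a B).finrank_eq
  have e2 := LinearMap.finrank_range_add_finrank_ker (smulK a B)
  have e3 := Submodule.finrank_quotient_add_finrank (LinearMap.range (smulK a B))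
  have e4 : finrank K (B ⧸ LinearMap.range (smulK a B)) = finrank K (B ⧸ ρ) := by
    rw [← hrs]
    exact (Submodule.Quotient.restrictScalarsEquiv K ρ).finrank_eq
  rw [e1]
  have e6 : finrank K (LinearMap.ker (smulK a B)) = finrank K (B ⧸ LinearMap.range (smulK a B)) := by
    omega
  rw [e6, e4]
  have e5 : finrank K (B ⧸ ρ) ≤ finrank K (K[X] ⧸ Submodule.span K[X] ({a} : Set K[X])) := by
    have : LinearMap.range (σ.restrictScalars K) = ⊤ := by
      rw [LinearMap.range_eq_top]; exact hσsurj
    calc finrank K (B ⧸ ρ) = finrank K (⊤ : Submodule K (B ⧸ ρ)) := (finrank_top K _).symm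
    _ = finrank K (LinearMap.range (σ.restrictScalars K)) := by rw [this]
    _ ≤ _ := LinearMap.finrank_range_le _
  exact e5

end bounds


section helpers
variable {K R : Type*} [Field K] [CommRing R] [Algebra K R]
variable {M N M' N' : Type*}
  [AddCommGroup M] [Module R M] [Module K M] [IsScalarTower K R M]
  [AddCommGroup N] [Module R N] [Module K N] [IsScalarTower K R N]
  [AddCommGroup M'] [Module R M'] [Module K M'] [IsScalarTower K R M']
  [AddCommGroup N'] [Module R N'] [Module K N'] [IsScalarTower K R N']

/-- Conjugating by `R`-linear equivalences, as a `K`-linear equivalence of hom spaces. -/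
noncomputable def homCongrK (e : M ≃ₗ[R] N) (e' : M' ≃ₗ[R] N') :
    (M →ₗ[R] M') ≃ₗ[K] (N →ₗ[R] N') where
  toFun g := e'.toLinearMap ∘ₗ g ∘ₗ e.symm.toLinearMap
  invFun g := e'.symm.toLinearMap ∘ₗ g ∘ₗ e.toLinearMap
  map_add' g h := by ext z; simp
  map_smul' c g := by
    ext z
    simp only [LinearMap.comp_apply, LinearEquiv.coe_coe, LinearMap.smul_apply, RingHom.id_apply]
    exact LinearMap.map_smul_of_tower e'.toLinearMap c _
  left_inv g := by ext z; simp
  right_inv g := by ext z; simp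

variable (K R) in
/-- Hom into a finite product, as a `K`-linear equivalence. -/
noncomputable def homPiK {ι : Type*} [Finite ι] (A : ι → Type*)
    [∀ i, AddCommGroup (A i)] [∀ i, Module R (A i)]
    [∀ i, Module K (A i)] [∀ i, IsScalarTower K R (A i)] :
    (M →ₗ[R] ∀ i, A i) ≃ₗ[K] ∀ i, (M →ₗ[R] A i) where
  toFun g i := LinearMap.proj i ∘ₗ g
  invFun h := LinearMap.pi h
  map_add' g h := rfl
  map_smul' c g := rfl
  left_inv g := by ext z i; rfl
  right_inv h := by ext i z; rfl

variable (K) in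
lemma finrank_homCongrK (e : M ≃ₗ[R] N) (e' : M' ≃ₗ[R] N') :
    finrank K (M →ₗ[R] M') = finrank K (N →ₗ[R] N') :=
  (homCongrK (K := K) e e').finrank_eq

variable (K R) in
lemma finrank_homPiK {ι : Type*} [Fintype ι] (A : ι → Type*)
    [∀ i, AddCommGroup (A i)] [∀ i, Module R (A i)]
    [∀ i, Module K (A i)] [∀ i, IsScalarTower K R (A i)]
    [∀ i, FiniteDimensional K (M →ₗ[R] A i)] :
    finrank K (M →ₗ[R] ∀ i, A i) = ∑ i, finrank K (M →ₗ[R] A i) := by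
  rw [(homPiK K R A (M := M)).finrank_eq, finrank_pi_fintype K]

variable (K R) in
lemma finrank_End_pi {ι : Type*} [Fintype ι] [DecidableEq ι] (A : ι → Type*)
    [∀ i, AddCommGroup (A i)] [∀ i, Module R (A i)]
    [∀ i, Module K (A i)] [∀ i, IsScalarTower K R (A i)]
    [∀ i, FiniteDimensional K (A i →ₗ[R] ∀ j, A j)] :
    finrank K ((∀ i, A i) →ₗ[R] ∀ i, A i) = ∑ i, finrank K (A i →ₗ[R] ∀ j, A j) := by
  rw [← (LinearMap.lsum (R := R) (φ := A) (M := ∀ i, A i) K).finrank_eq, finrank_pi_fintype K]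

end helpers

section comb
variable {ι : Type*} [Fintype ι] [DecidableEq ι]

lemma comb_sum_compl (D : ι → ℕ) (n : ℕ) (hsum : ∑ i, D i = n) (s : Finset ι) :
    ∑ i ∈ s, D i + ∑ i ∈ sᶜ, D i = n := by
  rw [Finset.sum_add_sum_compl, hsum]

lemma comb_main (D : ι → ℕ) (n : ℕ) (hn : 7 ≤ n) (hsum : ∑ i, D i = n)
    (H : ∀ s : Finset ι, (∑ i ∈ s, D i = 0) ∨ (∑ i ∈ sᶜ, D i = 0) ∨
      (∑ i ∈ s, D i = 2) ∨ (∑ i ∈ sᶜ, D i = 2)) :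
    ∑ i, ∑ j, min (D i) (D j) ≤ n + 4 := by
  -- pairwise bound
  have C2 : ∀ a b : ι, a ≠ b → D a ≠ 0 → D b ≠ 0 → min (D a) (D b) ≤ 2 := by
    intro a b hab ha hb
    have hsing : ∑ i ∈ ({a} : Finset ι), D i = D a := Finset.sum_singleton _ _
    have hbmem : b ∈ ({a} : Finset ι)ᶜ := by simp [Ne.symm hab]
    have hble : D b ≤ ∑ i ∈ ({a} : Finset ι)ᶜ, D i :=
      Finset.single_le_sum (fun i _ => Nat.zero_le _) hbmem
    rcases H {a} with h | h | h | h <;> omega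
  -- no three distinct indices with nonzero dimension
  have step : ∀ a b c : ι, a ≠ b → a ≠ c → b ≠ c → D a ≠ 0 → D b ≠ 0 → D c ≠ 0 →
      D a ≠ 2 → False := by
    intro a b c hab hac hbc ha hb hc ha2
    have hsing : ∑ i ∈ ({a} : Finset ι), D i = D a := Finset.sum_singleton _ _
    have hpair : ({b, c} : Finset ι) ⊆ ({a} : Finset ι)ᶜ := by
      intro i hi
      simp only [Finset.mem_insert, Finset.mem_singleton] at hi
      rcases hi with rfl | rfl <;> simp [Ne.symm hab, Ne.symm hac]
    have hbc' : ∑ i ∈ ({b, c} : Finset ι), D i = D b + D c := Finset.sum_pair hbc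
    have hle : D b + D c ≤ ∑ i ∈ ({a} : Finset ι)ᶜ, D i := by
      rw [← hbc']
      exact Finset.sum_le_sum_of_subset hpair
    have hca := comb_sum_compl D n hsum {a}
    have hcb := comb_sum_compl D n hsum {b}
    have hsingb : ∑ i ∈ ({b} : Finset ι), D i = D b := Finset.sum_singleton _ _
    have hamem : a ∈ ({b} : Finset ι)ᶜ := by simp [hab]
    have hale : D a ≤ ∑ i ∈ ({b} : Finset ι)ᶜ, D i :=
      Finset.single_le_sum (fun i _ => Nat.zero_le _) hamem
    -- from H {a} : complement sum is 2, so D b = D c = 1 and D a = n - 2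
    have h1 : D b = 1 ∧ D a = n - 2 := by
      rcases H {a} with h | h | h | h <;> omega
    rcases H {b} with h | h | h | h <;> omega
  have C1 : ∀ a b c : ι, a ≠ b → a ≠ c → b ≠ c → D a ≠ 0 → D b ≠ 0 → D c ≠ 0 → False := by
    intro a b c hab hac hbc ha hb hc
    have h2a : D a = 2 := by_contra fun h => step a b c hab hac hbc ha hb hc h
    have h2b : D b = 2 := by_contra fun h => step b a c (Ne.symm hab) hbc hac hb ha hc h
    have h2c : D c = 2 := by_contra fun h => step c a b (Ne.symm hac) (Ne.symm hbc) hab hc ha hb h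
    have hpair : ∑ i ∈ ({a, b} : Finset ι), D i = D a + D b := Finset.sum_pair hab
    have hcab := comb_sum_compl D n hsum {a, b}
    rcases H {a, b} with h | h | h | h <;> omega
  -- rewrite the double sum separating the diagonal
  have diag : ∀ i : ι, ∑ j, min (D i) (D j) =
      D i + ∑ j ∈ Finset.univ.erase i, min (D i) (D j) := by
    intro i
    rw [← Finset.add_sum_erase _ _ (Finset.mem_univ i), min_self]
  have total : ∑ i, ∑ j, min (D i) (D j)
      = n + ∑ i, ∑ j ∈ Finset.univ.erase i, min (D i) (D j) := by
    calc ∑ i, ∑ j, min (D i) (D j)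
        = ∑ i, (D i + ∑ j ∈ Finset.univ.erase i, min (D i) (D j)) := by
          exact Finset.sum_congr rfl fun i _ => diag i
      _ = ∑ i, D i + ∑ i, ∑ j ∈ Finset.univ.erase i, min (D i) (D j) :=
          Finset.sum_add_distrib
      _ = n + _ := by rw [hsum]
  rw [total]
  have off : ∑ i, ∑ j ∈ Finset.univ.erase i, min (D i) (D j) ≤ 4 := by
    by_cases hex : ∃ a b : ι, a ≠ b ∧ D a ≠ 0 ∧ D b ≠ 0
    · obtain ⟨a, b, hab, ha, hb⟩ := hex
      have hterm : ∀ i : ι, ∀ j ∈ Finset.univ.erase i, min (D i) (D j) ≤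
          (if i = a ∧ j = b then 2 else 0) + (if i = b ∧ j = a then 2 else 0) := by
        intro i j hj
        have hij : j ≠ i := Finset.ne_of_mem_erase hj
        by_cases hdi : D i = 0
        · simp [hdi]
        by_cases hdj : D j = 0
        · simp [hdj]
        have hia : i = a ∨ i = b := by
          by_contra hcon
          push_neg at hcon
          exact C1 i a b hcon.1 hcon.2 hab hdi ha hb
        have hja : j = a ∨ j = b := by
          by_contra hcon
          push_neg at hcon
          exact C1 j a b hcon.1 hcon.2 hab hdj ha hb
        have hmin := C2 i j (Ne.symm hij) hdi hdj
        rcases hia with rfl | rfl <;> rcases hja with rfl | rfl <;>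
          simp_all <;> omega
      have single : ∀ c d : ι, (∑ i, ∑ j, if i = c ∧ j = d then (2:ℕ) else 0) = 2 := by
        intro c d
        have hrow : ∀ i : ι, (∑ j, if i = c ∧ j = d then (2:ℕ) else 0)
            = if i = c then 2 else 0 := by
          intro i
          by_cases h : i = c
          · subst h; simp
          · simp [h]
        rw [Finset.sum_congr rfl fun i _ => hrow i]
        simp
      calc ∑ i, ∑ j ∈ Finset.univ.erase i, min (D i) (D j)
          ≤ ∑ i, ∑ j ∈ Finset.univ.erase i,
            ((if i = a ∧ j = b then 2 else 0) + (if i = b ∧ j = a then 2 else 0)) :=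
            Finset.sum_le_sum fun i _ => Finset.sum_le_sum (hterm i)
        _ ≤ ∑ i, ∑ j,
            ((if i = a ∧ j = b then 2 else 0) + (if i = b ∧ j = a then 2 else 0)) :=
            Finset.sum_le_sum fun i _ => Finset.sum_le_sum_of_subset (Finset.erase_subset _ _)
        _ = (∑ i, ∑ j, if i = a ∧ j = b then 2 else 0)
            + (∑ i, ∑ j, if i = b ∧ j = a then 2 else 0) := by
            rw [← Finset.sum_add_distrib]
            exact Finset.sum_congr rfl fun i _ => Finset.sum_add_distrib
        _ ≤ 4 := by rw [single a b, single b a]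
    · push_neg at hex
      have : ∀ i : ι, ∑ j ∈ Finset.univ.erase i, min (D i) (D j) = 0 := by
        intro i
        refine Finset.sum_eq_zero fun j hj => ?_
        have hij : j ≠ i := Finset.ne_of_mem_erase hj
        rcases Nat.eq_zero_or_pos (D j) with h | h
        · simp [h]
        · have := hex j i hij
          rcases Nat.eq_zero_or_pos (D i) with h' | h'
          · simp [h']
          · exact absurd (this (by omega)) (by omega)
      simp [this]
  omega
end comb


section pisub
variable {R K : Type*} [Field K] [CommRing R] [Algebra K R]
  {ι : Type*} [Fintype ι] [DecidableEq ι]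
  (A : ι → Type*) [∀ i, AddCommGroup (A i)] [∀ i, Module R (A i)]

variable (R) in
/-- The submodule of a finite product supported on `s`. -/
def piSub (s : Finset ι) : Submodule R (∀ i, A i) where
  carrier := {z | ∀ i ∉ s, z i = 0}
  add_mem' := by
    intro z w hz hw i hi
    simp [hz i hi, hw i hi]
  zero_mem' := fun i _ => rfl
  smul_mem' := by
    intro c z hz i hi
    simp [hz i hi]

lemma mem_piSub {s : Finset ι} {z : ∀ i, A i} : z ∈ piSub R A s ↔ ∀ i ∉ s, z i = 0 := Iff.rfl

lemma piSub_isCompl (s : Finset ι) : IsCompl (piSub R A s) (piSub R A sᶜ) := by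
  constructor
  · rw [disjoint_iff, eq_bot_iff]
    intro z hz
    obtain ⟨h1, h2⟩ := Submodule.mem_inf.1 hz
    have : z = 0 := by
      funext i
      by_cases h : i ∈ s
      · exact h2 i (by simp [h])
      · exact h1 i h
    simp [this]
  · rw [codisjoint_iff, eq_top_iff]
    intro z _
    refine Submodule.mem_sup.2 ⟨fun i => if i ∈ s then z i else 0, ?_,
      fun i => if i ∈ s then 0 else z i, ?_, ?_⟩
    · intro i hi; simp [hi]
    · intro i hi
      simp only [Finset.mem_compl, not_not] at hi
      simp [hi]
    · funext i
      by_cases h : i ∈ s <;> simp [h]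

/-- `piSub R A s` is isomorphic to the product over `s`. -/
noncomputable def piSubEquiv (s : Finset ι) : piSub R A s ≃ₗ[R] (∀ i : {i // i ∈ s}, A i) where
  toFun z i := z.1 i.1
  map_add' z w := rfl
  map_smul' c z := rfl
  invFun v := ⟨fun i => if h : i ∈ s then v ⟨i, h⟩ else 0, fun i hi => dif_neg hi⟩
  left_inv z := by
    apply Subtype.ext
    funext i
    by_cases h : i ∈ s
    · simp [h]
    · simp [h, z.2 i h]
  right_inv v := by
    funext i
    simp [i.2]

variable [∀ i, Module K (A i)] [∀ i, IsScalarTower K R (A i)]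

lemma finrank_piSub [∀ i, FiniteDimensional K (A i)] (s : Finset ι) :
    finrank K (piSub R A s) = ∑ i ∈ s, finrank K (A i) := by
  rw [((piSubEquiv A s).restrictScalars K).finrank_eq, finrank_pi_fintype K,
    ← Finset.sum_coe_sort s (fun i => finrank K (A i))]

end pisub

section homfin
variable {K R : Type*} [Field K] [CommRing R] [Algebra K R]
  {M N : Type*}
  [AddCommGroup M] [Module R M] [Module K M] [IsScalarTower K R M]
  [AddCommGroup N] [Module R N] [Module K N] [IsScalarTower K R N]

lemma finiteDimensional_homR [FiniteDimensional K M] [FiniteDimensional K N] :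
    FiniteDimensional K (M →ₗ[R] N) :=
  FiniteDimensional.of_injective (LinearMap.restrictScalarsₗ K R M N K)
    (LinearMap.restrictScalars_injective K)
end homfin


set_option maxHeartbeats 2000000 in
set_option synthInstance.maxHeartbeats 200000 in
theorem main_aux (n : ℕ) (hn : 7 ≤ n) (f : Module.End (ZMod 3) (Fin n → ZMod 3))
    (hfb : Function.Bijective f)
    (hunbr : ∀ U W : Submodule (ZMod 3) (Fin n → ZMod 3), U ≠ ⊥ → W ≠ ⊥ → IsCompl U W →
      U.map (f : (Fin n → ZMod 3) →ₗ[ZMod 3] (Fin n → ZMod 3)) = U → W.map f = W →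
      finrank (ZMod 3) U = 2 ∨ finrank (ZMod 3) W = 2) :
    finrank (ZMod 3) (Module.AEval' f →ₗ[(ZMod 3)[X]] Module.AEval' f) ≤ n + 4 := by
  classical
  -- torsion
  have htors : Module.IsTorsion (ZMod 3)[X] (Module.AEval' f) := by
    intro m
    refine ⟨⟨LinearMap.charpoly f, mem_nonZeroDivisors_of_ne_zero (f.charpoly_monic).ne_zero⟩, ?_⟩
    show (LinearMap.charpoly f) • m = 0
    apply (Module.AEval'.of f).symm.injective
    rw [Module.AEval.of_symm_smul]
    simp [f.aeval_self_charpoly]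
  obtain ⟨ι, hfin, p, hp, e, ⟨ψ₀⟩⟩ := Module.equiv_directSum_of_isTorsion htors
  set A : ι → Type := fun i => (ZMod 3)[X] ⧸ ((ZMod 3)[X] ∙ (p i ^ e i)) with hA
  let ψ : Module.AEval' f ≃ₗ[(ZMod 3)[X]] ∀ i, A i :=
    ψ₀.trans (DirectSum.linearEquivFunOnFintype (ZMod 3)[X] ι A)
  set D : ι → ℕ := fun i => finrank (ZMod 3) (A i) with hD
  haveI hMfin : FiniteDimensional (ZMod 3) (Module.AEval' f) := inferInstance
  haveI hNfin : FiniteDimensional (ZMod 3) (∀ i, A i) :=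
    Module.Finite.equiv (ψ.restrictScalars (ZMod 3))
  haveI hAfin : ∀ i, FiniteDimensional (ZMod 3) (A i) := by
    intro i
    exact FiniteDimensional.of_injective
      ((LinearMap.single (ZMod 3)[X] A i).restrictScalars (ZMod 3))
      (Pi.single_injective (M := A) i)
  have hDsum : ∑ i, D i = n := by
    have h1 : finrank (ZMod 3) (∀ i, A i) = ∑ i, D i := finrank_pi_fintype (ZMod 3)
    have h2 : finrank (ZMod 3) (Module.AEval' f) = n := by
      rw [← (Module.AEval'.of f).finrank_eq, Module.finrank_fin_fun]
    have h3 : finrank (ZMod 3) (Module.AEval' f) = finrank (ZMod 3) (∀ i, A i) :=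
      (ψ.restrictScalars (ZMod 3)).finrank_eq
    omega
  -- the invariant subspace of `V` associated with a finset of indices
  set Ω := Module.AEval.mapSubmodule (ZMod 3) (Fin n → ZMod 3) f with hΩ
  set UU : Finset ι → Submodule (ZMod 3) (Fin n → ZMod 3) := fun t =>
    ((Ω.symm ((piSub (ZMod 3)[X] A t).map
      (ψ.symm : (∀ i, A i) →ₗ[(ZMod 3)[X]] Module.AEval' f))) :
        Submodule (ZMod 3) (Fin n → ZMod 3)) with hUU
  have fact1 : ∀ t : Finset ι, finrank (ZMod 3) (UU t) = ∑ i ∈ t, D i := by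
    intro t
    set Q := (piSub (ZMod 3)[X] A t).map
      (ψ.symm : (∀ i, A i) →ₗ[(ZMod 3)[X]] Module.AEval' f) with hQ
    have h0 : Ω ⟨((Ω.symm Q : _) : Submodule (ZMod 3) (Fin n → ZMod 3)), (Ω.symm Q).2⟩ = Q := by
      rw [Subtype.coe_eta]
      exact Ω.apply_symm_apply Q
    have e1 : finrank (ZMod 3) (UU t) =
        finrank (ZMod 3) (Ω ⟨((Ω.symm Q : _) : Submodule (ZMod 3) (Fin n → ZMod 3)), (Ω.symm Q).2⟩ :
        Submodule (ZMod 3)[X] (Module.AEval (ZMod 3) (Fin n → ZMod 3) f)) :=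
      (Module.AEval.equiv_mapSubmodule f _ _).finrank_eq
    rw [e1, h0, hQ,
      ← ((ψ.symm.submoduleMap (piSub (ZMod 3)[X] A t)).restrictScalars (ZMod 3)).finrank_eq,
      finrank_piSub]
  have fact2 : ∀ t : Finset ι,
      (UU t).map (f : (Fin n → ZMod 3) →ₗ[ZMod 3] (Fin n → ZMod 3)) = UU t := by
    intro t
    have hp := (Ω.symm ((piSub (ZMod 3)[X] A t).map
      (ψ.symm : (∀ i, A i) →ₗ[(ZMod 3)[X]] Module.AEval' f))).2
    rw [Module.End.mem_invtSubmodule] at hp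
    have hle : (UU t).map f ≤ UU t := by
      rintro y ⟨v, hv, rfl⟩
      exact hp hv
    have heq : finrank (ZMod 3) ((UU t).map f) = finrank (ZMod 3) (UU t) :=
      LinearEquiv.finrank_map_eq (LinearEquiv.ofBijective f hfb) (UU t)
    exact Submodule.eq_of_le_of_finrank_eq hle heq
  have fact3 : ∀ s : Finset ι, IsCompl (UU s) (UU sᶜ) := by
    intro s
    have hc0 : IsCompl (piSub (ZMod 3)[X] A s) (piSub (ZMod 3)[X] A sᶜ) := piSub_isCompl A s
    set O := Submodule.orderIsoMapComap
      (ψ.symm : (∀ i, A i) ≃ₗ[(ZMod 3)[X]] Module.AEval' f) with hO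
    have hc1 : IsCompl (O (piSub (ZMod 3)[X] A s)) (O (piSub (ZMod 3)[X] A sᶜ)) := by
      constructor
      · rw [disjoint_iff, ← O.map_inf, disjoint_iff.1 hc0.1]
        exact O.map_bot
      · rw [codisjoint_iff, ← O.map_sup, codisjoint_iff.1 hc0.2]
        exact O.map_top
    have hc2 : IsCompl (Ω.symm (O (piSub (ZMod 3)[X] A s)))
        (Ω.symm (O (piSub (ZMod 3)[X] A sᶜ))) := by
      constructor
      · rw [disjoint_iff, ← Ω.symm.map_inf, disjoint_iff.1 hc1.1]
        exact Ω.symm.map_bot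
      · rw [codisjoint_iff, ← Ω.symm.map_sup, codisjoint_iff.1 hc1.2]
        exact Ω.symm.map_top
    exact (Module.End.invtSubmodule.isCompl_iff _).1 hc2
  have hH : ∀ s : Finset ι, (∑ i ∈ s, D i = 0) ∨ (∑ i ∈ sᶜ, D i = 0) ∨
      (∑ i ∈ s, D i = 2) ∨ (∑ i ∈ sᶜ, D i = 2) := by
    intro s
    by_contra hcon
    push_neg at hcon
    obtain ⟨h1, h2, h3, h4⟩ := hcon
    have hU := fact1 s
    have hW := fact1 sᶜ
    have hUne : UU s ≠ ⊥ := by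
      intro hbot
      rw [hbot, finrank_bot] at hU
      exact h1 hU.symm
    have hWne : UU sᶜ ≠ ⊥ := by
      intro hbot
      rw [hbot, finrank_bot] at hW
      exact h2 hW.symm
    rcases hunbr (UU s) (UU sᶜ) hUne hWne (fact3 s) (fact2 s) (fact2 sᶜ) with h | h
    · exact h3 (hU ▸ h)
    · exact h4 (hW ▸ h)
  -- dimension bounds for Hom spaces
  haveI hfd2 : ∀ i j : ι, FiniteDimensional (ZMod 3) (A i →ₗ[(ZMod 3)[X]] A j) :=
    fun i j => finiteDimensional_homR
  haveI hfd1 : ∀ i : ι, FiniteDimensional (ZMod 3) (A i →ₗ[(ZMod 3)[X]] ∀ j, A j) :=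
    fun i => finiteDimensional_homR
  have hhom : ∀ i j : ι, finrank (ZMod 3) (A i →ₗ[(ZMod 3)[X]] A j) ≤ min (D i) (D j) :=
    fun i j => le_min (finrank_hom_cyclic_le_left (p i ^ e i) (p j ^ e j))
      (finrank_hom_cyclic_le_right (p i ^ e i) (A j))
  have hEnd : finrank (ZMod 3) (Module.AEval' f →ₗ[(ZMod 3)[X]] Module.AEval' f)
      = ∑ i, ∑ j, finrank (ZMod 3) (A i →ₗ[(ZMod 3)[X]] A j) := by
    rw [finrank_homCongrK (ZMod 3) ψ ψ, finrank_End_pi (ZMod 3) (ZMod 3)[X] A]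
    refine Finset.sum_congr rfl fun i _ => ?_
    rw [finrank_homPiK (ZMod 3) (ZMod 3)[X] A]
  rw [hEnd]
  calc ∑ i, ∑ j, finrank (ZMod 3) (A i →ₗ[(ZMod 3)[X]] A j)
      ≤ ∑ i, ∑ j, min (D i) (D j) :=
        Finset.sum_le_sum fun i _ => Finset.sum_le_sum fun j _ => hhom i j
    _ ≤ n + 4 := comb_main D n hn hDsum hH

/-- The commutant of a matrix, as a submodule of the matrix space. -/
def commS (n : ℕ) (x : Matrix (Fin n) (Fin n) (ZMod 3)) :
    Submodule (ZMod 3) (Matrix (Fin n) (Fin n) (ZMod 3)) where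
  carrier := {A | A * x = x * A}
  add_mem' := by
    intro A B hA hB
    simp only [Set.mem_setOf_eq] at *
    rw [add_mul, mul_add, hA, hB]
  zero_mem' := by simp
  smul_mem' := by
    intro c A hA
    simp only [Set.mem_setOf_eq] at *
    rw [Matrix.smul_mul, Matrix.mul_smul, hA]

set_option maxHeartbeats 1000000 in
/-- The commutant embeds into the `R[X]`-module endomorphisms of `AEval'`. -/
noncomputable def PhiMap (n : ℕ) (x : Matrix (Fin n) (Fin n) (ZMod 3)) :
    commS n x →ₗ[ZMod 3]
      (Module.AEval' (Matrix.mulVecLin x) →ₗ[(ZMod 3)[X]] Module.AEval' (Matrix.mulVecLin x)) where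
  toFun A := LinearMap.ofAEval (Matrix.mulVecLin x)
    ((Module.AEval'.of (Matrix.mulVecLin x)).toLinearMap ∘ₗ Matrix.mulVecLin A.1)
    (fun m => by
      have hcomm : Matrix.mulVecLin (A.1 * x) = Matrix.mulVecLin (x * A.1) := by rw [A.2]
      rw [Matrix.mulVecLin_mul, Matrix.mulVecLin_mul] at hcomm
      simp only [LinearMap.comp_apply, LinearEquiv.coe_toLinearMap]
      rw [Module.AEval'.X_smul_of]
      show Module.AEval'.of _ ((Matrix.mulVecLin A.1).comp (Matrix.mulVecLin x) m) = _
      rw [hcomm]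
      rfl)
  map_add' A B := by
    apply LinearMap.ext
    intro m
    show Module.AEval'.of _ (Matrix.mulVecLin (A.1 + B.1) _) = _
    rw [Matrix.mulVecLin_add]
    rfl
  map_smul' c A := by
    apply LinearMap.ext
    intro m
    show Module.AEval'.of _ (Matrix.mulVecLin (c • A.1) _) = _
    have : Matrix.mulVecLin (c • A.1) = c • Matrix.mulVecLin A.1 := by
      apply LinearMap.ext
      intro v
      simp [Matrix.smul_mulVec]
    rw [this]
    rfl

lemma PhiMap_injective (n : ℕ) (x : Matrix (Fin n) (Fin n) (ZMod 3)) :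
    Function.Injective (PhiMap n x) := by
  rw [injective_iff_map_eq_zero]
  intro A hA
  apply Subtype.ext
  show A.1 = 0
  ext i j
  have h1 : ∀ m, (PhiMap n x A) m = Module.AEval'.of (Matrix.mulVecLin x)
      (Matrix.mulVecLin A.1 ((Module.AEval'.of (Matrix.mulVecLin x)).symm m)) := fun m => rfl
  have h2 : ∀ v : Fin n → ZMod 3, Matrix.mulVecLin A.1 v = 0 := by
    intro v
    have := congrArg (fun g => g (Module.AEval'.of (Matrix.mulVecLin x) v)) hA
    simpa [h1] using this
  have := congrFun (h2 (Pi.single j 1)) i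
  simpa [Matrix.mulVec_single_one] using this


set_option maxHeartbeats 1000000 in
/-- If `n ≥ 7` and `x ∈ GL_n(𝔽₃)` is unbreakable — i.e. there is no direct sum
decomposition `𝔽₃ⁿ = U ⊕ W` into nonzero `x`-invariant subspaces with
`dim U ≠ 2` and `dim W ≠ 2` — then `|C_{GL_n(3)}(x)| ≤ 3^{n+2} · 2⁴`. -/
theorem stmt_19 (n : ℕ) (hn : 7 ≤ n) (x : Matrix.GeneralLinearGroup (Fin n) (ZMod 3))
    (hunbr : ¬ ∃ U W : Submodule (ZMod 3) (Fin n → ZMod 3),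
      U ≠ ⊥ ∧ W ≠ ⊥ ∧ IsCompl U W ∧
      U.map (Matrix.mulVecLin (↑x : Matrix (Fin n) (Fin n) (ZMod 3))) = U ∧
      W.map (Matrix.mulVecLin (↑x : Matrix (Fin n) (Fin n) (ZMod 3))) = W ∧
      Module.finrank (ZMod 3) U ≠ 2 ∧ Module.finrank (ZMod 3) W ≠ 2) :
    Nat.card (Subgroup.centralizer {x} :
        Subgroup (Matrix.GeneralLinearGroup (Fin n) (ZMod 3))) ≤ 3 ^ (n + 2) * 2 ^ 4 := by
  classical
  set xm : Matrix (Fin n) (Fin n) (ZMod 3) := ↑x with hxm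
  have hfb : Function.Bijective (Matrix.mulVecLin xm) := by
    have h1 : (Matrix.mulVecLin (↑x⁻¹ : Matrix (Fin n) (Fin n) (ZMod 3))).comp
        (Matrix.mulVecLin xm) = LinearMap.id := by
      rw [← Matrix.mulVecLin_mul]
      have : (↑x⁻¹ : Matrix (Fin n) (Fin n) (ZMod 3)) * xm = 1 := by
        rw [hxm]
        exact_mod_cast x.inv_mul
      rw [this, Matrix.mulVecLin_one]
    have h2 : (Matrix.mulVecLin xm).comp
        (Matrix.mulVecLin (↑x⁻¹ : Matrix (Fin n) (Fin n) (ZMod 3))) = LinearMap.id := by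
      rw [← Matrix.mulVecLin_mul]
      have : xm * (↑x⁻¹ : Matrix (Fin n) (Fin n) (ZMod 3)) = 1 := by
        rw [hxm]
        exact_mod_cast x.mul_inv
      rw [this, Matrix.mulVecLin_one]
    exact ⟨Function.LeftInverse.injective (g := Matrix.mulVecLin (↑x⁻¹ : Matrix _ _ _))
        fun v => congrFun (congrArg (fun g => g.toFun) h1) v,
      Function.RightInverse.surjective (g := Matrix.mulVecLin (↑x⁻¹ : Matrix _ _ _))
        fun v => congrFun (congrArg (fun g => g.toFun) h2) v⟩
  have hunbr' : ∀ U W : Submodule (ZMod 3) (Fin n → ZMod 3), U ≠ ⊥ → W ≠ ⊥ → IsCompl U W →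
      U.map (Matrix.mulVecLin xm : (Fin n → ZMod 3) →ₗ[ZMod 3] (Fin n → ZMod 3)) = U →
      W.map (Matrix.mulVecLin xm) = W →
      Module.finrank (ZMod 3) U = 2 ∨ Module.finrank (ZMod 3) W = 2 := by
    intro U W h1 h2 h3 h4 h5
    by_contra hcon
    push_neg at hcon
    exact hunbr ⟨U, W, h1, h2, h3, h4, h5, hcon.1, hcon.2⟩
  have hmain := main_aux n hn (Matrix.mulVecLin xm) hfb hunbr'
  -- bound the commutant dimension
  haveI : FiniteDimensional (ZMod 3)
      (Module.AEval' (Matrix.mulVecLin xm) →ₗ[(ZMod 3)[X]] Module.AEval' (Matrix.mulVecLin xm)) :=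
    finiteDimensional_homR
  have hS : finrank (ZMod 3) (commS n xm) ≤ n + 4 :=
    le_trans (LinearMap.finrank_le_finrank_of_injective (PhiMap_injective n xm)) hmain
  -- counting
  have hcard1 : Nat.card (Subgroup.centralizer {x} :
      Subgroup (Matrix.GeneralLinearGroup (Fin n) (ZMod 3))) ≤ Nat.card (commS n xm) := by
    refine Nat.card_le_card_of_injective
      (fun y => (⟨(y.1 : Matrix (Fin n) (Fin n) (ZMod 3)), ?_⟩ : commS n xm)) ?_
    · have := Subgroup.mem_centralizer_iff.1 y.2 x (Set.mem_singleton x)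
      have hval := congrArg Units.val this
      simp only [Units.val_mul] at hval
      exact hval.symm
    · intro y₁ y₂ h
      apply Subtype.ext
      apply Units.ext
      exact congrArg Subtype.val h
  letI : Fintype (commS n xm) := Fintype.ofFinite _
  have hcard2 : Nat.card (commS n xm) = 3 ^ finrank (ZMod 3) (commS n xm) := by
    rw [Nat.card_eq_fintype_card, card_eq_pow_finrank (K := ZMod 3), ZMod.card]
  calc Nat.card (Subgroup.centralizer {x} :
      Subgroup (Matrix.GeneralLinearGroup (Fin n) (ZMod 3)))
      ≤ Nat.card (commS n xm) := hcard1
    _ = 3 ^ finrank (ZMod 3) (commS n xm) := hcard2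
    _ ≤ 3 ^ (n + 4) := Nat.pow_le_pow_right (by norm_num) hS
    _ = 3 ^ (n + 2) * 9 := by ring
    _ ≤ 3 ^ (n + 2) * 2 ^ 4 := by
        have : (9:ℕ) ≤ 2 ^ 4 := by norm_num
        exact Nat.mul_le_mul_left _ this
end
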